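/- arXiv:1101.4844 — 7 statements merged into one kernel-verified Lean document; each statement's English description precedes it below -/
import Mathlib

section
/- Let R and S be finite rings with homogeneous weights w_R and w_S of average values γ_R and γ_S respectively. Define w on R ⊕ S by w(r,s) = γ(1 − (1 − w_R(r)/γ_R)(1 − w_S(s)/γ_S)) for a real constant γ. Then w is a homogeneous weight on R ⊕ S with average value γ; equivalently, 1 − w_{R⊕S}(r,s)/γ_{R⊕S} = (1 − w_R(r)/γ_R)(1 − w_S(s)/γ_S). -/
/-- `w : R → ℝ` is a (left) homogeneous weight on the finite ring `R` with average
value `γ`: `w 0 = 0`, `w` depends only on the left principal ideal `Rx`, and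
`∑_{y ∈ Rx} w y = γ·|Rx|` for all nonzero `x`. -/
def IsHomWeight (R : Type*) [Ring R] [Fintype R] (w : R → ℝ) (γ : ℝ) : Prop :=
  w 0 = 0 ∧
  (∀ x y : R, Submodule.span R ({x} : Set R) = Submodule.span R {y} → w x = w y) ∧
  (∀ x : R, x ≠ 0 →
    ∑ᶠ y ∈ (Submodule.span R ({x} : Set R) : Set R), w y
      = γ * Nat.card (Submodule.span R ({x} : Set R)))

open Classical

lemma span_prod_set {R S : Type*} [Ring R] [Ring S] (x : R) (y : S) :
    (Submodule.span (R × S) ({(x, y)} : Set (R × S)) : Set (R × S))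
      = (Submodule.span R ({x} : Set R) : Set R) ×ˢ (Submodule.span S ({y} : Set S) : Set S) := by
  ext ⟨u, v⟩
  simp only [SetLike.mem_coe, Submodule.mem_span_singleton, Set.mem_prod, Prod.smul_def,
    Prod.ext_iff, Prod.exists, smul_eq_mul]
  constructor
  · rintro ⟨a, b, h1, h2⟩
    exact ⟨⟨a, h1⟩, ⟨b, h2⟩⟩
  · rintro ⟨⟨a, h1⟩, ⟨b, h2⟩⟩
    exact ⟨a, b, h1, h2⟩

lemma card_eq {R : Type*} [Ring R] [Fintype R] (x : R) :
    (Nat.card (Submodule.span R ({x} : Set R)) : ℝ)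
      = ((Submodule.span R ({x} : Set R) : Set R).toFinset.card : ℝ) := by
  rw [show (Submodule.span R ({x} : Set R) : Type _) = ↥(Submodule.span R ({x} : Set R) : Set R) from rfl,
    Nat.card_eq_card_toFinset]

lemma finsum_eq {R : Type*} [Ring R] [Fintype R] (w : R → ℝ) (s : Set R) :
    ∑ᶠ y ∈ s, w y = ∑ y ∈ s.toFinset, w y := by
  rw [← finsum_mem_coe_finset]
  simp

lemma sum_zero {R : Type*} [Ring R] [Fintype R] {w : R → ℝ} {γ : ℝ} (hγ : γ ≠ 0)
    (hw : IsHomWeight R w γ) (x : R) (hx : x ≠ 0) :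
    ∑ r ∈ (Submodule.span R ({x} : Set R) : Set R).toFinset, (1 - w r / γ) = 0 := by
  have h := hw.2.2 x hx
  rw [finsum_eq] at h
  rw [Finset.sum_sub_distrib]
  simp only [Finset.sum_const, nsmul_eq_mul, mul_one]
  rw [← Finset.sum_div, h, card_eq]
  field_simp
  simp

/-- If `w_R` and `w_S` are homogeneous weights on finite rings `R` and `S`
with (nonzero) average values `γ_R` and `γ_S`, then
`w(r,s) = γ(1 − (1 − w_R(r)/γ_R)(1 − w_S(s)/γ_S))` is a homogeneous weight on `R ⊕ S`
with average value `γ`; in particular `1 − w(r,s)/γ = (1 − w_R(r)/γ_R)(1 − w_S(s)/γ_S)`. -/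
theorem stmt3 (R S : Type*) [Ring R] [Ring S] [Fintype R] [Fintype S]
    (wR : R → ℝ) (wS : S → ℝ) (γR γS γ : ℝ) (hγR : γR ≠ 0) (hγS : γS ≠ 0) (hγ : γ ≠ 0)
    (hwR : IsHomWeight R wR γR) (hwS : IsHomWeight S wS γS) :
    IsHomWeight (R × S)
      (fun p => γ * (1 - (1 - wR p.1 / γR) * (1 - wS p.2 / γS))) γ ∧
    ∀ r : R, ∀ s : S,
      1 - (γ * (1 - (1 - wR r / γR) * (1 - wS s / γS))) / γ
        = (1 - wR r / γR) * (1 - wS s / γS) := by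
  constructor
  · refine ⟨?_, ?_, ?_⟩
    · simp [hwR.1, hwS.1]
    · rintro ⟨x1, y1⟩ ⟨x2, y2⟩ h
      have hset : (Submodule.span R ({x1} : Set R) : Set R) ×ˢ (Submodule.span S ({y1} : Set S) : Set S)
          = (Submodule.span R ({x2} : Set R) : Set R) ×ˢ (Submodule.span S ({y2} : Set S) : Set S) := by
        rw [← span_prod_set, ← span_prod_set, h]
      have hne1 : ((Submodule.span R ({x1} : Set R) : Set R) ×ˢ (Submodule.span S ({y1} : Set S) : Set S)).Nonempty :=
        ⟨(0, 0), ⟨Submodule.zero_mem _, Submodule.zero_mem _⟩⟩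
      rw [Set.prod_eq_prod_iff_of_nonempty hne1] at hset
      have e1 : wR x1 = wR x2 := hwR.2.1 _ _ (SetLike.coe_injective hset.1)
      have e2 : wS y1 = wS y2 := hwS.2.1 _ _ (SetLike.coe_injective hset.2)
      simp [e1, e2]
    · rintro ⟨x, y⟩ hxy
      rw [finsum_eq, show ((Submodule.span (R × S) ({(x, y)} : Set (R × S)) : Set (R × S))).toFinset
          = ((Submodule.span R ({x} : Set R) : Set R) ×ˢ (Submodule.span S ({y} : Set S) : Set S)).toFinset
          from by ext p; simp only [Set.mem_toFinset]; rw [span_prod_set], Set.toFinset_prod, Finset.sum_product]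
      have key : ∀ (r : R) (s : S),
          γ * (1 - (1 - wR r / γR) * (1 - wS s / γS))
            = γ - γ * ((1 - wR r / γR) * (1 - wS s / γS)) := by intro r s; ring
      simp only [key]
      have expand : ∑ r ∈ (Submodule.span R ({x} : Set R) : Set R).toFinset,
            ∑ s ∈ (Submodule.span S ({y} : Set S) : Set S).toFinset,
              (γ - γ * ((1 - wR r / γR) * (1 - wS s / γS)))
          = γ * ((Submodule.span R ({x} : Set R) : Set R).toFinset.card *
              (Submodule.span S ({y} : Set S) : Set S).toFinset.card)
            - γ * ((∑ r ∈ (Submodule.span R ({x} : Set R) : Set R).toFinset, (1 - wR r / γR)) *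
              (∑ s ∈ (Submodule.span S ({y} : Set S) : Set S).toFinset, (1 - wS s / γS))) := by
        rw [Finset.sum_mul_sum]
        simp only [Finset.sum_sub_distrib, Finset.mul_sum, Finset.sum_const, nsmul_eq_mul,
          mul_one]
        ring
      rw [expand]
      have hzero : (∑ r ∈ (Submodule.span R ({x} : Set R) : Set R).toFinset, (1 - wR r / γR)) *
          (∑ s ∈ (Submodule.span S ({y} : Set S) : Set S).toFinset, (1 - wS s / γS)) = 0 := by
        rcases Prod.mk.injEq x y 0 0 ▸ (fun h => hxy h) with _
        by_cases hx : x = 0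
        · have hy : y ≠ 0 := fun hy => hxy (by rw [hx, hy, Prod.mk.injEq]; exact ⟨rfl, rfl⟩)
          rw [sum_zero hγS hwS y hy, mul_zero]
        · rw [sum_zero hγR hwR x hx, zero_mul]
      rw [hzero, mul_zero, sub_zero]
      have hcard : (Nat.card (Submodule.span (R × S) ({(x, y)} : Set (R × S))) : ℝ)
          = ((Submodule.span R ({x} : Set R) : Set R).toFinset.card *
              (Submodule.span S ({y} : Set S) : Set S).toFinset.card : ℝ) := by
        rw [card_eq, span_prod_set]
        norm_num [Set.toFinset_prod]
      rw [hcard]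
  · intro r s
    field_simp
    ring
end

section
/- Let R be a finite Frobenius ring with generating character χ. Then the function w(x) = γ(1 − (1/|R^×|) ∑_{u ∈ R^×} χ(xu)) is real-valued and is a homogeneous weight on R with average value γ, i.e., w(0)=0, w(x)=w(y) whenever Rx=Ry, and ∑_{y ∈ Rx} w(y) = γ|Rx| for nonzero x. -/
/-- `χ` is a (left) generating character of the finite ring `R`: every additive
character of `R` has the form `x ↦ χ(r x)` for some `r ∈ R`. -/
def IsGeneratingChar (R : Type*) [Ring R] [Fintype R] (χ : AddChar R ℂ) : Prop :=
  ∀ φ : AddChar R ℂ, ∃ r : R, ∀ x : R, φ x = χ (r * x)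

section Aux

variable {R : Type*} [Ring R] [Fintype R] [DecidableEq R] (χ : AddChar R ℂ)

private lemma lemA (hχ : IsGeneratingChar R χ) {a : R} (ha : a ≠ 0) :
    ∃ r : R, χ (r * a) ≠ 1 := by
  obtain ⟨ψ, hψ⟩ := (AddChar.exists_apply_ne_zero (a := a)).2 ha
  obtain ⟨r, hr⟩ := hχ ψ
  exact ⟨r, by rw [← hr a]; exact hψ⟩

private lemma lemB (hχ : IsGeneratingChar R χ) {a : R} (h : ∀ s : R, χ (a * s) = 1) :
    a = 0 := by
  have hsurj : Function.Surjective (fun r : R => χ.mulShift r) := by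
    intro φ
    obtain ⟨r, hr⟩ := hχ φ
    exact ⟨r, by ext x; exact (hr x).symm⟩
  have hbij : Function.Bijective (fun r : R => χ.mulShift r) := by
    rw [Fintype.bijective_iff_surjective_and_card]
    exact ⟨hsurj, AddChar.card_eq.symm⟩
  have heq : χ.mulShift a = χ.mulShift 0 := by
    ext x
    simp [AddChar.mulShift_apply, h x]
  exact hbij.1 heq

/-- the right ideal `rR` as a finset -/
private def DD {R : Type*} [Ring R] [Fintype R] [DecidableEq R] (r : R) : Finset R :=
  Finset.univ.image (fun s => r * s)

private lemma mem_DD {r t : R} : t ∈ DD r ↔ ∃ s, r * s = t := by simp [DD]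

private lemma self_mem_DD (r : R) : r ∈ DD r := mem_DD.2 ⟨1, mul_one r⟩

private lemma DD_subset_iff {r r' : R} : DD r' ⊆ DD r ↔ r' ∈ DD r := by
  constructor
  · intro h; exact h (self_mem_DD r')
  · intro h t ht
    obtain ⟨s, hs⟩ := mem_DD.1 h
    obtain ⟨s', hs'⟩ := mem_DD.1 ht
    exact mem_DD.2 ⟨s * s', by rw [← mul_assoc, hs, hs']⟩

private lemma fiber_card {r t : R} (ht : t ∈ DD r) :
    (Finset.univ.filter fun s => r * s = t).card
      = (Finset.univ.filter fun s => r * s = 0).card := by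
  obtain ⟨s₀, hs₀⟩ := mem_DD.1 ht
  refine Finset.card_bij (fun s _ => s - s₀) ?_ ?_ ?_
  · intro a ha
    simp only [Finset.mem_filter, Finset.mem_univ, true_and] at ha ⊢
    rw [mul_sub, ha, hs₀, sub_self]
  · intro a _ b _ hab
    exact sub_left_inj.1 hab
  · intro b hb
    simp only [Finset.mem_filter, Finset.mem_univ, true_and] at hb
    refine ⟨b + s₀, ?_, add_sub_cancel_right b s₀⟩
    simp only [Finset.mem_filter, Finset.mem_univ, true_and]
    rw [mul_add, hb, hs₀, zero_add]

private lemma sum_DD (hχ : IsGeneratingChar R χ) (x r : R) :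
    ∑ t ∈ DD r, χ (x * t) = if x * r = 0 then ((DD r).card : ℂ) else 0 := by
  split_ifs with h
  · rw [Finset.sum_congr rfl (fun t ht => ?_), Finset.sum_const, nsmul_eq_mul, mul_one]
    obtain ⟨s, hs⟩ := mem_DD.1 ht
    rw [← hs, ← mul_assoc, h, zero_mul, AddChar.map_zero_eq_one]
  · have hne : χ.mulShift (x * r) ≠ 0 := by
      intro hc
      refine h (lemB χ hχ (fun s => ?_))
      have := DFunLike.congr_fun hc s
      simpa [AddChar.mulShift_apply] using this
    have h1 : ∑ s : R, χ ((x * r) * s) = 0 := by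
      have := AddChar.sum_eq_zero_iff_ne_zero.2 hne
      simpa [AddChar.mulShift_apply] using this
    have h2 : ∑ s : R, χ ((x * r) * s)
        = ((Finset.univ.filter fun s => r * s = 0).card : ℂ) * ∑ t ∈ DD r, χ (x * t) := by
      rw [← Finset.sum_fiberwise_of_maps_to (g := fun s : R => r * s)
        (fun s _ => mem_DD.2 ⟨s, rfl⟩) (fun s => χ ((x * r) * s))]
      rw [Finset.mul_sum]
      refine Finset.sum_congr rfl fun t ht => ?_
      rw [Finset.sum_congr rfl (fun s hs => ?_), Finset.sum_const, nsmul_eq_mul,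
        fiber_card ht]
      have hrs : r * s = t := (Finset.mem_filter.1 hs).2
      rw [mul_assoc, hrs]
    have hc0 : ((Finset.univ.filter fun s : R => r * s = 0).card : ℂ) ≠ 0 := by
      have : (0 : R) ∈ Finset.univ.filter fun s : R => r * s = 0 := by
        simp
      exact_mod_cast Nat.cast_ne_zero.2 (Finset.card_ne_zero_of_mem this)
    have := h2.symm.trans h1
    rcases mul_eq_zero.1 this with h' | h'
    · exact absurd h' hc0
    · exact h'

private lemma main_ind (hχ : IsGeneratingChar R χ) (x y : R)
    (hxy : ∀ s : R, x * s = 0 ↔ y * s = 0) :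
    ∀ n : ℕ, ∀ r : R, (DD r).card ≤ n →
      ∑ r' ∈ Finset.univ.filter (fun r' => DD r' = DD r), χ (x * r')
        = ∑ r' ∈ Finset.univ.filter (fun r' => DD r' = DD r), χ (y * r') := by
  intro n
  induction n with
  | zero =>
    intro r hr
    have : 0 < (DD r).card := Finset.card_pos.2 ⟨r, self_mem_DD r⟩
    omega
  | succ n ih =>
    intro r hr
    have hA : ∀ z : R, ∑ r' ∈ Finset.univ.filter (fun r' => DD r' ⊆ DD r), χ (z * r')
        = if z * r = 0 then ((DD r).card : ℂ) else 0 := by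
      intro z
      rw [← sum_DD χ hχ z r]
      refine Finset.sum_congr ?_ (fun _ _ => rfl)
      ext t
      simp [DD_subset_iff]
    have hsplit : ∀ z : R,
        ∑ r' ∈ Finset.univ.filter (fun r' => DD r' ⊆ DD r), χ (z * r')
          = (∑ r' ∈ Finset.univ.filter (fun r' => DD r' = DD r), χ (z * r'))
            + ∑ r' ∈ Finset.univ.filter (fun r' => DD r' ⊆ DD r ∧ DD r' ≠ DD r),
                χ (z * r') := by
      intro z
      have e1 : (Finset.univ.filter (fun r' : R => DD r' ⊆ DD r)).filter
          (fun r' => DD r' = DD r) = Finset.univ.filter (fun r' => DD r' = DD r) := by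
        ext t
        simp only [Finset.mem_filter, Finset.mem_univ, true_and]
        exact ⟨fun h => h.2, fun h => ⟨h ▸ Finset.Subset.refl _, h⟩⟩
      have e2 : (Finset.univ.filter (fun r' : R => DD r' ⊆ DD r)).filter
          (fun r' => ¬ DD r' = DD r)
            = Finset.univ.filter (fun r' => DD r' ⊆ DD r ∧ DD r' ≠ DD r) := by
        ext t
        simp only [Finset.mem_filter, Finset.mem_univ, true_and, Ne]
      rw [← Finset.sum_filter_add_sum_filter_not
        (Finset.univ.filter (fun r' => DD r' ⊆ DD r)) (fun r' => DD r' = DD r), e1, e2]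
    have hlt : ∑ r' ∈ Finset.univ.filter (fun r' => DD r' ⊆ DD r ∧ DD r' ≠ DD r), χ (x * r')
        = ∑ r' ∈ Finset.univ.filter (fun r' => DD r' ⊆ DD r ∧ DD r' ≠ DD r), χ (y * r') := by
      set S := Finset.univ.filter (fun r' : R => DD r' ⊆ DD r ∧ DD r' ≠ DD r) with hS
      have hmaps : ∀ a ∈ S, DD a ∈ S.image DD := fun a ha => Finset.mem_image_of_mem DD ha
      rw [← Finset.sum_fiberwise_of_maps_to hmaps (fun r' => χ (x * r')),
        ← Finset.sum_fiberwise_of_maps_to hmaps (fun r' => χ (y * r'))]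
      refine Finset.sum_congr rfl fun J hJ => ?_
      obtain ⟨r₀, hr₀S, hr₀⟩ := Finset.mem_image.1 hJ
      have hr₀S' := Finset.mem_filter.1 hr₀S
      have hfilter : S.filter (fun r' => DD r' = J)
          = Finset.univ.filter (fun r' => DD r' = DD r₀) := by
        ext t
        simp only [hS, Finset.mem_filter, Finset.mem_univ, true_and, ← hr₀]
        constructor
        · tauto
        · intro h
          exact ⟨⟨h ▸ hr₀S'.2.1, h ▸ hr₀S'.2.2⟩, h⟩
      have hss : DD r₀ ⊂ DD r := ⟨hr₀S'.2.1, fun h => hr₀S'.2.2 (le_antisymm hr₀S'.2.1 h)⟩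
      have hcard : (DD r₀).card ≤ n := by
        have := Finset.card_lt_card hss
        omega
      rw [hfilter]
      exact ih r₀ hcard
    have h1 := hsplit x
    have h2 := hsplit y
    rw [hA x, hA y] at *
    have hif : (if x * r = 0 then ((DD r).card : ℂ) else 0)
        = (if y * r = 0 then ((DD r).card : ℂ) else 0) := by
      by_cases h : x * r = 0
      · rw [if_pos h, if_pos ((hxy r).1 h)]
      · rw [if_neg h, if_neg (fun hy' => h ((hxy r).2 hy'))]
    have := h1.symm.trans (hif.trans h2)
    rw [hlt] at this
    exact add_right_cancel this

private lemma DD_eq_univ_iff {r : R} : DD r = Finset.univ ↔ IsUnit r := by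
  constructor
  · intro h
    have h1 : ∃ c, r * c = 1 := mem_DD.1 (h ▸ Finset.mem_univ (1 : R))
    obtain ⟨c, hc⟩ := h1
    have hsurj : Function.Surjective (fun s : R => r * s) := by
      intro t
      exact mem_DD.1 (h ▸ Finset.mem_univ t)
    have hinj : Function.Injective (fun s : R => r * s) :=
      Finite.injective_iff_surjective.2 hsurj
    have hcr : c * r = 1 := by
      have : r * (c * r) = r * 1 := by rw [← mul_assoc, hc, one_mul, mul_one]
      exact hinj this
    exact ⟨⟨r, c, hc, hcr⟩, rfl⟩
  · rintro ⟨u, rfl⟩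
    ext t
    simp only [Finset.mem_univ, iff_true]
    exact mem_DD.2 ⟨(↑u⁻¹ : R) * t, by rw [← mul_assoc, u.mul_inv, one_mul]⟩

private lemma units_sum (x : R) :
    ∑ u : Rˣ, χ (x * u) = ∑ r' ∈ Finset.univ.filter (fun r' => DD r' = Finset.univ),
      χ (x * r') := by
  refine Finset.sum_bij (fun (u : Rˣ) _ => (u : R)) ?_ ?_ ?_ ?_
  · intro u _
    simp only [Finset.mem_filter, Finset.mem_univ, true_and]
    exact DD_eq_univ_iff.2 u.isUnit
  · intro a _ b _ h
    exact Units.ext h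
  · intro b hb
    obtain ⟨u, hu⟩ := DD_eq_univ_iff.1 (Finset.mem_filter.1 hb).2
    exact ⟨u, Finset.mem_univ u, hu⟩
  · intro u _
    rfl

private lemma sum_units_im (x : R) : (∑ u : Rˣ, χ (x * u)).im = 0 := by
  rw [← Complex.conj_eq_iff_im]
  rw [map_sum]
  refine Fintype.sum_equiv (Equiv.neg Rˣ) _ _ (fun u => ?_)
  simp only [Equiv.neg_apply, Units.val_neg, mul_neg]
  rw [AddChar.map_neg_eq_conj]

private lemma expr_eq (γ : ℝ) (x : R) :
    (γ : ℂ) * (1 - (1 / (Fintype.card Rˣ : ℂ)) * ∑ u : Rˣ, χ (x * u))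
      = (((γ * (1 - (1 / (Fintype.card Rˣ : ℝ)) * (∑ u : Rˣ, χ (x * u)).re)) : ℝ) : ℂ) := by
  obtain ⟨t, ht⟩ : ∃ t : ℝ, (∑ u : Rˣ, χ (x * u)) = (t : ℂ) :=
    ⟨(∑ u : Rˣ, χ (x * u)).re, Complex.ext rfl (by simp [sum_units_im χ x])⟩
  rw [ht]
  simp only [Complex.ofReal_re]
  push_cast
  ring

end Aux

/-- On a finite Frobenius ring `R` with generating character `χ`, the
function `x ↦ γ(1 − (1/|R^×|) ∑_{u ∈ R^×} χ(xu))` is real-valued, and its real part is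
a homogeneous weight on `R` with average value `γ`. -/
theorem stmt4 (R : Type*) [Ring R] [Fintype R] [DecidableEq R] (χ : AddChar R ℂ)
    (hχ : IsGeneratingChar R χ) (γ : ℝ) :
    (∀ x : R,
      ((γ : ℂ) * (1 - (1 / (Fintype.card Rˣ : ℂ)) * ∑ u : Rˣ, χ (x * u))).im = 0) ∧
    IsHomWeight R
      (fun x => ((γ : ℂ) * (1 - (1 / (Fintype.card Rˣ : ℂ)) * ∑ u : Rˣ, χ (x * u))).re)
      γ := by
  classical
  have hcC : (Fintype.card Rˣ : ℂ) ≠ 0 := Nat.cast_ne_zero.2 Fintype.card_ne_zero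
  constructor
  · intro x
    rw [expr_eq χ γ x, Complex.ofReal_im]
  refine ⟨?_, ?_, ?_⟩
  · show ((γ : ℂ) * (1 - (1 / (Fintype.card Rˣ : ℂ)) * ∑ u : Rˣ, χ ((0:R) * u))).re = 0
    have h0 : ∑ u : Rˣ, χ ((0:R) * u) = (Fintype.card Rˣ : ℂ) := by
      simp
    rw [h0, one_div, inv_mul_cancel₀ hcC, sub_self, mul_zero, Complex.zero_re]
  · intro x y hspan
    have hy : y ∈ Submodule.span R ({x} : Set R) := by
      rw [hspan]; exact Submodule.mem_span_singleton_self y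
    have hx : x ∈ Submodule.span R ({y} : Set R) := by
      rw [← hspan]; exact Submodule.mem_span_singleton_self x
    obtain ⟨a, ha⟩ := Submodule.mem_span_singleton.1 hy
    obtain ⟨b, hb⟩ := Submodule.mem_span_singleton.1 hx
    rw [smul_eq_mul] at ha hb
    have hiff : ∀ s : R, x * s = 0 ↔ y * s = 0 := by
      intro s
      constructor
      · intro h; rw [← ha, mul_assoc, h, mul_zero]
      · intro h; rw [← hb, mul_assoc, h, mul_zero]
    have hDD1 : DD (1 : R) = Finset.univ := DD_eq_univ_iff.2 isUnit_one
    have hmain := main_ind χ hχ x y hiff (DD (1:R)).card 1 le_rfl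
    have hsum : ∑ u : Rˣ, χ (x * u) = ∑ u : Rˣ, χ (y * u) := by
      rw [hDD1] at hmain
      rw [units_sum χ x, units_sum χ y]
      exact hmain
    show ((γ : ℂ) * (1 - (1 / (Fintype.card Rˣ : ℂ)) * ∑ u : Rˣ, χ (x * u))).re
      = ((γ : ℂ) * (1 - (1 / (Fintype.card Rˣ : ℂ)) * ∑ u : Rˣ, χ (y * u))).re
    rw [hsum]
  · intro x hx
    set M := Submodule.span R ({x} : Set R) with hM
    haveI : Fintype M := Fintype.ofFinite _
    have hfin : (M : Set R).Finite := Set.toFinite _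
    rw [finsum_mem_eq_finite_toFinset_sum _ hfin]
    have hC : ∀ u : Rˣ, ∑ i ∈ hfin.toFinset, χ (i * u) = 0 := by
      intro u
      have hxu : x * (u : R) ≠ 0 := by
        intro h
        refine hx ?_
        have : x * (u : R) * (↑u⁻¹ : R) = 0 := by rw [h, zero_mul]
        rwa [mul_assoc, u.mul_inv, mul_one] at this
      obtain ⟨r, hr⟩ := lemA χ hχ hxu
      let ψ : AddChar M ℂ := χ.compAddMonoidHom
        ((AddMonoidHom.mulRight (u : R)).comp M.subtype.toAddMonoidHom)
      have hrx : r * x ∈ M := by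
        have := Submodule.smul_mem M r (Submodule.mem_span_singleton_self x)
        rwa [smul_eq_mul] at this
      have hψ : ψ ≠ 0 := by
        refine AddChar.ne_zero_iff.2 ⟨⟨r * x, hrx⟩, ?_⟩
        show χ ((r * x) * (u : R)) ≠ 1
        rwa [mul_assoc]
      have h0 : ∑ m : M, ψ m = 0 := AddChar.sum_eq_zero_iff_ne_zero.2 hψ
      calc ∑ i ∈ hfin.toFinset, χ (i * u)
          = ∑ m : {z // z ∈ M}, χ ((m : R) * u) :=
            Finset.sum_subtype hfin.toFinset
              (fun z => by rw [Set.Finite.mem_toFinset]; exact SetLike.mem_coe)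
              (fun z => χ (z * u))
        _ = 0 := h0
    have hzero : ∑ i ∈ hfin.toFinset, ∑ u : Rˣ, χ (i * u) = 0 := by
      rw [Finset.sum_comm]
      exact Finset.sum_eq_zero fun u _ => hC u
    have hsum : ∑ i ∈ hfin.toFinset,
        ((γ : ℂ) * (1 - (1 / (Fintype.card Rˣ : ℂ)) * ∑ u : Rˣ, χ (i * u)))
          = (γ : ℂ) * hfin.toFinset.card := by
      calc ∑ i ∈ hfin.toFinset,
          ((γ : ℂ) * (1 - (1 / (Fintype.card Rˣ : ℂ)) * ∑ u : Rˣ, χ (i * u)))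
          = ∑ i ∈ hfin.toFinset,
              ((γ : ℂ) - (γ : ℂ) * (1 / (Fintype.card Rˣ : ℂ)) * ∑ u : Rˣ, χ (i * u)) := by
            exact Finset.sum_congr rfl fun i _ => by ring
        _ = (hfin.toFinset.card : ℂ) * (γ : ℂ)
              - (γ : ℂ) * (1 / (Fintype.card Rˣ : ℂ))
                * ∑ i ∈ hfin.toFinset, ∑ u : Rˣ, χ (i * u) := by
            rw [Finset.sum_sub_distrib, Finset.sum_const, nsmul_eq_mul, ← Finset.mul_sum]
        _ = (γ : ℂ) * hfin.toFinset.card := by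
            rw [hzero, mul_zero, sub_zero, mul_comm]
    have hre : ∑ i ∈ hfin.toFinset,
        ((γ : ℂ) * (1 - (1 / (Fintype.card Rˣ : ℂ)) * ∑ u : Rˣ, χ (i * u))).re
          = γ * hfin.toFinset.card := by
      rw [← Complex.re_sum, hsum]
      simp
    have hcard : (hfin.toFinset.card : ℝ) = (Nat.card M : ℝ) := by
      have h1 : Nat.card M = Nat.card (↑M : Set R) :=
        Nat.card_congr (Equiv.subtypeEquivRight fun z => SetLike.mem_coe.symm)
      rw [h1, Nat.card_coe_set_eq, Set.ncard_eq_toFinset_card _ hfin]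
    rw [hre, hcard]
end

section
/- Let R be a finite local Frobenius ring with residue field GF(q). Then the function w : R → ℝ with w(0) = 0, w(x) = q for nonzero x in soc(R), and w(x) = q − 1 otherwise, is a homogeneous weight on R with average value γ = q − 1. -/
/-- A finite ring is Frobenius iff it admits a (left) generating character. -/
def IsFrobeniusRing (R : Type*) [Ring R] [Fintype R] : Prop :=
  ∃ χ : AddChar R ℂ, ∀ φ : AddChar R ℂ, ∃ r : R, ∀ x : R, φ x = χ (r * x)

/-- The socle of `R` as a left module over itself: the sum of all minimal
(i.e. atomic) left submodules. -/
def socle (R : Type*) [Ring R] : Submodule R R :=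
  sSup {I : Submodule R R | IsAtom I}

section Aux

variable {R : Type*} [Ring R] [Fintype R]

private lemma one_sub_left_inv (m : Submodule R R) (hm : IsCoatom m)
    (hmax : ∀ I : Submodule R R, I ≠ ⊤ → I ≤ m) {r : R} (hr : r ∈ m) :
    ∃ s : R, s * (1 - r) = 1 := by
  have h : Submodule.span R ({1 - r} : Set R) = ⊤ := by
    by_contra h
    have h1 : (1 - r) ∈ m := hmax _ h (Submodule.mem_span_singleton_self _)
    have h2 : (1 : R) ∈ m := by simpa using add_mem h1 hr
    exact hm.1 (Submodule.eq_top_iff'.2 fun x => by simpa using m.smul_mem x h2)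
  have h1 : (1 : R) ∈ Submodule.span R ({1 - r} : Set R) := h ▸ Submodule.mem_top
  obtain ⟨s, hs⟩ := Submodule.mem_span_singleton.1 h1
  exact ⟨s, by simpa using hs⟩

private lemma atom_eq_span {I : Submodule R R} (hI : IsAtom I) {a : R} (ha : a ∈ I)
    (ha0 : a ≠ 0) : Submodule.span R ({a} : Set R) = I := by
  have hle : Submodule.span R ({a} : Set R) ≤ I :=
    (Submodule.span_singleton_le_iff_mem _ _).2 ha
  rcases hI.le_iff.1 hle with h | h
  · exact absurd (Submodule.span_singleton_eq_bot.1 h) ha0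
  · exact h

private lemma atom_mul_eq_zero (m : Submodule R R) (hm : IsCoatom m)
    (hmax : ∀ I : Submodule R R, I ≠ ⊤ → I ≤ m) {I : Submodule R R} (hI : IsAtom I)
    {a : R} (ha : a ∈ I) {r : R} (hr : r ∈ m) : r * a = 0 := by
  by_contra hra
  have ha0 : a ≠ 0 := fun h => hra (by simp [h])
  have hmem : r * a ∈ I := by simpa using I.smul_mem r ha
  have h1 : Submodule.span R ({r * a} : Set R) = I := atom_eq_span hI hmem hra
  have ha' : a ∈ Submodule.span R ({r * a} : Set R) := h1.symm ▸ ha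
  obtain ⟨t, ht⟩ := Submodule.mem_span_singleton.1 ha'
  have ht' : t * (r * a) = a := by simpa using ht
  have hz : (1 - t * r) * a = 0 := by
    rw [sub_mul, one_mul, mul_assoc, ht', sub_self]
  have htr : t * r ∈ m := by simpa using m.smul_mem t hr
  obtain ⟨s, hs⟩ := one_sub_left_inv m hm hmax htr
  have : a = 0 := by
    calc a = (s * (1 - t * r)) * a := by rw [hs, one_mul]
    _ = s * ((1 - t * r) * a) := by rw [mul_assoc]
    _ = 0 := by rw [hz, mul_zero]
  exact ha0 this

private lemma atom_card (m : Submodule R R) (hm : IsCoatom m)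
    (hmax : ∀ I : Submodule R R, I ≠ ⊤ → I ≤ m) {I : Submodule R R} (hI : IsAtom I) :
    Nat.card I = Nat.card (R ⧸ m) := by
  obtain ⟨a, ha, ha0⟩ := Submodule.ne_bot_iff I |>.1 hI.1
  set f := LinearMap.toSpanSingleton R R a with hf
  have hker : LinearMap.ker f = m := by
    apply le_antisymm
    · apply hmax
      intro h
      have h1 : f 1 = 0 := by rw [← LinearMap.mem_ker, h]; trivial
      simp [hf, LinearMap.toSpanSingleton_apply] at h1
      exact ha0 h1
    · intro r hr
      simp only [LinearMap.mem_ker, hf, LinearMap.toSpanSingleton_apply, smul_eq_mul]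
      exact atom_mul_eq_zero m hm hmax hI ha hr
  have hrange : LinearMap.range f = I := by
    rw [← LinearMap.span_singleton_eq_range]
    exact atom_eq_span hI ha ha0
  calc Nat.card I = Nat.card (LinearMap.range f) := by rw [hrange]
    _ = Nat.card (R ⧸ LinearMap.ker f) := (Nat.card_congr f.quotKerEquivRange.toEquiv).symm
    _ = Nat.card (R ⧸ m) := by rw [hker]

/-- Lift a character of `R` trivial on `m` to a character of `R ⧸ m`. -/
private noncomputable def liftChar (m : Submodule R R) (ψ : AddChar R ℂ)
    (h : ∀ x ∈ m, ψ x = 1) : AddChar (R ⧸ m) ℂ where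
  toFun x := Quotient.liftOn x ψ (fun a b hab => by
    have hab' : a - b ∈ m := (Submodule.quotientRel_def m).1 hab
    calc ψ a = ψ ((a - b) + b) := by rw [sub_add_cancel]
      _ = ψ (a - b) * ψ b := ψ.map_add_eq_mul _ _
      _ = ψ b := by rw [h _ hab', one_mul])
  map_zero_eq_one' := ψ.map_zero_eq_one
  map_add_eq_mul' := by
    intro a b
    obtain ⟨x, rfl⟩ := Submodule.Quotient.mk_surjective m a
    obtain ⟨y, rfl⟩ := Submodule.Quotient.mk_surjective m b
    rw [← Submodule.Quotient.mk_add]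
    exact ψ.map_add_eq_mul x y

private lemma liftChar_mk (m : Submodule R R) (ψ : AddChar R ℂ) (h : ∀ x ∈ m, ψ x = 1)
    (x : R) : liftChar m ψ h (Submodule.Quotient.mk x) = ψ x := rfl

private lemma atom_unique (hF : IsFrobeniusRing R) (m : Submodule R R) (hm : IsCoatom m)
    (hmax : ∀ I : Submodule R R, I ≠ ⊤ → I ≤ m) {I J : Submodule R R}
    (hI : IsAtom I) (hJ : IsAtom J) : I = J := by
  obtain ⟨χ, hχ⟩ := hF
  have sep : ∀ a : R, a ≠ 0 → ∃ r : R, χ (r * a) ≠ 1 := by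
    intro a ha
    obtain ⟨ψ, hψ⟩ := AddChar.exists_apply_ne_zero.2 ha
    obtain ⟨r, hr⟩ := hχ ψ
    exact ⟨r, by rw [← hr a]; exact hψ⟩
  by_contra hne
  have hdisj : I ⊓ J = ⊥ := by
    rcases hI.le_iff.1 inf_le_left with h | h
    · exact h
    · have hIJ : I ≤ J := h ▸ inf_le_right
      rcases hJ.le_iff.1 hIJ with h' | h'
      · exact absurd h' hI.1
      · exact absurd h' hne
  -- the characters r ↦ χ (r * (i + j)) descend to R ⧸ m
  have hkill : ∀ c : R, c ∈ I ⊔ J → ∀ x ∈ m, x * c = 0 := by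
    intro c hc x hx
    obtain ⟨i, hi, j, hj, rfl⟩ := Submodule.mem_sup.1 hc
    rw [mul_add, atom_mul_eq_zero m hm hmax hI hi hx, atom_mul_eq_zero m hm hmax hJ hj hx,
      add_zero]
  have hkill' : ∀ c : R, c ∈ I ⊔ J →
      ∀ x ∈ m, (χ.compAddMonoidHom (AddMonoidHom.mulRight c)) x = 1 := by
    intro c hc x hx
    have : x * c = 0 := hkill c hc x hx
    simp [AddChar.compAddMonoidHom_apply, this]
  let Φ : I × J → AddChar (R ⧸ m) ℂ := fun p =>
    liftChar m (χ.compAddMonoidHom (AddMonoidHom.mulRight (p.1.1 + p.2.1)))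
      (hkill' _ (Submodule.add_mem_sup p.1.2 p.2.2))
  have hΦval : ∀ (p : I × J) (r : R), Φ p (Submodule.Quotient.mk r) = χ (r * (p.1.1 + p.2.1)) := by
    intro p r
    rw [liftChar_mk]
    simp [AddChar.compAddMonoidHom_apply]
  have hΦinj : Function.Injective Φ := by
    intro p p' hpp
    have heq : ∀ r : R, χ (r * (p.1.1 + p.2.1)) = χ (r * (p'.1.1 + p'.2.1)) := by
      intro r
      rw [← hΦval p r, ← hΦval p' r, hpp]
    have hz : (p.1.1 + p.2.1) - (p'.1.1 + p'.2.1) = 0 := by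
      by_contra hc
      obtain ⟨r, hr⟩ := sep _ hc
      apply hr
      have hne0 : χ (r * (p'.1.1 + p'.2.1)) ≠ 0 := (χ.val_isUnit _).ne_zero
      calc χ (r * ((p.1.1 + p.2.1) - (p'.1.1 + p'.2.1)))
          = χ (r * (p.1.1 + p.2.1) + -(r * (p'.1.1 + p'.2.1))) := by
            rw [mul_sub, sub_eq_add_neg]
        _ = χ (r * (p.1.1 + p.2.1)) * (χ (r * (p'.1.1 + p'.2.1)))⁻¹ := by
            rw [χ.map_add_eq_mul, χ.map_neg_eq_inv]
        _ = 1 := by rw [heq r, mul_inv_cancel₀ hne0]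
    have hII : p.1.1 - p'.1.1 ∈ I := sub_mem p.1.2 p'.1.2
    have hJJ : p.1.1 - p'.1.1 ∈ J := by
      have : p.1.1 - p'.1.1 = p'.2.1 - p.2.1 := by
        have h0 : p.1.1 + p.2.1 = p'.1.1 + p'.2.1 := sub_eq_zero.1 hz
        rw [sub_eq_sub_iff_add_eq_add, h0, add_comm]
      rw [this]
      exact sub_mem p'.2.2 p.2.2
    have h1 : p.1.1 - p'.1.1 = 0 := by
      have : p.1.1 - p'.1.1 ∈ I ⊓ J := ⟨hII, hJJ⟩
      rwa [hdisj, Submodule.mem_bot] at this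
    have h2 : p.2.1 - p'.2.1 = 0 := by
      have h0 := sub_eq_zero.1 hz
      have := sub_eq_zero.1 h1
      apply sub_eq_zero.2
      have : p.1.1 = p'.1.1 := this
      rw [this] at h0
      exact add_left_cancel h0
    have e1 : p.1 = p'.1 := Subtype.ext (sub_eq_zero.1 h1)
    have e2 : p.2 = p'.2 := Subtype.ext (sub_eq_zero.1 h2)
    exact Prod.ext e1 e2
  -- cardinality contradiction
  haveI : Fintype (R ⧸ m) := Fintype.ofFinite _
  have hcard : Nat.card (I × J) ≤ Nat.card (AddChar (R ⧸ m) ℂ) :=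
    Nat.card_le_card_of_injective Φ hΦinj
  have hq : Nat.card (AddChar (R ⧸ m) ℂ) = Nat.card (R ⧸ m) := by
    rw [Nat.card_eq_fintype_card, Nat.card_eq_fintype_card, AddChar.card_eq]
  have hI' : Nat.card I = Nat.card (R ⧸ m) := atom_card m hm hmax hI
  have hJ' : Nat.card J = Nat.card (R ⧸ m) := atom_card m hm hmax hJ
  have hq2 : 2 ≤ Nat.card (R ⧸ m) := by
    haveI : Nontrivial (R ⧸ m) := Submodule.Quotient.nontrivial_iff.mpr hm.1
    haveI : Fintype (R ⧸ m) := Fintype.ofFinite _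
    rw [Nat.card_eq_fintype_card]
    exact Fintype.one_lt_card_iff_nontrivial.2 ‹_›
  rw [Nat.card_prod, hI', hJ', hq] at hcard
  set n := Nat.card (R ⧸ m)
  have : 2 * n ≤ n * n := Nat.mul_le_mul_right n hq2
  omega

private lemma finite_submodule : Finite (Submodule R R) :=
  Finite.of_injective (fun I : Submodule R R => (I : Set R)) SetLike.coe_injective

private lemma socle_isAtom (hF : IsFrobeniusRing R) (m : Submodule R R) (hm : IsCoatom m)
    (hmax : ∀ I : Submodule R R, I ≠ ⊤ → I ≤ m) : IsAtom (socle R) := by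
  haveI := (finite_submodule : Finite (Submodule R R))
  have hnontriv : (⊤ : Submodule R R) ≠ ⊥ := by
    intro h
    exact hm.1 (le_antisymm le_top (h ▸ bot_le))
  obtain ⟨I₀, hI₀⟩ : ∃ I : Submodule R R, IsAtom I := by
    rcases (IsAtomic.eq_bot_or_exists_atom_le (⊤ : Submodule R R)) with h | ⟨a, ha, _⟩
    · exact absurd h hnontriv
    · exact ⟨a, ha⟩
  have hset : {I : Submodule R R | IsAtom I} = {I₀} := by
    ext J
    simp only [Set.mem_setOf_eq, Set.mem_singleton_iff]
    exact ⟨fun hJ => atom_unique hF m hm hmax hJ hI₀, fun h => h ▸ hI₀⟩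
  rw [socle, hset, sSup_singleton]
  exact hI₀

private lemma socle_le (hF : IsFrobeniusRing R) (m : Submodule R R) (hm : IsCoatom m)
    (hmax : ∀ I : Submodule R R, I ≠ ⊤ → I ≤ m) {N : Submodule R R} (hN : N ≠ ⊥) :
    socle R ≤ N := by
  haveI := (finite_submodule : Finite (Submodule R R))
  rcases (IsAtomic.eq_bot_or_exists_atom_le N) with h | ⟨J, hJ, hJN⟩
  · exact absurd h hN
  · have : socle R = J := atom_unique hF m hm hmax (socle_isAtom hF m hm hmax) hJ
    rw [this]
    exact hJN

end Aux

open scoped Classical in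
/-- Let `R` be a finite local Frobenius ring, with unique maximal left ideal
`m` and residue field `R/m` of cardinality `q`. Then the function with value `0` at `0`,
`q` on the nonzero elements of `soc(R)`, and `q − 1` elsewhere is a homogeneous weight on
`R` with average value `γ = q − 1`. -/
theorem stmt5 (R : Type*) [Ring R] [Fintype R] (hF : IsFrobeniusRing R)
    (m : Submodule R R) (hm : IsCoatom m) (hmax : ∀ I : Submodule R R, I ≠ ⊤ → I ≤ m)
    (q : ℕ) (hq : q = Nat.card (R ⧸ m)) :
    IsHomWeight R
      (fun x => if x = 0 then 0 else if x ∈ socle R then (q : ℝ) else (q : ℝ) - 1)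
      ((q : ℝ) - 1) := by
  classical
  have hsoc : IsAtom (socle R) := socle_isAtom hF m hm hmax
  have hcards : Nat.card (socle R) = q := by rw [hq]; exact atom_card m hm hmax hsoc
  have hq2 : 2 ≤ q := by
    haveI : Nontrivial (R ⧸ m) := Submodule.Quotient.nontrivial_iff.mpr hm.1
    rw [hq]
    haveI : Fintype (R ⧸ m) := Fintype.ofFinite _
    rw [Nat.card_eq_fintype_card]
    exact Fintype.one_lt_card_iff_nontrivial.2 ‹_›
  set w : R → ℝ := fun x => if x = 0 then 0 else if x ∈ socle R then (q : ℝ) else (q : ℝ) - 1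
    with hw
  -- the finset of elements of the socle
  set socF : Finset R := Set.toFinset (socle R : Set R) with hsocF
  have hmem_socF : ∀ y, y ∈ socF ↔ y ∈ socle R := by
    intro y; simp [hsocF, Set.mem_toFinset]
  have h0soc : (0 : R) ∈ socF := (hmem_socF 0).2 (socle R).zero_mem
  have hsocF_card : socF.card = q := by
    have e : Nat.card (socle R) = Nat.card ((socle R : Set R)) :=
      Nat.card_congr (Equiv.refl ((socle R : Set R) : Type _))
    rw [← hcards, e, Nat.card_coe_set_eq, Set.ncard_eq_toFinset_card']
  have hsum_soc : ∑ y ∈ socF, w y = (q : ℝ) * ((q : ℝ) - 1) := by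
    rw [← Finset.add_sum_erase socF w h0soc]
    have hw0 : w 0 = 0 := by simp [hw]
    have hconst : ∀ y ∈ socF.erase 0, w y = (q : ℝ) := by
      intro y hy
      have hy0 : y ≠ 0 := (Finset.mem_erase.1 hy).1
      have hys : y ∈ socle R := (hmem_socF y).1 (Finset.mem_erase.1 hy).2
      simp [hw, hy0, hys]
    rw [hw0, zero_add, Finset.sum_congr rfl hconst, Finset.sum_const,
      Finset.card_erase_of_mem h0soc, hsocF_card, nsmul_eq_mul]
    have : ((q - 1 : ℕ) : ℝ) = (q : ℝ) - 1 := by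
      have : 1 ≤ q := by omega
      push_cast [this]
      ring
    rw [this]
    ring
  refine ⟨by simp [hw], ?_, ?_⟩
  · -- span-equality implies equal weight
    intro x y h
    by_cases hx : x = 0
    · have hy : y = 0 := by
        have hb : Submodule.span R ({y} : Set R) = ⊥ := by
          rw [← h, hx]
          exact Submodule.span_singleton_eq_bot.2 rfl
        exact Submodule.span_singleton_eq_bot.1 hb
      simp [hw, hx, hy]
    · have hy : y ≠ 0 := by
        intro hy0
        apply hx
        have hb : Submodule.span R ({x} : Set R) = ⊥ := by
          rw [h, hy0]
          exact Submodule.span_singleton_eq_bot.2 rfl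
        exact Submodule.span_singleton_eq_bot.1 hb
      have hmemx : x ∈ Submodule.span R ({y} : Set R) := h ▸ Submodule.mem_span_singleton_self x
      have hmemy : y ∈ Submodule.span R ({x} : Set R) :=
        h.symm ▸ Submodule.mem_span_singleton_self y
      have hiff : (x ∈ socle R) ↔ (y ∈ socle R) := by
        constructor
        · intro hs
          exact (Submodule.span_le.2 (Set.singleton_subset_iff.2 hs)) hmemy
        · intro hs
          exact (Submodule.span_le.2 (Set.singleton_subset_iff.2 hs)) hmemx
      by_cases hxs : x ∈ socle R
      · simp [hw, hx, hy, hxs, hiff.1 hxs]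
      · have hys : y ∉ socle R := fun hh => hxs (hiff.2 hh)
        simp [hw, hx, hy, hxs, hys]
  · -- the sum condition
    intro x hx
    set S := Submodule.span R ({x} : Set R) with hS
    have hSbot : S ≠ ⊥ := fun h => hx (Submodule.span_singleton_eq_bot.1 h)
    set t : Finset R := Set.toFinset (S : Set R) with ht
    have hmem_t : ∀ y, y ∈ t ↔ y ∈ S := by intro y; simp [ht, Set.mem_toFinset]
    have hsum_t : ∑ᶠ y ∈ (S : Set R), w y = ∑ y ∈ t, w y := by
      rw [ht, ← finsum_mem_coe_finset, Set.coe_toFinset]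
    have hcard_t : (Nat.card S : ℝ) = (t.card : ℝ) := by
      have e : Nat.card S = Nat.card ((S : Set R)) :=
        Nat.card_congr (Equiv.refl ((S : Set R) : Type _))
      rw [ht, e, Nat.card_coe_set_eq, Set.ncard_eq_toFinset_card']
    by_cases hxs : x ∈ socle R
    · -- S = socle R
      have hSsoc : S = socle R := atom_eq_span hsoc hxs hx
      have : t = socF := by
        ext y
        rw [hmem_t, hmem_socF, hSsoc]
      rw [hsum_t, this, hsum_soc, hcard_t, this, hsocF_card]
      ring
    · -- socle R < S
      have hsocle_le : socle R ≤ S := socle_le hF m hm hmax hSbot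
      have hsub : socF ⊆ t := by
        intro y hy
        exact (hmem_t y).2 (hsocle_le ((hmem_socF y).1 hy))
      have hsplit : ∑ y ∈ t \ socF, w y + ∑ y ∈ socF, w y = ∑ y ∈ t, w y :=
        Finset.sum_sdiff hsub
      have hconst : ∀ y ∈ t \ socF, w y = (q : ℝ) - 1 := by
        intro y hy
        have hns : y ∉ socle R := fun h => (Finset.mem_sdiff.1 hy).2 ((hmem_socF y).2 h)
        have hy0 : y ≠ 0 := fun h => hns (h ▸ (socle R).zero_mem)
        simp [hw, hy0, hns]
      have hcard_sdiff : (t \ socF).card = t.card - q := by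
        rw [Finset.card_sdiff_of_subset hsub, hsocF_card]
      have hqle : q ≤ t.card := by
        rw [← hsocF_card]
        exact Finset.card_le_card hsub
      rw [hsum_t, ← hsplit, Finset.sum_congr rfl hconst, Finset.sum_const, hsum_soc,
        hcard_sdiff, nsmul_eq_mul, hcard_t]
      have : ((t.card - q : ℕ) : ℝ) = (t.card : ℝ) - (q : ℝ) := by
        push_cast [hqle]
        ring
      rw [this]
      ring
end

section
/- Let R be a finite Frobenius ring with generating character χ and homogeneous weight w of average value γ, and let C ≤ R^n be a left linear code. Let D be the |C| × |C| distance matrix with D_{a,b} = w(a − b), and let χ_B be the |C| × (|R^×| n) complex matrix with entries (χ_B)_{c,(i,λ)} = χ(c_i λ). Then χ_B χ_B* = |R^×|(nJ − (1/γ)D), where J is the all-ones matrix and χ_B* the conjugate transpose. -/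
/-- Let `R` be a finite Frobenius ring with generating character `χ` and
homogeneous weight `w` of average value `γ` (given by the character formula), and let
`C ≤ R^n` be a left linear code.  With `χ_B` the `|C| × (|R^×|n)` matrix with entries
`χ(c_i λ)` and `D` the distance matrix `D_{a,b} = w(a−b)`, we have
`χ_B χ_B* = |R^×| (n J − (1/γ) D)`. -/
theorem stmt9 (R : Type*) [Ring R] [Fintype R] [DecidableEq R]
    (χ : AddChar R ℂ) (hχ : IsGeneratingChar R χ)
    (γ : ℝ) (hγ : γ ≠ 0) (w : R → ℝ)
    (hw : ∀ x : R, (w x : ℂ)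
      = (γ : ℂ) * (1 - (1 / (Fintype.card Rˣ : ℂ)) * ∑ u : Rˣ, χ (x * u)))
    (n : ℕ) (C : Submodule R (Fin n → R)) :
    (Matrix.of fun (c : ↥C) (p : Fin n × Rˣ) => χ ((c : Fin n → R) p.1 * (p.2 : R))) *
      (Matrix.of fun (c : ↥C) (p : Fin n × Rˣ) =>
        χ ((c : Fin n → R) p.1 * (p.2 : R))).conjTranspose
    = (Fintype.card Rˣ : ℂ) •
        ((n : ℂ) • (Matrix.of fun (_ _ : ↥C) => (1 : ℂ)) -
         (1 / (γ : ℂ)) • Matrix.of fun (a b : ↥C) =>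
            ((∑ i : Fin n, w (((a : Fin n → R) - (b : Fin n → R)) i) : ℝ) : ℂ)) := by
  have hcard : (Fintype.card Rˣ : ℂ) ≠ 0 := by
    exact_mod_cast Nat.cast_ne_zero.mpr (Fintype.card_ne_zero (α := Rˣ))
  ext a b
  simp only [Matrix.mul_apply, Matrix.conjTranspose_apply, Matrix.of_apply, Matrix.smul_apply,
    Matrix.sub_apply, smul_eq_mul]
  have key : ∀ p : Fin n × Rˣ,
      χ ((a : Fin n → R) p.1 * (p.2 : R)) * star (χ ((b : Fin n → R) p.1 * (p.2 : R)))
      = χ ((((a : Fin n → R) - (b : Fin n → R)) p.1) * (p.2 : R)) := by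
    intro p
    rw [← starRingEnd_apply, ← AddChar.map_neg_eq_conj, ← AddChar.map_add_eq_mul]
    congr 1
    simp only [sub_mul, sub_eq_add_neg, add_mul, neg_mul, Pi.add_apply, Pi.neg_apply]
  rw [Finset.sum_congr rfl fun p _ => key p]
  push_cast
  rw [Finset.sum_congr rfl (fun i (_ : i ∈ Finset.univ) => hw _)]
  rw [← Finset.univ_product_univ, Finset.sum_product]
  simp only [mul_one_sub, Finset.sum_sub_distrib, Finset.sum_const, Finset.card_univ,
    Fintype.card_fin, nsmul_eq_mul, ← Finset.mul_sum]
  generalize (∑ x : Fin n, ∑ x_1 : Rˣ, χ (((a : Fin n → R) x - (b : Fin n → R) x) * (x_1 : R))) = S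
  have hγ' : (γ : ℂ) ≠ 0 := by exact_mod_cast hγ
  field_simp
  ring
end

section
/- Let C be a proper, regular, projective two-weight code over a finite Frobenius ring R with nonzero homogeneous weights w₁ < w₂ (average value γ), and suppose the Cayley graph Γ(C) on the weight-w₁ words is strongly regular with valency k and restricted eigenvalues ρ₁ < ρ₂. Then: (i) (w₂−w₁)k = w₂(|C|−1) − γn|C|; (ii) (w₂−w₁)ρ₁ = −w₂; (iii) (w₂−w₁)ρ₂ = −w₂ + γ|C|/|R^×|. -/
set_option linter.unusedSectionVars false
set_option maxHeartbeats 1000000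

open scoped Classical
open Finset

namespace S12

variable {R : Type*} [Ring R] [Fintype R]

/-- right multiplication shift of an additive character -/
noncomputable def rsh (χ : AddChar R ℂ) (r : R) : AddChar R ℂ :=
  χ.compAddMonoidHom (AddMonoidHom.mulRight r)

@[simp] lemma rsh_apply (χ : AddChar R ℂ) (r x : R) : rsh χ r x = χ (x * r) := rfl

variable {χ : AddChar R ℂ} (hgen : ∀ φ : AddChar R ℂ, ∃ r : R, ∀ x : R, φ x = χ (r * x))

lemma chi_ne_zero (x : R) : χ x ≠ 0 := by
  intro h
  have h1 : χ x * χ (-x) = 1 := by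
    rw [← AddChar.map_add_eq_mul, add_neg_cancel, AddChar.map_zero_eq_one]
  rw [h, zero_mul] at h1
  exact zero_ne_one h1

include hgen in
lemma mulShift_surj : Function.Surjective (fun r : R => χ.mulShift r) := by
  intro φ
  obtain ⟨r, hr⟩ := hgen φ
  exact ⟨r, by ext x; simp [hr x]⟩

include hgen in
lemma mulShift_bij : Function.Bijective (fun r : R => χ.mulShift r) := by
  have hcard : Fintype.card R = Fintype.card (AddChar R ℂ) := (AddChar.card_eq).symm
  rw [Fintype.bijective_iff_surjective_and_card]
  exact ⟨mulShift_surj hgen, hcard⟩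

include hgen in
lemma left_ann {z : R} (h : ∀ x : R, χ (z * x) = 1) : z = 0 := by
  have : χ.mulShift z = χ.mulShift 0 := by
    ext x; simp [h x]
  exact (mulShift_bij hgen).injective this

include hgen in
lemma right_ann {z : R} (h : ∀ x : R, χ (x * z) = 1) : z = 0 := by
  by_contra hz
  obtain ⟨φ, hφ⟩ := AddChar.exists_apply_ne_zero.mpr hz
  obtain ⟨r, hr⟩ := hgen φ
  exact hφ ((hr z).trans (h r))

include hgen in
lemma rsh_inj : Function.Injective (fun r : R => rsh χ r) := by
  intro a b hab
  have h : ∀ x : R, χ (x * (a - b)) = 1 := by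
    intro x
    have h1 : χ (x * a) = χ (x * b) := by
      have := congrArg (fun ψ : AddChar R ℂ => ψ x) hab
      simpa using this
    have h2 : χ (x * (a - b)) * χ (x * b) = χ (x * a) := by
      rw [← AddChar.map_add_eq_mul]; congr 1; noncomm_ring
    rw [h1] at h2
    exact mul_right_cancel₀ (chi_ne_zero _) (by rw [one_mul]; exact h2)
  have := right_ann hgen h
  exact sub_eq_zero.mp this

include hgen in
lemma rsh_bij : Function.Bijective (fun r : R => rsh χ r) := by
  have hcard : Fintype.card R = Fintype.card (AddChar R ℂ) := (AddChar.card_eq).symm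
  rw [Fintype.bijective_iff_injective_and_card]
  exact ⟨rsh_inj hgen, hcard⟩


noncomputable def nu (hgen : ∀ φ : AddChar R ℂ, ∃ r : R, ∀ x : R, φ x = χ (r * x)) (a : R) : R :=
  ((rsh_bij hgen).surjective (χ.mulShift a)).choose

include hgen in
lemma nu_spec (a x : R) : χ (x * nu hgen a) = χ (a * x) := by
  have h := ((rsh_bij hgen).surjective (χ.mulShift a)).choose_spec
  have := congrArg (fun ψ : AddChar R ℂ => ψ x) h
  simp at this; exact this

include hgen in
lemma nu_unique {a s : R} (h : ∀ x : R, χ (x * s) = χ (a * x)) : s = nu hgen a := by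
  apply (rsh_inj hgen)
  ext x
  simp [h x, nu_spec hgen a x]

include hgen in
lemma nu_one : nu hgen 1 = 1 := by
  symm; apply nu_unique hgen; intro x; rw [mul_one, one_mul]

include hgen in
lemma nu_mul (a b : R) : nu hgen (a * b) = nu hgen a * nu hgen b := by
  symm; apply nu_unique hgen
  intro x
  rw [← mul_assoc, nu_spec hgen b (x * nu hgen a), ← mul_assoc, nu_spec hgen a (b*x), ← mul_assoc]

include hgen in
lemma nu_inj : Function.Injective (nu hgen) := by
  intro a b hab
  have h : ∀ x : R, χ (( a - b) * x) = 1 := by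
    intro x
    have h1 : χ (a * x) = χ (b * x) := by rw [← nu_spec hgen a x, ← nu_spec hgen b x, hab]
    have h2 : χ ((a - b) * x) * χ (b * x) = χ (a * x) := by
      rw [← AddChar.map_add_eq_mul]; congr 1; noncomm_ring
    rw [h1] at h2
    exact mul_right_cancel₀ (chi_ne_zero _) (by rw [one_mul]; exact h2)
  exact sub_eq_zero.mp (left_ann hgen (by intro x; exact h x))

/-- `nu` as a bijection on units -/
noncomputable def nuU (hgen : ∀ φ : AddChar R ℂ, ∃ r : R, ∀ x : R, φ x = χ (r * x)) (u : Rˣ) : Rˣ :=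
  ⟨nu hgen u.val, nu hgen (u⁻¹).val,
    by rw [← nu_mul hgen, Units.mul_inv, nu_one hgen],
    by rw [← nu_mul hgen, Units.inv_mul, nu_one hgen]⟩

include hgen in
lemma nuU_bij : Function.Bijective (nuU hgen) := by
  rw [Fintype.bijective_iff_injective_and_card]
  refine ⟨fun a b hab => ?_, rfl⟩
  have : nu hgen a.val = nu hgen b.val := congrArg Units.val hab
  exact Units.ext (nu_inj hgen this)

include hgen in
lemma claimA (y : R) : ∑ u : Rˣ, χ (u.val * y) = ∑ u : Rˣ, χ (y * u.val) := by
  have h1 : ∀ u : Rˣ, χ (u.val * y) = χ (y * (nuU hgen u).val) := by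
    intro u; rw [← nu_spec hgen u.val y]; rfl
  rw [Finset.sum_congr rfl (fun u _ => h1 u)]
  exact Fintype.sum_bijective (nuU hgen) (nuU_bij hgen) _ _ (fun u => rfl)


omit [Fintype R] in
lemma isUnit_of_right_inv {r t : R} [Fintype R] (h : r * t = 1) : IsUnit r := by
  have hinj : Function.Injective (fun x : R => t * x) := by
    intro a b hab
    have : r * (t * a) = r * (t * b) := by simp only at hab; rw [hab]
    simpa [← mul_assoc, h] using this
  obtain ⟨s, hs⟩ := (Finite.injective_iff_surjective.mp hinj) 1
  simp only at hs
  have hrs : r = s := by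
    calc r = (r * t) * s := by rw [mul_assoc, hs, mul_one]
    _ = s := by rw [h, one_mul]
  exact ⟨⟨r, t, h, by rw [hrs] at h ⊢; exact hs⟩, rfl⟩

/-- the principal right ideal rR as a Finset -/
noncomputable def cR (r : R) : Finset R := univ.image (fun t => r * t)

lemma mem_cR {r s : R} : s ∈ cR r ↔ ∃ t, s = r * t := by
  simp [cR, eq_comm]

lemma self_mem_cR (r : R) : r ∈ cR r := mem_cR.mpr ⟨1, by rw [mul_one]⟩

lemma cR_subset_iff {r s : R} : cR s ⊆ cR r ↔ s ∈ cR r := by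
  constructor
  · intro h; exact h (self_mem_cR s)
  · intro h z hz
    obtain ⟨t, rfl⟩ := mem_cR.mp h
    obtain ⟨t', rfl⟩ := mem_cR.mp hz
    exact mem_cR.mpr ⟨t * t', by rw [mul_assoc]⟩

lemma cR_one : cR (1 : R) = univ := by
  ext s; simp [mem_cR]

lemma cR_eq_one_iff {s : R} : cR s = cR 1 ↔ IsUnit s := by
  rw [cR_one]
  constructor
  · intro h
    have : (1 : R) ∈ cR s := by rw [h]; exact mem_univ _
    obtain ⟨t, ht⟩ := mem_cR.mp this
    exact isUnit_of_right_inv ht.symm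
  · intro hs
    apply Finset.eq_univ_of_forall
    intro z
    obtain ⟨u, rfl⟩ := hs
    exact mem_cR.mpr ⟨(u⁻¹ : Rˣ) * z, by rw [← mul_assoc]; simp⟩

/-- dichotomy for character sums over principal right ideals -/
lemma sum_cR (χ : AddChar R ℂ) (r x : R) :
    ∑ s ∈ cR r, χ (s * x)
      = if (∀ t : R, χ (r * t * x) = 1) then ((cR r).card : ℂ) else 0 := by
  split_ifs with hP
  · rw [Finset.sum_congr rfl (fun s hs => ?_), Finset.sum_const, nsmul_eq_mul, mul_one]
    obtain ⟨t, rfl⟩ := mem_cR.mp hs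
    exact hP t
  · push_neg at hP
    obtain ⟨t₀, ht₀⟩ := hP
    set s₀ := r * t₀ with hs₀
    have key : χ (s₀ * x) * ∑ s ∈ cR r, χ (s * x) = ∑ s ∈ cR r, χ (s * x) := by
      rw [Finset.mul_sum]
      have : ∀ s ∈ cR r, χ (s₀ * x) * χ (s * x) = χ ((s₀ + s) * x) := by
        intro s _
        rw [← AddChar.map_add_eq_mul]; congr 1; noncomm_ring
      rw [Finset.sum_congr rfl this]
      refine Finset.sum_bij' (fun s _ => s₀ + s) (fun s _ => s - s₀) ?_ ?_ ?_ ?_ ?_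
      · intro a ha
        obtain ⟨t, rfl⟩ := mem_cR.mp ha
        exact mem_cR.mpr ⟨t₀ + t, by rw [mul_add]⟩
      · intro a ha
        obtain ⟨t, rfl⟩ := mem_cR.mp ha
        exact mem_cR.mpr ⟨t - t₀, by rw [mul_sub]⟩
      · intro a _; simp
      · intro a _; simp
      · intro a _; rfl
    have h2 : (χ (s₀ * x) - 1) * ∑ s ∈ cR r, χ (s * x) = 0 := by
      rw [sub_mul, one_mul, key, sub_self]
    rcases mul_eq_zero.mp h2 with h | h
    · exact absurd (by linear_combination h) ht₀
    · exact h

lemma span_cond_mono {x y : R}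
    (hxy : Submodule.span R ({x} : Set R) = Submodule.span R ({y} : Set R)) (r : R)
    (h : ∀ t : R, χ (r * t * x) = 1) : ∀ t : R, χ (r * t * y) = 1 := by
  have hy : y ∈ Submodule.span R ({x} : Set R) := by
    rw [hxy]; exact Submodule.mem_span_singleton_self y
  obtain ⟨a, ha⟩ := Submodule.mem_span_singleton.mp hy
  intro t
  have := h (t * a)
  rw [← ha, smul_eq_mul]
  rw [show r * t * (a * x) = r * (t * a) * x by noncomm_ring]
  exact this

/-- class sum function -/
noncomputable def hcl (χ : AddChar R ℂ) (r x : R) : ℂ :=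
  ∑ s : R, if cR s = cR r then χ (s * x) else 0

lemma hcl_span (χ : AddChar R ℂ) : ∀ N : ℕ, ∀ r x y : R, (cR r).card ≤ N →
    Submodule.span R ({x} : Set R) = Submodule.span R ({y} : Set R) →
    hcl χ r x = hcl χ r y := by
  intro N
  induction N with
  | zero =>
    intro r x y hcard _
    exact absurd (Finset.card_pos.mpr ⟨r, self_mem_cR r⟩) (by omega)
  | succ N ih =>
    intro r x y hcard hxy
    -- decompose
    have decomp : ∀ z : R, hcl χ r z
        = (∑ s ∈ cR r, χ (s * z)) - ∑ s : R, if cR s ⊂ cR r then χ (s * z) else 0 := by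
      intro z
      have h1 : ∑ s ∈ cR r, χ (s * z) = ∑ s : R, if s ∈ cR r then χ (s * z) else 0 := by
        rw [Finset.sum_ite_mem, Finset.univ_inter]
      rw [h1, hcl, ← Finset.sum_sub_distrib]
      apply Finset.sum_congr rfl
      intro s _
      by_cases hmem : s ∈ cR r
      · have hsub : cR s ⊆ cR r := cR_subset_iff.mpr hmem
        rcases eq_or_ne (cR s) (cR r) with heq | hne
        · rw [if_pos hmem, if_pos heq, if_neg (by simp [heq, ssubset_irrefl]), sub_zero]
        · rw [if_pos hmem, if_neg hne, if_pos (ssubset_of_subset_of_ne hsub hne)]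
          ring
      · have hnsub : ¬ cR s ⊆ cR r := fun hc => hmem (cR_subset_iff.mp hc)
        rw [if_neg hmem, if_neg (fun hc : cR s = cR r => hnsub (le_of_eq hc)),
          if_neg (fun hc => hnsub hc.subset), sub_zero]
    rw [decomp x, decomp y]
    congr 1
    · -- principal ideal sum invariance
      rw [sum_cR, sum_cR]
      have hiff : (∀ t : R, χ (r * t * x) = 1) ↔ (∀ t : R, χ (r * t * y) = 1) :=
        ⟨span_cond_mono hxy r, span_cond_mono hxy.symm r⟩
      simp only [hiff]
    · -- strictly smaller classes, via IH
      have hBx : ∀ z : R, (∑ s : R, if cR s ⊂ cR r then χ (s * z) else 0)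
          = ∑ I ∈ (univ.image cR).filter (· ⊂ cR r),
              ∑ s ∈ univ.filter (fun s => cR s = I), χ (s * z) := by
        intro z
        rw [← Finset.sum_filter]
        rw [← Finset.sum_fiberwise_of_maps_to
          (g := cR) (t := (univ.image cR).filter (· ⊂ cR r))
          (fun s hs => by
            simp only [Finset.mem_filter, Finset.mem_image, Finset.mem_univ, true_and] at hs ⊢
            exact ⟨⟨s, rfl⟩, hs⟩)]
        apply Finset.sum_congr rfl
        intro I hI
        apply Finset.sum_congr _ (fun _ _ => rfl)
        ext s
        simp only [Finset.mem_filter, Finset.mem_univ, true_and] at hI ⊢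
        constructor
        · rintro ⟨_, h2⟩; exact h2
        · intro h; exact ⟨h ▸ hI.2, h⟩
      rw [hBx x, hBx y]
      apply Finset.sum_congr rfl
      intro I hI
      simp only [Finset.mem_filter, Finset.mem_image, Finset.mem_univ, true_and] at hI
      obtain ⟨⟨s₀, hs₀⟩, hss⟩ := hI
      have hcard' : (cR s₀).card ≤ N := by
        have h1 : (cR s₀).card < (cR r).card := by
          rw [hs₀]; exact Finset.card_lt_card hss
        omega
      have := ih s₀ x y hcard' hxy
      rw [hcl] at this
      simp only [← hs₀]
      rw [show (∑ s ∈ univ.filter (fun s => cR s = cR s₀), χ (s * x))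
            = ∑ s : R, if cR s = cR s₀ then χ (s * x) else 0 by rw [Finset.sum_filter],
          show (∑ s ∈ univ.filter (fun s => cR s = cR s₀), χ (s * y))
            = ∑ s : R, if cR s = cR s₀ then χ (s * y) else 0 by rw [Finset.sum_filter]]
      exact this

include hgen in
lemma t_span {x y : R}
    (hxy : Submodule.span R ({x} : Set R) = Submodule.span R ({y} : Set R)) :
    ∑ u : Rˣ, χ (x * u.val) = ∑ u : Rˣ, χ (y * u.val) := by
  have key : ∀ z : R, ∑ u : Rˣ, χ (z * u.val) = hcl χ 1 z := by
    intro z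
    rw [← claimA hgen z]
    rw [hcl, ← Finset.sum_filter]
    apply Finset.sum_bij (fun (u : Rˣ) _ => (u.val : R))
    · intro u _
      simp only [Finset.mem_filter, Finset.mem_univ, true_and]
      exact cR_eq_one_iff.mpr u.isUnit
    · intro a _ b _ hab; exact Units.ext hab
    · intro s hs
      simp only [Finset.mem_filter, Finset.mem_univ, true_and] at hs
      obtain ⟨u, rfl⟩ := cR_eq_one_iff.mp hs
      exact ⟨u, Finset.mem_univ _, rfl⟩
    · intro u _; rfl
  rw [key x, key y]
  exact hcl_span χ (cR (1:R)).card 1 x y le_rfl hxy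


/-- the principal left ideal Rx as a Finset -/
noncomputable def cL (x : R) : Finset R := univ.image (fun r => r * x)

lemma mem_cL {x s : R} : s ∈ cL x ↔ ∃ r, s = r * x := by
  simp [cL, eq_comm]

lemma self_mem_cL (x : R) : x ∈ cL x := mem_cL.mpr ⟨1, by rw [one_mul]⟩

lemma cL_one : cL (1 : R) = univ :=
  Finset.eq_univ_of_forall (fun s => mem_cL.mpr ⟨s, by rw [mul_one]⟩)

lemma cL_subset_iff {x s : R} : cL s ⊆ cL x ↔ s ∈ cL x := by
  constructor
  · intro h; exact h (self_mem_cL s)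
  · intro h z hz
    obtain ⟨r, rfl⟩ := mem_cL.mp h
    obtain ⟨r', rfl⟩ := mem_cL.mp hz
    exact mem_cL.mpr ⟨r' * r, by rw [mul_assoc]⟩

lemma span_coe_cL (x : R) : (Submodule.span R ({x} : Set R) : Set R) = ↑(cL x) := by
  ext a
  rw [SetLike.mem_coe, Submodule.mem_span_singleton]
  simp only [Finset.coe_image, Set.mem_image, smul_eq_mul]
  constructor
  · rintro ⟨r, rfl⟩; exact Finset.mem_coe.mpr (mem_cL.mpr ⟨r, rfl⟩)
  · intro h; obtain ⟨r, rfl⟩ := mem_cL.mp (Finset.mem_coe.mp h); exact ⟨r, rfl⟩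

lemma span_eq_iff_cL_eq {x y : R} :
    Submodule.span R ({x} : Set R) = Submodule.span R ({y} : Set R) ↔ cL x = cL y := by
  constructor
  · intro h
    have := congrArg (fun S : Submodule R R => (S : Set R)) h
    simp only [span_coe_cL] at this
    exact_mod_cast Finset.coe_injective this
  · intro h
    have hx : x ∈ cL y := by rw [← h]; exact self_mem_cL x
    have hy : y ∈ cL x := by rw [h]; exact self_mem_cL y
    obtain ⟨r, hr⟩ := mem_cL.mp hx
    obtain ⟨r', hr'⟩ := mem_cL.mp hy
    apply le_antisymm <;>
      rw [Submodule.span_le, Set.singleton_subset_iff, SetLike.mem_coe,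
        Submodule.mem_span_singleton]
    · exact ⟨r, by rw [smul_eq_mul, ← hr]⟩
    · exact ⟨r', by rw [smul_eq_mul, ← hr']⟩

lemma card_span_eq (x : R) :
    Nat.card (Submodule.span R ({x} : Set R)) = (cL x).card := by
  have h1 : Nat.card (Submodule.span R ({x} : Set R))
      = Nat.card ((Submodule.span R ({x} : Set R) : Set R)) := rfl
  rw [h1, Nat.card_coe_set_eq, span_coe_cL, Set.ncard_coe_finset]

/-- dichotomy for character sums over principal left ideals -/
lemma sum_cL (χ : AddChar R ℂ) (x z : R) :
    ∑ s ∈ cL x, χ (s * z)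
      = if (∀ r : R, χ (r * x * z) = 1) then ((cL x).card : ℂ) else 0 := by
  split_ifs with hP
  · rw [Finset.sum_congr rfl (fun s hs => ?_), Finset.sum_const, nsmul_eq_mul, mul_one]
    obtain ⟨r, rfl⟩ := mem_cL.mp hs
    exact hP r
  · push_neg at hP
    obtain ⟨r₀, hr₀⟩ := hP
    have key : χ (r₀ * x * z) * ∑ s ∈ cL x, χ (s * z) = ∑ s ∈ cL x, χ (s * z) := by
      rw [Finset.mul_sum]
      have : ∀ s ∈ cL x, χ (r₀ * x * z) * χ (s * z) = χ ((r₀ * x + s) * z) := by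
        intro s _
        rw [← AddChar.map_add_eq_mul]; congr 1; noncomm_ring
      rw [Finset.sum_congr rfl this]
      refine Finset.sum_bij' (fun s _ => r₀ * x + s) (fun s _ => s - r₀ * x) ?_ ?_ ?_ ?_ ?_
      · intro a ha
        obtain ⟨r, rfl⟩ := mem_cL.mp ha
        exact mem_cL.mpr ⟨r₀ + r, by rw [add_mul]⟩
      · intro a ha
        obtain ⟨r, rfl⟩ := mem_cL.mp ha
        exact mem_cL.mpr ⟨r - r₀, by rw [sub_mul]⟩
      · intro a _; simp
      · intro a _; simp
      · intro a _; rfl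
    have h2 : (χ (r₀ * x * z) - 1) * ∑ s ∈ cL x, χ (s * z) = 0 := by
      rw [sub_mul, one_mul, key, sub_self]
    rcases mul_eq_zero.mp h2 with h | h
    · exact absurd (by linear_combination h) hr₀
    · exact h

/-- right-unit character sum -/
noncomputable def tt (χ : AddChar R ℂ) (x : R) : ℂ := ∑ u : Rˣ, χ (x * u.val)

lemma tt_zero (χ : AddChar R ℂ) : tt χ (0 : R) = (Fintype.card Rˣ : ℂ) := by
  simp [tt, AddChar.map_zero_eq_one]

include hgen in
lemma sum_tt_cL {x : R} (hx : x ≠ 0) : ∑ y ∈ cL x, tt χ y = 0 := by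
  simp only [tt]
  rw [Finset.sum_comm]
  apply Finset.sum_eq_zero
  intro u _
  have := sum_cL χ x u.val
  rw [this]
  rw [if_neg]
  intro hP
  apply hx
  have hxu : (x * u.val : R) = 0 := right_ann hgen (fun r => by
    have := hP r; rwa [mul_assoc] at this)
  calc x = x * u.val * (u⁻¹).val := by rw [mul_assoc]; simp
  _ = 0 := by rw [hxu, zero_mul]

/-- uniqueness of functions with homogeneity properties -/
lemma hom_unique (f g : R → ℂ) (hf0 : f 0 = 0) (hg0 : g 0 = 0)
    (hfc : ∀ x y : R, Submodule.span R ({x} : Set R) = Submodule.span R ({y} : Set R) → f x = f y)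
    (hgc : ∀ x y : R, Submodule.span R ({x} : Set R) = Submodule.span R ({y} : Set R) → g x = g y)
    (hsum : ∀ x : R, x ≠ 0 → ∑ y ∈ cL x, f y = ∑ y ∈ cL x, g y) :
    ∀ x : R, f x = g x := by
  suffices H : ∀ N : ℕ, ∀ x : R, (cL x).card ≤ N → f x = g x by
    intro x; exact H (cL x).card x le_rfl
  intro N
  induction N with
  | zero =>
    intro x hcard
    exact absurd (Finset.card_pos.mpr ⟨x, self_mem_cL x⟩) (by omega)
  | succ N ih =>
    intro x hcard
    rcases eq_or_ne x 0 with rfl | hx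
    · rw [hf0, hg0]
    have hzero : ∑ y ∈ cL x, (f y - g y) = 0 := by
      rw [Finset.sum_sub_distrib, hsum x hx, sub_self]
    rw [← Finset.sum_filter_add_sum_filter_not (cL x) (fun y => cL y = cL x)] at hzero
    have h2 : ∑ y ∈ (cL x).filter (fun y => ¬ cL y = cL x), (f y - g y) = 0 := by
      apply Finset.sum_eq_zero
      intro y hy
      simp only [Finset.mem_filter] at hy
      have hsub : cL y ⊆ cL x := cL_subset_iff.mpr hy.1
      have hlt : (cL y).card < (cL x).card :=
        Finset.card_lt_card (ssubset_of_subset_of_ne hsub hy.2)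
      rw [ih y (by omega), sub_self]
    rw [h2, add_zero] at hzero
    have h3 : ∀ y ∈ (cL x).filter (fun y => cL y = cL x), f y - g y = f x - g x := by
      intro y hy
      simp only [Finset.mem_filter] at hy
      have hspan := span_eq_iff_cL_eq.mpr hy.2
      rw [hfc y x hspan, hgc y x hspan]
    rw [Finset.sum_congr rfl h3, Finset.sum_const, nsmul_eq_mul] at hzero
    have hne : (((cL x).filter (fun y => cL y = cL x)).card : ℂ) ≠ 0 := by
      rw [Nat.cast_ne_zero]
      apply Finset.card_ne_zero_of_mem (a := x)
      simp [Finset.mem_filter, self_mem_cL x]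
    have := (mul_eq_zero.mp hzero).resolve_left hne
    exact sub_eq_zero.mp this


lemma cardU_ne_zero : ((Fintype.card Rˣ : ℂ)) ≠ 0 := by
  rw [Nat.cast_ne_zero]
  exact Fintype.card_ne_zero

include hgen in
lemma honold {w : R → ℝ} {γ : ℝ} (hw0 : w 0 = 0)
    (hwc : ∀ x y : R, Submodule.span R ({x} : Set R) = Submodule.span R ({y} : Set R) →
      w x = w y)
    (hws : ∀ x : R, x ≠ 0 → ∑ y ∈ cL x, (w y : ℂ) = (γ : ℂ) * ((cL x).card : ℂ)) :
    ∀ x : R, (w x : ℂ) = (γ : ℂ) * (1 - tt χ x / (Fintype.card Rˣ : ℂ)) := by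
  apply hom_unique (f := fun x => (w x : ℂ))
    (g := fun x => (γ : ℂ) * (1 - tt χ x / (Fintype.card Rˣ : ℂ)))
  · simp [hw0]
  · rw [tt_zero, div_self cardU_ne_zero]; ring
  · intro x y hxy
    exact_mod_cast congrArg Complex.ofReal (hwc x y hxy)
  · intro x y hxy
    have : tt χ x = tt χ y := t_span hgen hxy
    rw [this]
  · intro x hx
    rw [hws x hx]
    rw [Finset.sum_congr rfl (fun y _ => mul_one_sub ((γ:ℂ)) (tt χ y / (Fintype.card Rˣ : ℂ)))]
    rw [Finset.sum_sub_distrib, Finset.sum_const, nsmul_eq_mul, mul_comm]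
    have : ∑ y ∈ cL x, (γ:ℂ) * (tt χ y / (Fintype.card Rˣ : ℂ))
        = (γ:ℂ) / (Fintype.card Rˣ : ℂ) * ∑ y ∈ cL x, tt χ y := by
      rw [Finset.mul_sum]
      apply Finset.sum_congr rfl
      intro y _
      ring
    rw [this, sum_tt_cL hgen hx, mul_zero, sub_zero]


/-- sum over a group of a composition with a surjective hom -/
lemma sum_comp_surj {G H M : Type*} [AddCommGroup G] [Fintype G] [AddCommGroup H] [Fintype H]
    [AddCommMonoid M] (φ : G →+ H) (hs : Function.Surjective φ) (f : H → M) :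
    ∑ g : G, f (φ g) = (univ.filter fun g : G => φ g = 0).card • ∑ h : H, f h := by
  rw [Finset.sum_comp f φ]
  have himg : Finset.univ.image (φ : G → H) = Finset.univ := by
    apply Finset.eq_univ_of_forall
    intro h
    obtain ⟨g, rfl⟩ := hs h
    exact Finset.mem_image_of_mem _ (Finset.mem_univ g)
  rw [himg, Finset.smul_sum]
  apply Finset.sum_congr rfl
  intro b _
  congr 1
  apply Finset.card_bij' (fun g _ => g - Classical.choose (hs b))
    (fun g _ => g + Classical.choose (hs b))
  · intro a ha
    simp only [Finset.mem_filter, Finset.mem_univ, true_and] at ha ⊢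
    rw [map_sub, ha, Classical.choose_spec (hs b), sub_self]
  · intro a ha
    simp only [Finset.mem_filter, Finset.mem_univ, true_and] at ha ⊢
    rw [map_add, ha, zero_add, Classical.choose_spec (hs b)]
  · intro a _; simp
  · intro a _; simp

/-- counting version -/
lemma card_comp_surj {G H : Type*} [AddCommGroup G] [Fintype G] [AddCommGroup H] [Fintype H]
    (φ : G →+ H) (hs : Function.Surjective φ) :
    Fintype.card G = (univ.filter fun g : G => φ g = 0).card * Fintype.card H := by
  have := sum_comp_surj (M := ℕ) φ hs (fun _ => 1)
  rw [Finset.sum_const, Finset.sum_const, smul_eq_mul, mul_one] at this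
  rw [Fintype.card, Fintype.card, this, smul_eq_mul, smul_eq_mul, mul_one]

include hgen in
lemma conv {ℓ n : ℕ} {Y : Matrix (Fin ℓ) (Fin n) R} {C : Submodule R (Fin n → R)} [Fintype ↥C]
    (hC : (C : Set (Fin n → R)) = Set.range fun x : Fin ℓ → R => fun j => ∑ i, x i * Y i j)
    (hreg : ∀ j : Fin n, ∀ r : R, ∃ x : Fin ℓ → R, ∑ i, x i * Y i j = r)
    (hproj : ∀ j j' : Fin n,
      (Set.range fun r : R => fun i => Y i j * r)
        = (Set.range fun r : R => fun i => Y i j' * r) → j = j')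
    (e : ↥C) :
    ∑ d : ↥C, (∑ p : Fin n × Rˣ, χ ((d : Fin n → R) p.1 * p.2))
        * (∑ p : Fin n × Rˣ, χ (((e - d : ↥C) : Fin n → R) p.1 * p.2))
      = (Fintype.card ↥C : ℂ) * ∑ p : Fin n × Rˣ, χ ((e : Fin n → R) p.1 * p.2) := by
  classical
  have hmem : ∀ x : Fin ℓ → R, (fun j => ∑ i, x i * Y i j) ∈ C := by
    intro x
    rw [← SetLike.mem_coe, hC]
    exact ⟨x, rfl⟩
  have hsingle : ∀ (i : Fin ℓ) (r : R) (j : Fin n),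
      (∑ i', (fun i'' => if i'' = i then r else 0) i' * Y i' j) = r * Y i j := by
    intro i r j
    rw [Finset.sum_eq_single i]
    · simp
    · intro i' _ hne
      simp [hne]
    · intro h; exact absurd (Finset.mem_univ i) h
  -- the additive character associated to a pair of pairs
  set ψ : (Fin n × Rˣ) → (Fin n × Rˣ) → AddChar ↥C ℂ := fun p q =>
    χ.compAddMonoidHom (AddMonoidHom.mk'
      (fun d : ↥C => (d : Fin n → R) p.1 * ↑p.2 - (d : Fin n → R) q.1 * ↑q.2)
      (by
        intro a b
        have ha : ((a + b : ↥C) : Fin n → R) = (a : Fin n → R) + (b : Fin n → R) := rfl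
        rw [ha]
        simp only [Pi.add_apply, add_mul]
        abel)) with hψdef
  have hψ : ∀ p q : Fin n × Rˣ, ψ p q = 0 ↔ p = q := by
    intro p q
    constructor
    · intro h0
      have htriv : ∀ d : ↥C,
          χ ((d : Fin n → R) p.1 * ↑p.2 - (d : Fin n → R) q.1 * ↑q.2) = 1 := by
        intro d
        have := AddChar.eq_zero_iff.mp h0 d
        exact this
      have hz : ∀ i : Fin ℓ, Y i p.1 * ↑p.2 = Y i q.1 * ↑q.2 := by
        intro i
        have hr : ∀ r : R, χ (r * (Y i p.1 * ↑p.2 - Y i q.1 * ↑q.2)) = 1 := by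
          intro r
          have hd := htriv ⟨_, hmem (fun i'' => if i'' = i then r else 0)⟩
          simp only [hsingle] at hd
          rw [mul_sub, ← mul_assoc, ← mul_assoc]
          exact hd
        have := right_ann hgen (fun r => hr r)
        exact sub_eq_zero.mp this
      have hj : p.1 = q.1 := by
        apply hproj
        ext f
        simp only [Set.mem_range]
        constructor
        · rintro ⟨r, rfl⟩
          refine ⟨↑q.2 * (↑p.2⁻¹ * r), ?_⟩
          funext i
          calc Y i q.1 * (↑q.2 * (↑p.2⁻¹ * r)) = (Y i q.1 * ↑q.2) * (↑p.2⁻¹ * r) := by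
                rw [mul_assoc]
          _ = (Y i p.1 * ↑p.2) * (↑p.2⁻¹ * r) := by rw [hz i]
          _ = Y i p.1 * (↑p.2 * (↑p.2⁻¹ * r)) := by rw [mul_assoc]
          _ = Y i p.1 * r := by rw [← mul_assoc (↑p.2 : R), Units.mul_inv, one_mul]
        · rintro ⟨r, rfl⟩
          refine ⟨↑p.2 * (↑q.2⁻¹ * r), ?_⟩
          funext i
          calc Y i p.1 * (↑p.2 * (↑q.2⁻¹ * r)) = (Y i p.1 * ↑p.2) * (↑q.2⁻¹ * r) := by
                rw [mul_assoc]
          _ = (Y i q.1 * ↑q.2) * (↑q.2⁻¹ * r) := by rw [← hz i]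
          _ = Y i q.1 * (↑q.2 * (↑q.2⁻¹ * r)) := by rw [mul_assoc]
          _ = Y i q.1 * r := by rw [← mul_assoc (↑q.2 : R), Units.mul_inv, one_mul]
      have hu : p.2 = q.2 := by
        obtain ⟨x, hx⟩ := hreg p.1 1
        apply Units.ext
        calc (↑p.2 : R) = 1 * ↑p.2 := (one_mul _).symm
        _ = (∑ i, x i * Y i p.1) * ↑p.2 := by rw [hx]
        _ = ∑ i, x i * (Y i p.1 * ↑p.2) := by rw [Finset.sum_mul]; simp [mul_assoc]
        _ = ∑ i, x i * (Y i q.1 * ↑q.2) := by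
              apply Finset.sum_congr rfl; intro i _; rw [hz i]
        _ = ∑ i, x i * (Y i p.1 * ↑q.2) := by rw [hj]
        _ = (∑ i, x i * Y i p.1) * ↑q.2 := by rw [Finset.sum_mul]; simp [mul_assoc]
        _ = ↑q.2 := by rw [hx, one_mul]
      exact Prod.ext hj hu
    · rintro rfl
      apply AddChar.eq_zero_iff.mpr
      intro d
      have hrfl : (ψ p p) d
          = χ ((d : Fin n → R) p.1 * ↑p.2 - (d : Fin n → R) p.1 * ↑p.2) := rfl
      rw [hrfl, sub_self, AddChar.map_zero_eq_one]
  -- main computation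
  have expand : ∀ d : ↥C,
      (∑ p : Fin n × Rˣ, χ ((d : Fin n → R) p.1 * p.2))
          * (∑ q : Fin n × Rˣ, χ (((e - d : ↥C) : Fin n → R) q.1 * q.2))
        = ∑ p : Fin n × Rˣ, ∑ q : Fin n × Rˣ,
            χ ((e : Fin n → R) q.1 * q.2) * ψ p q d := by
    intro d
    rw [Finset.sum_mul_sum]
    apply Finset.sum_congr rfl; intro p _
    apply Finset.sum_congr rfl; intro q _
    have hsub : ((e - d : ↥C) : Fin n → R) q.1 = (e : Fin n → R) q.1 - (d : Fin n → R) q.1 := rfl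
    rw [hsub, sub_mul]
    have hψr : ψ p q d
        = χ ((d : Fin n → R) p.1 * ↑p.2 - (d : Fin n → R) q.1 * ↑q.2) := rfl
    rw [hψr, ← AddChar.map_add_eq_mul, ← AddChar.map_add_eq_mul]
    congr 1
    abel
  have hinner : ∀ p q : Fin n × Rˣ,
      ∑ d : ↥C, ψ p q d = if p = q then (Fintype.card ↥C : ℂ) else 0 := by
    intro p q
    rw [AddChar.sum_eq_ite]
    by_cases hpq : p = q
    · rw [if_pos ((hψ p q).mpr hpq), if_pos hpq]
    · rw [if_neg (fun h0 => hpq ((hψ p q).mp h0)), if_neg hpq]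
  calc ∑ d : ↥C, (∑ p : Fin n × Rˣ, χ ((d : Fin n → R) p.1 * p.2))
        * (∑ p : Fin n × Rˣ, χ (((e - d : ↥C) : Fin n → R) p.1 * p.2))
      = ∑ d : ↥C, ∑ p : Fin n × Rˣ, ∑ q : Fin n × Rˣ,
          χ ((e : Fin n → R) q.1 * q.2) * ψ p q d :=
        Finset.sum_congr rfl (fun d _ => expand d)
    _ = ∑ p : Fin n × Rˣ, ∑ q : Fin n × Rˣ, ∑ d : ↥C,
          χ ((e : Fin n → R) q.1 * q.2) * ψ p q d := by
        rw [Finset.sum_comm]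
        exact Finset.sum_congr rfl (fun p _ => Finset.sum_comm)
    _ = ∑ p : Fin n × Rˣ, ∑ q : Fin n × Rˣ,
          χ ((e : Fin n → R) q.1 * q.2) * (if p = q then (Fintype.card ↥C : ℂ) else 0) := by
        apply Finset.sum_congr rfl; intro p _
        apply Finset.sum_congr rfl; intro q _
        rw [← Finset.mul_sum, hinner p q]
    _ = ∑ p : Fin n × Rˣ, χ ((e : Fin n → R) p.1 * p.2) * (Fintype.card ↥C : ℂ) := by
        apply Finset.sum_congr rfl; intro p _
        rw [Finset.sum_eq_single p]
        · rw [if_pos rfl]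
        · intro q _ hqp
          rw [if_neg (fun h => hqp h.symm), mul_zero]
        · intro h; exact absurd (Finset.mem_univ p) h
    _ = (Fintype.card ↥C : ℂ) * ∑ p : Fin n × Rˣ, χ ((e : Fin n → R) p.1 * p.2) := by
        rw [Finset.mul_sum]
        exact Finset.sum_congr rfl (fun p _ => mul_comm _ _)
end S12



/-- The homogeneous weight extended additively to `R^n`. -/
def wN {R : Type*} [Ring R] (w : R → ℝ) {n : ℕ} (c : Fin n → R) : ℝ :=
  ∑ i, w (c i)

open scoped Classical in
/-- Let `C ≤ R^n` be a proper, regular, projective two-weight code over a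
finite Frobenius ring `R`, with nonzero homogeneous weights `w₁ < w₂` (average value `γ`).
If the Cayley graph `Γ(C)` (adjacency matrix `A`, connecting codewords at distance `w₁`)
has valency `k` and restricted eigenvalues `ρ₁ < ρ₂`, then
(i) `(w₂−w₁)k = w₂(|C|−1) − γn|C|`, (ii) `(w₂−w₁)ρ₁ = −w₂`, and
(iii) `(w₂−w₁)ρ₂ = −w₂ + γ|C|/|R^×|`. -/
theorem stmt12 (R : Type*) [Ring R] [Fintype R]
    (hF : IsFrobeniusRing R) (w : R → ℝ) (γ : ℝ) (hw : IsHomWeight R w γ)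
    (ℓ n : ℕ) (Y : Matrix (Fin ℓ) (Fin n) R)
    (C : Submodule R (Fin n → R)) [Fintype ↥C]
    (hC : (C : Set (Fin n → R)) = Set.range fun x : Fin ℓ → R => fun j => ∑ i, x i * Y i j)
    (hreg : ∀ j : Fin n, ∀ r : R, ∃ x : Fin ℓ → R, ∑ i, x i * Y i j = r)
    (hproj : ∀ j j' : Fin n,
      (Set.range fun r : R => fun i => Y i j * r)
        = (Set.range fun r : R => fun i => Y i j' * r) → j = j')
    (hproper : ∀ c ∈ C, wN w c = 0 → c = 0)
    (w₁ w₂ : ℝ) (hw₁pos : 0 < w₁) (hw₁₂ : w₁ < w₂)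
    (htw : {x : ℝ | ∃ c ∈ C, c ≠ 0 ∧ wN w c = x} = {w₁, w₂})
    (A : Matrix ↥C ↥C ℝ)
    (hA : ∀ a b : ↥C, A a b = if wN w ((a : Fin n → R) - (b : Fin n → R)) = w₁ then 1 else 0)
    (k ρ₁ ρ₂ : ℝ)
    (hk : ∀ a : ↥C, ∑ b : ↥C, A a b = k)
    (hρ₁ : ∃ v : ↥C → ℝ, v ≠ 0 ∧ A.mulVec v = ρ₁ • v ∧ ∑ c : ↥C, v c = 0)
    (hρ₂ : ∃ v : ↥C → ℝ, v ≠ 0 ∧ A.mulVec v = ρ₂ • v ∧ ∑ c : ↥C, v c = 0)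
    (hρ : ρ₁ < ρ₂) :
    (w₂ - w₁) * k = w₂ * ((Nat.card ↥C : ℝ) - 1) - γ * n * (Nat.card ↥C : ℝ) ∧
    (w₂ - w₁) * ρ₁ = -w₂ ∧
    (w₂ - w₁) * ρ₂ = -w₂ + γ * (Nat.card ↥C : ℝ) / (Nat.card Rˣ : ℝ) := by
  classical
  obtain ⟨χ, hgen⟩ := hF
  obtain ⟨hw0, hwc, hws0⟩ := hw
  -- a nonzero codeword of weight w₁
  have hw1mem : w₁ ∈ {x : ℝ | ∃ c ∈ C, c ≠ 0 ∧ wN w c = x} := by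
    rw [htw]; exact Set.mem_insert _ _
  obtain ⟨c₀, hc₀C, hc₀ne, hc₀w⟩ := hw1mem
  have hRnt : Nontrivial R := by
    obtain ⟨j, hj⟩ := Function.ne_iff.mp hc₀ne
    exact nontrivial_of_ne (c₀ j) 0 hj
  have hwN0 : wN w (0 : Fin n → R) = 0 := by simp [wN, hw0]
  -- real Finset-sum version of the averaging axiom
  have hwsR : ∀ x : R, x ≠ 0 → ∑ y ∈ S12.cL x, w y = γ * ((S12.cL x).card : ℝ) := by
    intro x hx
    have h := hws0 x hx
    rw [S12.card_span_eq] at h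
    rw [show ((Submodule.span R ({x} : Set R) : Set R)) = ↑(S12.cL x) from S12.span_coe_cL x,
      finsum_mem_coe_finset] at h
    exact h
  have hws : ∀ x : R, x ≠ 0 →
      ∑ y ∈ S12.cL x, (w y : ℂ) = (γ : ℂ) * ((S12.cL x).card : ℂ) := by
    intro x hx
    have h := congrArg Complex.ofReal (hwsR x hx)
    push_cast at h ⊢
    exact h
  have hHon := S12.honold hgen hw0 hwc hws
  set U : ℂ := (Fintype.card Rˣ : ℂ) with hUdef
  have hUne : U ≠ 0 := S12.cardU_ne_zero
  have htt : ∀ x : R, (γ : ℂ) * S12.tt χ x = U * ((γ : ℂ) - (w x : ℂ)) := by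
    intro x
    rw [hHon x]
    field_simp
    ring
  -- the T function
  set T : ↥C → ℂ := fun d => ∑ p : Fin n × Rˣ, χ ((d : Fin n → R) p.1 * ↑p.2) with hTdef
  have hT : ∀ d : ↥C,
      (γ : ℂ) * T d = U * ((γ : ℂ) * (n : ℂ) - ((wN w (d : Fin n → R) : ℝ) : ℂ)) := by
    intro d
    have h1 : T d = ∑ j : Fin n, S12.tt χ ((d : Fin n → R) j) := by
      simp only [hTdef]
      rw [Fintype.sum_prod_type]
      rfl
    have h2 : ((wN w (d : Fin n → R) : ℝ) : ℂ)
        = ∑ j : Fin n, ((w ((d : Fin n → R) j) : ℝ) : ℂ) := by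
      rw [wN]; push_cast; rfl
    have h3 : (γ : ℂ) * (n : ℂ) = ∑ _j : Fin n, (γ : ℂ) := by
      rw [Finset.sum_const]; simp [mul_comm]
    rw [h1, Finset.mul_sum, Finset.sum_congr rfl (fun j _ => htt ((d : Fin n → R) j)),
      h2, h3, ← Finset.sum_sub_distrib, Finset.mul_sum]
  have hconv : ∀ e : ↥C, ∑ d : ↥C, T d * T (e - d) = (Fintype.card ↥C : ℂ) * T e := by
    intro e
    simp only [hTdef]
    exact S12.conv hgen hC hreg hproj e
  -- column sums
  have hcol : ∀ j : Fin n, ∑ c : ↥C, w ((c : Fin n → R) j) = γ * (Fintype.card ↥C : ℝ) := by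
    intro j
    set φj : ↥C →+ R :=
      (Pi.evalAddMonoidHom (fun _ : Fin n => R) j).comp C.subtype.toAddMonoidHom with hφdef
    have hsurj : Function.Surjective φj := by
      intro r
      obtain ⟨x, hx⟩ := hreg j r
      refine ⟨⟨fun j' => ∑ i, x i * Y i j', ?_⟩, hx⟩
      rw [← SetLike.mem_coe, hC]
      exact ⟨x, rfl⟩
    have h3 : ∑ r : R, w r = γ * (Fintype.card R : ℝ) := by
      have h := hwsR 1 one_ne_zero
      rw [S12.cL_one] at h
      rw [h, Finset.card_univ]
    have h1 : ∑ c : ↥C, w ((c : Fin n → R) j)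
        = (Finset.univ.filter fun g : ↥C => φj g = 0).card • ∑ r : R, w r :=
      S12.sum_comp_surj φj hsurj w
    have h2 := S12.card_comp_surj φj hsurj
    rw [h1, h3, nsmul_eq_mul, h2]
    push_cast
    ring
  have hwNsum : ∑ c : ↥C, wN w (c : Fin n → R) = γ * n * (Fintype.card ↥C : ℝ) := by
    simp only [wN]
    rw [Finset.sum_comm, Finset.sum_congr rfl (fun j (_ : j ∈ Finset.univ) => hcol j),
      Finset.sum_const]
    simp only [Finset.card_univ, Fintype.card_fin, nsmul_eq_mul]
    ring
  -- values of nonzero codewords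
  have hval : ∀ c : ↥C, (c : Fin n → R) ≠ 0 →
      wN w (c : Fin n → R) = w₁ ∨ wN w (c : Fin n → R) = w₂ := by
    intro c hc
    have hmem : wN w (c : Fin n → R) ∈ {x : ℝ | ∃ c' ∈ C, c' ≠ 0 ∧ wN w c' = x} :=
      ⟨c, c.2, hc, rfl⟩
    rw [htw] at hmem
    simpa using hmem
  have hCpos : (0 : ℝ) < (Fintype.card ↥C : ℝ) := by
    exact_mod_cast Fintype.card_pos
  have hsumpos : 0 < ∑ c : ↥C, wN w (c : Fin n → R) := by
    apply Finset.sum_pos'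
    · intro c _
      rcases eq_or_ne ((c : Fin n → R)) 0 with hc | hc
      · rw [hc, hwN0]
      · rcases hval c hc with h | h <;> rw [h] <;> linarith
    · refine ⟨⟨c₀, hc₀C⟩, Finset.mem_univ _, ?_⟩
      have : ((⟨c₀, hc₀C⟩ : ↥C) : Fin n → R) = c₀ := rfl
      rw [this, hc₀w]
      exact hw₁pos
  have hγpos : 0 < γ := by
    have hpos : 0 < γ * n * (Fintype.card ↥C : ℝ) := hwNsum ▸ hsumpos
    by_contra hγ
    push_neg at hγ
    have h1 : γ * n ≤ 0 := mul_nonpos_of_nonpos_of_nonneg hγ (Nat.cast_nonneg n)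
    have h2 : γ * n * (Fintype.card ↥C : ℝ) ≤ 0 :=
      mul_nonpos_of_nonpos_of_nonneg h1 (le_of_lt hCpos)
    linarith
  -- distance identity
  have hD : ∀ a b : ↥C, wN w ((a : Fin n → R) - (b : Fin n → R))
      = w₂ - (if a = b then w₂ else 0) - (w₂ - w₁) * A a b := by
    intro a b
    rcases eq_or_ne a b with rfl | hab
    · have h0 : (a : Fin n → R) - (a : Fin n → R) = 0 := sub_self _
      have hAa : A a a = 0 := by
        rw [hA a a, h0, hwN0, if_neg (by linarith)]
      rw [h0, hwN0, if_pos rfl, hAa]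
      ring
    · have hmem : (a : Fin n → R) - (b : Fin n → R) ∈ C := sub_mem a.2 b.2
      have hne : (a : Fin n → R) - (b : Fin n → R) ≠ 0 := by
        intro h
        exact hab (Subtype.ext (sub_eq_zero.mp h))
      have hval' : wN w ((a : Fin n → R) - (b : Fin n → R)) = w₁ ∨
          wN w ((a : Fin n → R) - (b : Fin n → R)) = w₂ := by
        have hmem2 : wN w ((a : Fin n → R) - (b : Fin n → R))
            ∈ {x : ℝ | ∃ c' ∈ C, c' ≠ 0 ∧ wN w c' = x} := ⟨_, hmem, hne, rfl⟩
        rw [htw] at hmem2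
        simpa using hmem2
      rcases hval' with h | h
      · have hAab : A a b = 1 := by rw [hA a b, h, if_pos rfl]
        rw [h, hAab, if_neg hab]
        ring
      · have hAab : A a b = 0 := by
          rw [hA a b, h]
          exact if_neg (by linarith)
        rw [h, hAab, if_neg hab]
        ring
  -- key eigenvalue dichotomy
  have hkey : ∀ ρ : ℝ, (∃ v : ↥C → ℝ, v ≠ 0 ∧ A.mulVec v = ρ • v ∧ ∑ c : ↥C, v c = 0) →
      ((-w₂ - (w₂ - w₁) * ρ) = 0 ∨
        (Fintype.card Rˣ : ℝ) * (-w₂ - (w₂ - w₁) * ρ)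
          = -(γ * (Fintype.card ↥C : ℝ))) := by
    rintro ρ ⟨v, hvne, hAv, hv0⟩
    set θ : ℝ := -w₂ - (w₂ - w₁) * ρ with hθdef
    have hDv : ∀ a : ↥C,
        ∑ b : ↥C, wN w ((a : Fin n → R) - (b : Fin n → R)) * v b = θ * v a := by
      intro a
      rw [Finset.sum_congr rfl (fun b (_ : b ∈ Finset.univ) => by rw [hD a b])]
      have hterm : ∀ b : ↥C, ((w₂ - if a = b then w₂ else 0) - (w₂ - w₁) * A a b) * v b
          = w₂ * v b - (if a = b then w₂ else 0) * v b - (w₂ - w₁) * A a b * v b := by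
        intro b; ring
      rw [Finset.sum_congr rfl (fun b _ => hterm b)]
      rw [Finset.sum_sub_distrib, Finset.sum_sub_distrib, ← Finset.mul_sum, hv0, mul_zero]
      have hite : ∑ b : ↥C, (if a = b then w₂ else 0) * v b = w₂ * v a := by
        rw [Finset.sum_eq_single a]
        · rw [if_pos rfl]
        · intro b _ hba
          rw [if_neg (fun h => hba h.symm), zero_mul]
        · intro h; exact absurd (Finset.mem_univ a) h
      have hAv' : ∑ b : ↥C, (w₂ - w₁) * A a b * v b = (w₂ - w₁) * (ρ * v a) := by
        simp only [mul_assoc]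
        rw [← Finset.mul_sum]
        have hmv : ∑ b : ↥C, A a b * v b = (A.mulVec v) a := rfl
        rw [hmv, hAv]
        simp [smul_eq_mul]
      rw [hite, hAv', hθdef]
      ring
    set K : ℂ := (Fintype.card ↥C : ℂ) with hKdef
    set vC : ↥C → ℂ := fun c => ((v c : ℝ) : ℂ) with hvCdef
    set Q : ↥C → ℂ := fun a => ∑ d : ↥C, T (a - d) * vC d with hQdef
    have hvsum : ∑ d : ↥C, vC d = 0 := by
      rw [hvCdef]
      have h := congrArg Complex.ofReal hv0; push_cast at h; exact h
    have hQ : ∀ a : ↥C, (γ : ℂ) * Q a = -(U * (θ : ℂ)) * vC a := by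
      intro a
      have hsubval : ∀ d : ↥C, ((a - d : ↥C) : Fin n → R)
          = (a : Fin n → R) - (d : Fin n → R) := fun d => rfl
      have hγQ : (γ : ℂ) * Q a = ∑ d : ↥C,
          U * ((γ:ℂ) * (n:ℂ) - ((wN w ((a : Fin n → R) - (d : Fin n → R)) : ℝ) : ℂ)) * vC d := by
        rw [hQdef]
        simp only
        rw [Finset.mul_sum]
        apply Finset.sum_congr rfl
        intro d _
        rw [show (γ:ℂ) * (T (a - d) * vC d) = ((γ:ℂ) * T (a - d)) * vC d by ring, hT (a - d),
          hsubval d]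
      have e1 : ∑ d : ↥C, U * ((γ:ℂ) * (n:ℂ)) * vC d = 0 := by
        rw [← Finset.mul_sum, hvsum, mul_zero]
      have e2 : ∑ d : ↥C, U * ((wN w ((a : Fin n → R) - (d : Fin n → R)) : ℝ) : ℂ) * vC d
          = U * ((θ : ℝ) : ℂ) * vC a := by
        have : ∀ d : ↥C, U * ((wN w ((a : Fin n → R) - (d : Fin n → R)) : ℝ) : ℂ) * vC d
            = U * (((wN w ((a : Fin n → R) - (d : Fin n → R)) * v d : ℝ) : ℂ)) := by
          intro d
          rw [hvCdef]
          push_cast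
          ring
        rw [Finset.sum_congr rfl (fun d _ => this d), ← Finset.mul_sum]
        rw [show ∑ d : ↥C, (((wN w ((a : Fin n → R) - (d : Fin n → R)) * v d : ℝ)) : ℂ)
            = (((∑ d : ↥C, wN w ((a : Fin n → R) - (d : Fin n → R)) * v d : ℝ)) : ℂ) by
          push_cast; rfl]
        rw [hDv a, hvCdef]
        push_cast
        ring
      have hexp : ∀ d : ↥C,
          U * ((γ:ℂ) * (n:ℂ) - ((wN w ((a : Fin n → R) - (d : Fin n → R)) : ℝ) : ℂ)) * vC d
          = U * ((γ:ℂ) * (n:ℂ)) * vC d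
            - U * ((wN w ((a : Fin n → R) - (d : Fin n → R)) : ℝ) : ℂ) * vC d := by
        intro d; ring
      rw [hγQ, Finset.sum_congr rfl (fun d (_ : d ∈ Finset.univ) => hexp d),
        Finset.sum_sub_distrib, e1, e2]
      ring
    have hconv2 : ∀ a b : ↥C, ∑ d : ↥C, T (a - d) * T (d - b) = K * T (a - b) := by
      intro a b
      have hre : ∑ d : ↥C, T (a - d) * T (d - b)
          = ∑ d : ↥C, T d * T ((a - b) - d) := by
        apply Fintype.sum_equiv (Equiv.subLeft a)
        intro x
        have h2 : (a - b) - (a - x) = x - b := by abel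
        simp only [Equiv.subLeft_apply]
        rw [h2]
      rw [hre, hconv (a - b), hKdef]
    have hQ2 : ∀ a : ↥C, ∑ d : ↥C, T (a - d) * Q d = K * Q a := by
      intro a
      rw [hQdef]
      simp only [Finset.mul_sum]
      rw [Finset.sum_comm (γ := ↥C)]
      · apply Finset.sum_congr rfl
        intro b _
        rw [show ∑ d : ↥C, T (a - d) * (T (d - b) * vC b)
            = (∑ d : ↥C, T (a - d) * T (d - b)) * vC b by
          rw [Finset.sum_mul]; apply Finset.sum_congr rfl; intro d _; ring]
        rw [hconv2 a b]
        ring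
    -- combine
    obtain ⟨a₀, ha₀⟩ := Function.ne_iff.mp hvne
    have hvCa : vC a₀ ≠ 0 := by
      rw [hvCdef]
      simpa using ha₀
    have hmain : (U * (θ:ℂ)) * (U * (θ:ℂ)) * vC a₀ = -((γ:ℂ) * K * (U * (θ:ℂ))) * vC a₀ := by
      have c1 : (γ:ℂ) * ((γ:ℂ) * ∑ d : ↥C, T (a₀ - d) * Q d)
          = (U * (θ:ℂ)) * (U * (θ:ℂ)) * vC a₀ := by
        rw [Finset.mul_sum]
        rw [Finset.sum_congr rfl (fun d (_ : d ∈ Finset.univ) => by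
          rw [show (γ:ℂ) * (T (a₀ - d) * Q d) = T (a₀ - d) * ((γ:ℂ) * Q d) by ring,
            hQ d])]
        rw [show ∑ d : ↥C, T (a₀ - d) * (-(U * (θ:ℂ)) * vC d)
            = -(U * (θ:ℂ)) * ∑ d : ↥C, T (a₀ - d) * vC d by
          rw [Finset.mul_sum]; apply Finset.sum_congr rfl; intro d _; ring]
        have : (∑ d : ↥C, T (a₀ - d) * vC d) = Q a₀ := rfl
        rw [this]
        rw [show (γ:ℂ) * (-(U * (θ:ℂ)) * Q a₀) = -(U * (θ:ℂ)) * ((γ:ℂ) * Q a₀) by ring,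
          hQ a₀]
        ring
      have c2 : (γ:ℂ) * ((γ:ℂ) * ∑ d : ↥C, T (a₀ - d) * Q d)
          = -((γ:ℂ) * K * (U * (θ:ℂ))) * vC a₀ := by
        rw [hQ2 a₀]
        rw [show (γ:ℂ) * ((γ:ℂ) * (K * Q a₀)) = (γ:ℂ) * K * ((γ:ℂ) * Q a₀) by ring, hQ a₀]
        ring
      rw [← c1, c2]
    have hmain2 : (U * (θ:ℂ)) * (U * (θ:ℂ)) = -((γ:ℂ) * K * (U * (θ:ℂ))) :=
      mul_right_cancel₀ hvCa hmain
    have hfact : (U * (θ:ℂ)) * (U * (θ:ℂ) + (γ:ℂ) * K) = 0 := by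
      linear_combination hmain2
    rcases mul_eq_zero.mp hfact with h | h
    · rcases mul_eq_zero.mp h with h' | h'
      · exact absurd h' hUne
      · left
        exact_mod_cast h'
    · right
      have : U * (θ:ℂ) = -((γ:ℂ) * K) := by linear_combination h
      rw [hUdef, hKdef] at this
      exact_mod_cast this
  -- finish
  have hNC : (Nat.card ↥C : ℝ) = (Fintype.card ↥C : ℝ) := by rw [Nat.card_eq_fintype_card]
  have hNU : (Nat.card Rˣ : ℝ) = (Fintype.card Rˣ : ℝ) := by rw [Nat.card_eq_fintype_card]
  have hUposR : (0 : ℝ) < (Fintype.card Rˣ : ℝ) := by exact_mod_cast Fintype.card_pos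
  -- part (i)
  have part1 : (w₂ - w₁) * k
      = w₂ * ((Nat.card ↥C : ℝ) - 1) - γ * n * (Nat.card ↥C : ℝ) := by
    have hk0 := hk 0
    have hsum0 : ∑ b : ↥C, wN w (((0 : ↥C) : Fin n → R) - (b : Fin n → R))
        = γ * n * (Fintype.card ↥C : ℝ) := by
      rw [← hwNsum]
      apply Fintype.sum_equiv (Equiv.neg ↥C)
      intro b
      have h1 : ((Equiv.neg ↥C) b : Fin n → R) = -(b : Fin n → R) := rfl
      rw [h1]
      congr 1
      simp
    have hexp : ∑ b : ↥C, (w₂ - (if (0:↥C) = b then w₂ else 0)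
        - wN w (((0 : ↥C) : Fin n → R) - (b : Fin n → R)))
        = (w₂ - w₁) * k := by
      rw [← hk0, Finset.mul_sum]
      apply Finset.sum_congr rfl
      intro b _
      rw [hD 0 b]
      ring
    rw [← hexp]
    rw [Finset.sum_sub_distrib, Finset.sum_sub_distrib, hsum0, Finset.sum_const]
    have hite : ∑ b : ↥C, (if (0:↥C) = b then w₂ else 0) = w₂ := by
      rw [Finset.sum_eq_single (0 : ↥C)]
      · rw [if_pos rfl]
      · intro b _ hb; rw [if_neg (fun h => hb h.symm)]
      · intro h; exact absurd (Finset.mem_univ (0:↥C)) h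
    rw [hite]
    simp only [Finset.card_univ, nsmul_eq_mul, hNC]
    ring
  have h1 := hkey ρ₁ hρ₁
  have h2 := hkey ρ₂ hρ₂
  have hθord : -w₂ - (w₂ - w₁) * ρ₂ < -w₂ - (w₂ - w₁) * ρ₁ := by nlinarith
  have hcpos : 0 < γ * (Fintype.card ↥C : ℝ) := by positivity
  have hcase : (-w₂ - (w₂ - w₁) * ρ₁ = 0) ∧
      (Fintype.card Rˣ : ℝ) * (-w₂ - (w₂ - w₁) * ρ₂) = -(γ * (Fintype.card ↥C : ℝ)) := by
    rcases h1 with h1 | h1 <;> rcases h2 with h2 | h2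
    · exact absurd (h1.trans h2.symm) (by linarith)
    · exact ⟨h1, h2⟩
    · exfalso
      nlinarith [mul_pos hUposR (show 0 < -w₂ - (w₂ - w₁) * ρ₁ by nlinarith)]
    · exfalso
      nlinarith [mul_pos hUposR
        (show 0 < (-w₂ - (w₂ - w₁) * ρ₁) - (-w₂ - (w₂ - w₁) * ρ₂) by linarith)]
  refine ⟨part1, by linarith [hcase.1], ?_⟩
  have h2' := hcase.2
  rw [hNC, hNU]
  have hgoal : ((w₂ - w₁) * ρ₂ + w₂) * (Fintype.card Rˣ : ℝ) = γ * (Fintype.card ↥C : ℝ) := by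
    linear_combination -h2'
  have hdiv : γ * (Fintype.card ↥C : ℝ) / (Fintype.card Rˣ : ℝ) = (w₂ - w₁) * ρ₂ + w₂ := by
    rw [div_eq_iff (ne_of_gt hUposR)]
    linear_combination -hgoal
  linarith
end

section
/- Let R be a finite Frobenius ring of order p^r (p prime) having a minimal right ideal of size p^s. Then p^s − 1 divides |R^×|. -/
open Function LinearMap

section Lovasz
universe u v
variable {A : Type u} [Ring A]

private instance finiteQuot {X : Type v} [AddCommGroup X] [Module A X] [Finite X]
    (N : Submodule A X) : Finite (X ⧸ N) :=
  Finite.of_surjective _ (Submodule.Quotient.mk_surjective N)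

private instance finiteHom {X P : Type v} [AddCommGroup X] [Module A X] [AddCommGroup P]
    [Module A P] [Finite X] [Finite P] : Finite (X →ₗ[A] P) :=
  Finite.of_injective (fun f => (⇑f : X → P)) DFunLike.coe_injective

/-- Homs with kernel `N` correspond to injections from `X ⧸ N`. -/
private noncomputable def kerFiberEquiv {X P : Type v} [AddCommGroup X] [Module A X]
    [AddCommGroup P] [Module A P] (N : Submodule A X) :
    {f : X →ₗ[A] P // LinearMap.ker f = N} ≃ {g : (X ⧸ N) →ₗ[A] P // Function.Injective g} where
  toFun f := ⟨N.liftQ f.1 f.2.ge, by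
    rw [← LinearMap.ker_eq_bot]
    rw [eq_bot_iff]
    rintro z hz
    obtain ⟨x, rfl⟩ := Submodule.Quotient.mk_surjective N z
    have : f.1 x = 0 := hz
    have hx : x ∈ N := f.2 ▸ this
    simpa [Submodule.Quotient.mk_eq_zero] using hx⟩
  invFun g := ⟨g.1 ∘ₗ N.mkQ, by
    rw [LinearMap.ker_comp, LinearMap.ker_eq_bot.mpr g.2, Submodule.comap_bot, Submodule.ker_mkQ]⟩
  left_inv f := Subtype.ext (N.liftQ_mkQ f.1 f.2.ge)
  right_inv g := Subtype.ext (by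
    apply Submodule.linearMap_qext
    exact N.liftQ_mkQ _ _)

private lemma card_hom_eq_sum (X P : Type v) [AddCommGroup X] [Module A X] [Finite X]
    [AddCommGroup P] [Module A P] [Finite P] [Fintype (Submodule A X)] :
    Nat.card (X →ₗ[A] P) =
      ∑ N : Submodule A X, Nat.card {g : (X ⧸ N) →ₗ[A] P // Function.Injective g} := by
  classical
  have e1 : (X →ₗ[A] P) ≃ (N : Submodule A X) × {f : X →ₗ[A] P // LinearMap.ker f = N} :=
    (Equiv.sigmaFiberEquiv (fun f : X →ₗ[A] P => LinearMap.ker f)).symm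
  rw [Nat.card_congr e1]
  haveI : ∀ N : Submodule A X, Finite {f : X →ₗ[A] P // LinearMap.ker f = N} :=
    fun N => Subtype.finite
  haveI : ∀ N : Submodule A X, Fintype {f : X →ₗ[A] P // LinearMap.ker f = N} :=
    fun N => Fintype.ofFinite _
  rw [Nat.card_eq_fintype_card, Fintype.card_sigma]
  exact Finset.sum_congr rfl fun N _ => by
    rw [← Nat.card_eq_fintype_card, Nat.card_congr (kerFiberEquiv N)]

private lemma quotient_card_lt {X : Type v} [AddCommGroup X] [Module A X] [Finite X]
    {N : Submodule A X} (hN : N ≠ ⊥) : Nat.card (X ⧸ N) < Nat.card X := by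
  classical
  haveI : Fintype X := Fintype.ofFinite X
  haveI : Fintype (X ⧸ N) := Fintype.ofFinite _
  rw [Nat.card_eq_fintype_card, Nat.card_eq_fintype_card]
  obtain ⟨x, hx, hx0⟩ := (Submodule.ne_bot_iff N).mp hN
  refine Fintype.card_lt_of_surjective_not_injective _ (Submodule.Quotient.mk_surjective N) ?_
  intro hinj
  apply hx0
  apply hinj
  simpa [Submodule.Quotient.mk_eq_zero] using hx

private lemma card_inj_hom_eq {P Q : Type u} [AddCommGroup P] [Module A P] [Finite P]
    [AddCommGroup Q] [Module A Q] [Finite Q]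
    (h : ∀ (X : Type u) [AddCommGroup X] [Module A X] [Finite X],
        Nat.card (X →ₗ[A] P) = Nat.card (X →ₗ[A] Q)) :
    ∀ (n : ℕ) (X : Type u) [AddCommGroup X] [Module A X] [Finite X], Nat.card X ≤ n →
      Nat.card {g : X →ₗ[A] P // Function.Injective g}
        = Nat.card {g : X →ₗ[A] Q // Function.Injective g} := by
  intro n
  induction n using Nat.strong_induction_on with
  | _ n IH =>
    intro X _ _ _ hX
    classical
    haveI : Finite (Submodule A X) := Finite.of_injective _ SetLike.coe_injective
    haveI : Fintype (Submodule A X) := Fintype.ofFinite _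
    have key : (∑ N : Submodule A X, Nat.card {g : (X ⧸ N) →ₗ[A] P // Function.Injective g})
        = ∑ N : Submodule A X, Nat.card {g : (X ⧸ N) →ₗ[A] Q // Function.Injective g} := by
      rw [← card_hom_eq_sum X P, ← card_hom_eq_sum X Q]; exact h X
    have hterm : ∀ N ∈ Finset.univ.erase (⊥ : Submodule A X),
        Nat.card {g : (X ⧸ N) →ₗ[A] P // Function.Injective g}
          = Nat.card {g : (X ⧸ N) →ₗ[A] Q // Function.Injective g} := by
      intro N hN
      have hN0 : N ≠ ⊥ := (Finset.mem_erase.mp hN).1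
      exact IH (Nat.card (X ⧸ N)) (lt_of_lt_of_le (quotient_card_lt hN0) hX) _ le_rfl
    rw [← Finset.add_sum_erase _ _ (Finset.mem_univ (⊥ : Submodule A X)),
        ← Finset.add_sum_erase _ _ (Finset.mem_univ (⊥ : Submodule A X)),
        Finset.sum_congr rfl hterm] at key
    have hbot := Nat.add_right_cancel key
    -- transport along X ⧸ ⊥ ≃ X
    have e0 : ∀ (P' : Type u) [AddCommGroup P'] [Module A P'],
        {g : (X ⧸ (⊥ : Submodule A X)) →ₗ[A] P' // Function.Injective g}
          ≃ {g : X →ₗ[A] P' // Function.Injective g} := by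
      intro P' _ _
      exact (kerFiberEquiv (⊥ : Submodule A X)).symm.trans
        (Equiv.subtypeEquivRight (fun f => LinearMap.ker_eq_bot))
    rw [Nat.card_congr (e0 P).symm, Nat.card_congr (e0 Q).symm]
    exact hbot

/-- Lovász-style: finite modules with equal hom-counts from every finite test module
are isomorphic. -/
private lemma linearEquiv_of_card_hom_eq {P Q : Type u} [AddCommGroup P] [Module A P] [Finite P]
    [AddCommGroup Q] [Module A Q] [Finite Q]
    (h : ∀ (X : Type u) [AddCommGroup X] [Module A X] [Finite X],
        Nat.card (X →ₗ[A] P) = Nat.card (X →ₗ[A] Q)) :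
    Nonempty (P ≃ₗ[A] Q) := by
  have h1 := card_inj_hom_eq h (Nat.card P) P le_rfl
  have h2 := card_inj_hom_eq (fun X _ _ _ => (h X).symm) (Nat.card Q) Q le_rfl
  have hP : Nat.card {g : P →ₗ[A] P // Function.Injective g} ≠ 0 := by
    haveI : Nonempty {g : P →ₗ[A] P // Function.Injective g} := ⟨⟨LinearMap.id, fun a b => id⟩⟩
    exact Nat.card_pos.ne'
  have hQ : Nat.card {g : P →ₗ[A] Q // Function.Injective g} ≠ 0 := h1 ▸ hP
  have hQ2 : Nat.card {g : Q →ₗ[A] Q // Function.Injective g} ≠ 0 := by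
    haveI : Nonempty {g : Q →ₗ[A] Q // Function.Injective g} := ⟨⟨LinearMap.id, fun a b => id⟩⟩
    exact Nat.card_pos.ne'
  have hP2 : Nat.card {g : Q →ₗ[A] P // Function.Injective g} ≠ 0 := h2 ▸ hQ2
  obtain ⟨f, hf⟩ := Nat.card_ne_zero.mp hQ |>.1.some
  obtain ⟨g, hg⟩ := Nat.card_ne_zero.mp hP2 |>.1.some
  have hcard : Nat.card P = Nat.card Q :=
    le_antisymm (Nat.card_le_card_of_injective f hf) (Nat.card_le_card_of_injective g hg)
  have hbij : Function.Bijective f := (Nat.bijective_iff_injective_and_card f).mpr ⟨hf, hcard⟩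
  exact ⟨LinearEquiv.ofBijective f hbij⟩

/-- Cancellation for finite modules. -/
private lemma cancel_of_prod_equiv {M T T₀ B B₀ : Type u}
    [AddCommGroup M] [Module A M] [Finite M]
    [AddCommGroup T] [Module A T] [Finite T]
    [AddCommGroup T₀] [Module A T₀] [Finite T₀]
    [AddCommGroup B] [Module A B] [Finite B]
    [AddCommGroup B₀] [Module A B₀] [Finite B₀]
    (e1 : (B × T) ≃ₗ[A] M) (e2 : (B₀ × T₀) ≃ₗ[A] M) (eT : T ≃ₗ[A] T₀) :
    Nonempty (B₀ ≃ₗ[A] B) := by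
  apply linearEquiv_of_card_hom_eq
  intro X _ _ _
  have comp_equiv : ∀ {Y Z : Type u} [AddCommGroup Y] [Module A Y] [AddCommGroup Z] [Module A Z]
      (e : Y ≃ₗ[A] Z), (X →ₗ[A] Y) ≃ (X →ₗ[A] Z) := by
    intro Y Z _ _ _ _ e
    exact ⟨fun f => e.toLinearMap ∘ₗ f, fun f => e.symm.toLinearMap ∘ₗ f,
      fun f => by ext x; simp, fun f => by ext x; simp⟩
  have prod_equiv : ∀ {Y Z : Type u} [AddCommGroup Y] [Module A Y] [AddCommGroup Z] [Module A Z],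
      (X →ₗ[A] (Y × Z)) ≃ ((X →ₗ[A] Y) × (X →ₗ[A] Z)) := by
    intro Y Z _ _ _ _
    exact ⟨fun f => (LinearMap.fst A Y Z ∘ₗ f, LinearMap.snd A Y Z ∘ₗ f),
      fun p => LinearMap.prod p.1 p.2,
      fun f => by ext x <;> simp, fun p => by constructor <;> ext x <;> simp⟩
  have key : Nat.card (X →ₗ[A] B₀) * Nat.card (X →ₗ[A] T)
      = Nat.card (X →ₗ[A] B) * Nat.card (X →ₗ[A] T) := by
    calc Nat.card (X →ₗ[A] B₀) * Nat.card (X →ₗ[A] T)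
        = Nat.card (X →ₗ[A] B₀) * Nat.card (X →ₗ[A] T₀) := by
          rw [Nat.card_congr (comp_equiv eT)]
      _ = Nat.card ((X →ₗ[A] B₀) × (X →ₗ[A] T₀)) := (Nat.card_prod _ _).symm
      _ = Nat.card (X →ₗ[A] (B₀ × T₀)) := (Nat.card_congr prod_equiv).symm
      _ = Nat.card (X →ₗ[A] M) := Nat.card_congr (comp_equiv e2)
      _ = Nat.card (X →ₗ[A] (B × T)) := (Nat.card_congr (comp_equiv e1)).symm
      _ = Nat.card ((X →ₗ[A] B) × (X →ₗ[A] T)) := Nat.card_congr prod_equiv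
      _ = Nat.card (X →ₗ[A] B) * Nat.card (X →ₗ[A] T) := Nat.card_prod _ _
  have hpos : 0 < Nat.card (X →ₗ[A] T) := by
    haveI : Nonempty (X →ₗ[A] T) := ⟨0⟩
    exact Nat.card_pos
  exact Nat.eq_of_mul_eq_mul_right hpos key

end Lovasz
section Jacobson
universe u
variable {A : Type u} [Ring A]

/-- The Jacobson radical as the infimum of maximal left ideals. -/
private noncomputable def JacR (A : Type u) [Ring A] : Ideal A :=
  sInf {m : Ideal A | m.IsMaximal}

private lemma JacR_le_max {m : Ideal A} (hm : m.IsMaximal) : JacR A ≤ m :=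
  sInf_le hm

private lemma mem_JacR {j : A} (hj : j ∈ JacR A) {m : Ideal A} (hm : m.IsMaximal) : j ∈ m :=
  JacR_le_max hm hj

private lemma exists_left_inv_one_sub {j : A} (hj : j ∈ JacR A) : ∃ c, c * (1 - j) = 1 := by
  by_contra h
  push_neg at h
  have hne : LinearMap.range (LinearMap.toSpanSingleton A A (1 - j)) ≠ ⊤ := by
    intro htop
    have h1 : (1 : A) ∈ LinearMap.range (LinearMap.toSpanSingleton A A (1 - j)) := by
      rw [htop]; trivial
    obtain ⟨c, hc⟩ := h1
    exact h c (by simpa [smul_eq_mul] using hc)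
  obtain ⟨m, hm, hle⟩ := Ideal.exists_le_maximal _ hne
  have h1j : (1 - j) ∈ m := hle ⟨1, by simp⟩
  have hjm : j ∈ m := mem_JacR hj hm
  have : (1 : A) ∈ m := by simpa using m.add_mem h1j hjm
  exact hm.ne_top (m.eq_top_iff_one.mpr this)

private lemma isUnit_one_sub_jac {j : A} (hj : j ∈ JacR A) : IsUnit (1 - j) := by
  obtain ⟨c, hc⟩ := exists_left_inv_one_sub hj
  have hcj : c = 1 + c * j := by
    have : c - c * j = 1 := by have h := hc; rwa [mul_sub, mul_one] at h
    have := congrArg (· + c * j) this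
    simpa [sub_add_cancel] using this
  have hmem : -(c * j) ∈ JacR A := by
    exact neg_mem ((JacR A).smul_mem c hj)
  obtain ⟨d, hd⟩ := exists_left_inv_one_sub hmem
  have hdc : d * c = 1 := by
    rw [hcj]; simpa [sub_neg_eq_add] using hd
  have hdval : d = 1 - j := by
    calc d = d * (c * (1 - j)) := by rw [hc, mul_one]
    _ = (d * c) * (1 - j) := by rw [mul_assoc]
    _ = 1 - j := by rw [hdc, one_mul]
  exact ⟨⟨1 - j, c, by rw [← hdval]; exact hdc, hc⟩, rfl⟩

private lemma jac_mul_mem {j : A} (hj : j ∈ JacR A) (r : A) : j * r ∈ JacR A := by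
  rw [JacR, Submodule.mem_sInf]
  intro m hm
  by_contra hmem
  have hcoatom : IsCoatom m := Ideal.isMaximal_def.mp hm
  have hlt : m < m ⊔ LinearMap.range (LinearMap.toSpanSingleton A A (j * r)) := by
    refine left_lt_sup.mpr fun hle => hmem (hle ⟨1, by simp⟩)
  have hsup : m ⊔ LinearMap.range (LinearMap.toSpanSingleton A A (j * r)) = ⊤ :=
    hcoatom.2 _ hlt
  have h1 : (1 : A) ∈ m ⊔ LinearMap.range (LinearMap.toSpanSingleton A A (j * r)) := by
    rw [hsup]; trivial
  obtain ⟨w, hw, z, ⟨a, rfl⟩, hsum⟩ := Submodule.mem_sup.mp h1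
  -- t := a * j ∈ JacR A
  set t := a * j with ht_def
  have ht : t ∈ JacR A := (JacR A).smul_mem a hj
  have hrt : r * t ∈ JacR A := (JacR A).smul_mem r ht
  obtain ⟨u, hu⟩ := isUnit_one_sub_jac hrt
  have h1u : (1 - r * t) * ↑u⁻¹ = 1 := by rw [← hu]; exact u.mul_inv
  have h2u : (↑u⁻¹ : A) * (1 - r * t) = 1 := by rw [← hu]; exact u.inv_mul
  have key1 : (1 - t * r) * (1 + t * ↑u⁻¹ * r) = 1 + t * (((1 - r * t) * ↑u⁻¹) - 1) * r := by
    noncomm_ring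
  have key2 : (1 + t * ↑u⁻¹ * r) * (1 - t * r) = 1 + t * (((↑u⁻¹ : A) * (1 - r * t)) - 1) * r := by
    noncomm_ring
  rw [h1u] at key1
  rw [h2u] at key2
  simp only [sub_self, mul_zero, zero_mul, add_zero] at key1 key2
  have hwval : w = 1 - t * r := by
    simp only [LinearMap.toSpanSingleton_apply, smul_eq_mul] at hsum
    have : a * (j * r) = t * r := by rw [← mul_assoc]
    rw [this] at hsum
    have := congrArg (· - t * r) hsum
    simpa [add_sub_cancel_right] using this
  have hwunit : IsUnit w := by
    rw [hwval]
    exact ⟨⟨1 - t * r, 1 + t * ↑u⁻¹ * r, key1, key2⟩, rfl⟩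
  exact hm.ne_top (Ideal.eq_top_of_isUnit_mem m hw hwunit)

end Jacobson
section Semisimple
universe u
variable {A : Type u} [Ring A] [Finite A]

private lemma isSemisimple_Abar :
    IsSemisimpleModule A (A ⧸ (JacR A : Submodule A A)) := by
  classical
  haveI : Finite (Submodule A A) := Finite.of_injective _ SetLike.coe_injective
  let ι := {m : Ideal A // m.IsMaximal}
  haveI : Finite ι := Subtype.finite
  let Z : ι → Type u := fun i => A ⧸ (i.1 : Submodule A A)
  let f : (A ⧸ (JacR A : Submodule A A)) →ₗ[A] (∀ i, Z i) :=
    LinearMap.pi (fun i => (JacR A : Submodule A A).liftQ (i.1 : Submodule A A).mkQ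
      (by rw [Submodule.ker_mkQ]; exact sInf_le i.2))
  have hinj : Function.Injective f := by
    rw [← LinearMap.ker_eq_bot, eq_bot_iff]
    rintro z hz
    obtain ⟨a, rfl⟩ := Submodule.Quotient.mk_surjective _ z
    have hmem : ∀ i : ι, a ∈ (i.1 : Submodule A A) := by
      intro i
      have : f (Submodule.Quotient.mk a) = 0 := hz
      have hi := congrFun (congrArg (fun g => (g : ∀ i, Z i)) this) i
      have hi2 : f (Submodule.Quotient.mk a) i = 0 := by rw [this]; rfl
      have hi3 : ((i.1 : Submodule A A)).mkQ a = 0 := hi2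
      simpa [Submodule.Quotient.mk_eq_zero] using hi3
    have : a ∈ JacR A := by
      rw [JacR, Submodule.mem_sInf]
      intro m hm
      exact hmem ⟨m, hm⟩
    simpa [Submodule.Quotient.mk_eq_zero] using this
  haveI : ∀ i : ι, IsSimpleModule A (Z i) :=
    fun i => isSimpleModule_iff_isCoatom.mpr (Ideal.isMaximal_def.mp i.2)
  haveI hss : IsSemisimpleModule A (∀ i, Z i) := by
    apply isSemisimpleModule_of_isSemisimpleModule_submodule'
      (p := fun i => LinearMap.range (LinearMap.single A Z i))
    · intro i
      exact IsSemisimpleModule.congr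
        (LinearEquiv.ofInjective (LinearMap.single A Z i) (Pi.single_injective (M := Z) i)).symm
    · haveI : Fintype ι := Fintype.ofFinite ι
      rw [eq_top_iff]
      rintro x -
      rw [← Finset.univ_sum_single x]
      exact Submodule.sum_mem _ fun i _ => Submodule.mem_iSup_of_mem i ⟨x i, rfl⟩
  have e : (A ⧸ (JacR A : Submodule A A)) ≃ₗ[A] ↥(LinearMap.range f) :=
    LinearEquiv.ofInjective f hinj
  exact IsSemisimpleModule.congr (M := ↥(LinearMap.range f)) e

end Semisimple

section Coset
universe u
variable {A : Type u} [Ring A] [Finite A]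

open Submodule

private theorem exists_unit_in_coset {m : Ideal A} (hm : IsCoatom m) {s : A} (hs : s ∉ m) :
    ∃ u : Aˣ, (u : A) - s ∈ m := by
  classical
  have hJm : (JacR A : Submodule A A) ≤ m := JacR_le_max (Ideal.isMaximal_def.mpr hm)
  let Mb := A ⧸ (JacR A : Submodule A A)
  haveI : Finite Mb := Finite.of_surjective _ (Submodule.Quotient.mk_surjective _)
  haveI hss : IsSemisimpleModule A Mb := isSemisimple_Abar
  let q : A →ₗ[A] Mb := (JacR A : Submodule A A).mkQ
  let B : Submodule A Mb := Submodule.map q m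
  have hmemB : ∀ a : A, q a ∈ B ↔ a ∈ m := by
    intro a
    constructor
    · rintro ⟨w, hw, hqw⟩
      have hwa : w - a ∈ (JacR A : Submodule A A) := (Submodule.Quotient.eq _).mp hqw
      have := m.sub_mem hw (hJm hwa)
      simpa using this
    · intro ha; exact ⟨a, ha, rfl⟩
  have hBne : B ≠ ⊤ := by
    intro htop
    have h1 : q 1 ∈ B := by rw [htop]; trivial
    exact hm.1 ((Ideal.eq_top_iff_one m).mpr ((hmemB 1).mp h1))
  have hBco : IsCoatom B := by
    refine ⟨hBne, ?_⟩
    intro C hBC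
    obtain ⟨z, hzC, hzB⟩ := SetLike.exists_of_lt hBC
    obtain ⟨a, ha⟩ := Submodule.Quotient.mk_surjective _ z
    have haq : q a = z := ha
    have hm_lt : m < Submodule.comap q C := by
      refine lt_of_le_of_ne (fun w hw => le_of_lt hBC ((hmemB w).mpr hw)) ?_
      intro heq
      have haC : a ∈ Submodule.comap q C := by rw [Submodule.mem_comap, haq]; exact hzC
      exact hzB (haq ▸ (hmemB a).mpr (heq ▸ haC))
    have hcomap : Submodule.comap q C = ⊤ := hm.2 _ hm_lt
    rw [eq_top_iff]
    rintro z' -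
    obtain ⟨a', ha'⟩ := Submodule.Quotient.mk_surjective _ z'
    have : a' ∈ Submodule.comap q C := by rw [hcomap]; trivial
    rw [← show q a' = z' from ha']
    exact this
  have hsB : q s ∉ B := fun h => hs ((hmemB s).mp h)
  obtain ⟨T, hT⟩ := exists_isCompl B
  have h1 : q s ∈ B ⊔ T := by rw [hT.sup_eq_top]; trivial
  obtain ⟨b, hb, t, ht, hbt⟩ := Submodule.mem_sup.mp h1
  have htB : t ∉ B := fun h => hsB (by rw [← hbt]; exact B.add_mem hb h)
  have htSp : t ∈ LinearMap.range (LinearMap.toSpanSingleton A Mb t) := ⟨1, by simp⟩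
  have hSpT : LinearMap.range (LinearMap.toSpanSingleton A Mb t) ≤ T := by
    rintro _ ⟨a, rfl⟩
    simpa using T.smul_mem a ht
  have hTop : B ⊔ LinearMap.range (LinearMap.toSpanSingleton A Mb t) = ⊤ :=
    hBco.2 _ (left_lt_sup.mpr fun hle => htB (hle htSp))
  have hSpT_eq : LinearMap.range (LinearMap.toSpanSingleton A Mb t) = T := by
    have hmod := sup_inf_assoc_of_le
      (x := LinearMap.range (LinearMap.toSpanSingleton A Mb t)) B (z := T) hSpT
    rw [sup_comm _ B, hTop, top_inf_eq, hT.disjoint.eq_bot, sup_bot_eq] at hmod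
    exact hmod.symm
  have hker : (JacR A : Submodule A A) ≤ LinearMap.ker (LinearMap.toSpanSingleton A Mb t) := by
    intro j hj
    rw [LinearMap.mem_ker, LinearMap.toSpanSingleton_apply]
    obtain ⟨c, hc⟩ := Submodule.Quotient.mk_surjective _ t
    rw [← hc, ← Submodule.Quotient.mk_smul, Submodule.Quotient.mk_eq_zero, smul_eq_mul]
    exact jac_mul_mem hj c
  let ρ : Mb →ₗ[A] Mb := (JacR A : Submodule A A).liftQ (LinearMap.toSpanSingleton A Mb t) hker
  have hrange : LinearMap.range ρ = T := by
    rw [Submodule.range_liftQ]; exact hSpT_eq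
  obtain ⟨T₀, hT₀⟩ := exists_isCompl (LinearMap.ker ρ)
  have eT : (↥T) ≃ₗ[A] (↥T₀) :=
    ((LinearEquiv.ofEq _ _ hrange.symm).trans (LinearMap.quotKerEquivRange ρ).symm).trans
      (Submodule.quotientEquivOfIsCompl _ T₀ hT₀)
  obtain ⟨φ⟩ := cancel_of_prod_equiv (Submodule.prodEquivOfIsCompl B T hT)
    (Submodule.prodEquivOfIsCompl (LinearMap.ker ρ) T₀ hT₀) eT
  let pr : Mb →ₗ[A] ↥(LinearMap.ker ρ) := (LinearMap.ker ρ).linearProjOfIsCompl T₀ hT₀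
  let σ : Mb →ₗ[A] Mb := ρ + B.subtype ∘ₗ (φ : ↥(LinearMap.ker ρ) →ₗ[A] ↥B) ∘ₗ pr
  have hσinj : Function.Injective σ := by
    rw [← LinearMap.ker_eq_bot, eq_bot_iff]
    intro z hz
    have hz0 : ρ z + ↑(φ (pr z)) = 0 := hz
    have h1 : ρ z ∈ T := hrange ▸ LinearMap.mem_range_self ρ z
    have h2 : ρ z ∈ B := by
      rw [eq_neg_of_add_eq_zero_left hz0]
      exact B.neg_mem (φ (pr z)).2
    have hρz : ρ z = 0 := (Submodule.disjoint_def.mp hT.disjoint) _ h2 h1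
    have hzB₀ : z ∈ LinearMap.ker ρ := hρz
    have hφ0 : (↑(φ (pr z)) : Mb) = 0 := by rw [← hz0, hρz, zero_add]
    have hφ0' : φ (pr z) = 0 := by exact_mod_cast Subtype.ext hφ0
    have hpr0 : pr z = 0 := by
      have := φ.map_eq_zero_iff.mp hφ0'
      exact this
    have hpr : pr z = ⟨z, hzB₀⟩ := Submodule.linearProjOfIsCompl_apply_left hT₀ ⟨z, hzB₀⟩
    rw [hpr] at hpr0
    have : z = 0 := congrArg Subtype.val hpr0
    simpa using this
  have hσsurj : Function.Surjective σ := Finite.injective_iff_surjective.mp hσinj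
  obtain ⟨u₀, hu₀⟩ := Submodule.Quotient.mk_surjective _ (σ (q 1))
  have hu₀' : q u₀ = σ (q 1) := hu₀
  have hσa : ∀ a : A, σ (q a) = q (a * u₀) := by
    intro a
    have h1 : (q a : Mb) = a • q 1 := by rw [← map_smul, smul_eq_mul, mul_one]
    rw [h1, map_smul, ← hu₀']
    show a • q u₀ = q (a * u₀)
    rw [← map_smul, smul_eq_mul]
  obtain ⟨z, hz⟩ := hσsurj (q 1)
  obtain ⟨v, hv⟩ := Submodule.Quotient.mk_surjective _ z
  have hz' : q (v * u₀) = q 1 := by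
    rw [← hσa v]
    rw [show q v = z from hv]
    exact hz
  have hvu : IsUnit (v * u₀) := by
    have hmem : 1 - v * u₀ ∈ JacR A := by
      have h := (Submodule.Quotient.eq _).mp hz'
      simpa using neg_mem h
    have := isUnit_one_sub_jac hmem
    simpa [sub_sub_cancel] using this
  obtain ⟨w, hw⟩ := hvu
  have hcu : ((↑w⁻¹ : A) * v) * u₀ = 1 := by rw [mul_assoc, ← hw]; exact w.inv_mul
  have hinj : Function.Injective (fun a : A => u₀ * a) := by
    intro a b hab
    simp only at hab
    calc a = ((↑w⁻¹ * v) * u₀) * a := by rw [hcu, one_mul]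
    _ = (↑w⁻¹ * v) * (u₀ * a) := by rw [mul_assoc]
    _ = (↑w⁻¹ * v) * (u₀ * b) := by rw [hab]
    _ = ((↑w⁻¹ * v) * u₀) * b := by rw [← mul_assoc]
    _ = b := by rw [hcu, one_mul]
  obtain ⟨c, hc⟩ := Finite.injective_iff_surjective.mp hinj 1
  simp only at hc
  have hceq : c = ↑w⁻¹ * v := by
    calc c = (((↑w⁻¹ : A) * v) * u₀) * c := by rw [hcu, one_mul]
    _ = (↑w⁻¹ * v) * (u₀ * c) := by rw [mul_assoc]
    _ = ↑w⁻¹ * v := by rw [hc, mul_one]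
  refine ⟨⟨u₀, c, hc, by rw [hceq]; exact hcu⟩, ?_⟩
  show u₀ - s ∈ m
  have hρ1 : ρ (q 1) = t := by
    show LinearMap.toSpanSingleton A Mb t 1 = t
    simp
  have hqu : q u₀ = t + ↑(φ (pr (q 1))) := by
    rw [hu₀']
    show ρ (q 1) + ↑(φ (pr (q 1))) = t + ↑(φ (pr (q 1)))
    rw [hρ1]
  have hqm : q (u₀ - s) ∈ B := by
    have heq : q (u₀ - s) = (t - q s) + ↑(φ (pr (q 1))) := by
      rw [map_sub, hqu]; abel
    rw [heq]
    have h1 : t - q s ∈ B := by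
      rw [← hbt]
      simpa using B.neg_mem hb
    exact B.add_mem h1 (φ _).2
  exact (hmemB (u₀ - s)).mp hqm

end Coset



/-- A subset of a ring is a right ideal if it contains `0` and is closed under
addition and right multiplication by arbitrary ring elements. -/
def IsRightIdeal {R : Type*} [Ring R] (I : Set R) : Prop :=
  (0 : R) ∈ I ∧ (∀ a b : R, a ∈ I → b ∈ I → a + b ∈ I) ∧ ∀ a ∈ I, ∀ r : R, a * r ∈ I

/-- Let `R` be a finite Frobenius ring of order `p^r` (`p` prime) having a
minimal right ideal of size `p^s`.  Then `p^s − 1` divides `|R^×|`. -/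
theorem stmt16 (R : Type*) [Ring R] [Fintype R] (hF : IsFrobeniusRing R)
    (p r s : ℕ) (hp : p.Prime) (hcard : Fintype.card R = p ^ r)
    (I : Set R) (hI : IsRightIdeal I) (hne : I ≠ {0})
    (hmin : ∀ J : Set R, IsRightIdeal J → J ⊆ I → J = {0} ∨ J = I)
    (hs : Nat.card I = p ^ s) :
    p ^ s - 1 ∣ Nat.card Rˣ := by
  classical
  haveI : Finite R := Finite.of_fintype R
  haveI : Finite Rᵐᵒᵖ := Finite.of_equiv R MulOpposite.opEquiv
  -- the mirrored ideal, as a left submodule of the opposite ring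
  let I' : Submodule Rᵐᵒᵖ Rᵐᵒᵖ :=
    { carrier := MulOpposite.unop ⁻¹' I
      add_mem' := fun {a b} ha hb => by
        show MulOpposite.unop (a + b) ∈ I
        rw [MulOpposite.unop_add]
        exact hI.2.1 _ _ ha hb
      zero_mem' := by
        show MulOpposite.unop 0 ∈ I
        simpa using hI.1
      smul_mem' := fun c x hx => by
        show MulOpposite.unop (c * x) ∈ I
        rw [MulOpposite.unop_mul]
        exact hI.2.2 _ hx _ }
  have hmemI' : ∀ z : Rᵐᵒᵖ, z ∈ I' ↔ MulOpposite.unop z ∈ I := fun z => Iff.rfl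
  -- I' is an atom
  have hex : ∃ z, z ∈ I ∧ z ≠ 0 := by
    by_contra h
    push_neg at h
    exact hne (Set.eq_singleton_iff_unique_mem.mpr ⟨hI.1, h⟩)
  obtain ⟨x0, hx0I, hx0ne⟩ := hex
  have hAtom : IsAtom I' := by
    constructor
    · intro hbot
      have : MulOpposite.op x0 ∈ I' := hx0I
      rw [hbot] at this
      exact hx0ne (by simpa using this)
    · intro C hC
      have hCR : IsRightIdeal (MulOpposite.op ⁻¹' (C : Set Rᵐᵒᵖ)) := by
        refine ⟨?_, ?_, ?_⟩
        · show MulOpposite.op (0 : R) ∈ C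
          simpa using C.zero_mem
        · intro a b ha hb
          show MulOpposite.op (a + b) ∈ C
          rw [MulOpposite.op_add]
          exact C.add_mem ha hb
        · intro a ha r'
          show MulOpposite.op (a * r') ∈ C
          rw [MulOpposite.op_mul]
          exact C.smul_mem _ ha
      have hsub : MulOpposite.op ⁻¹' (C : Set Rᵐᵒᵖ) ⊆ I := fun z hz => le_of_lt hC hz
      rcases hmin _ hCR hsub with h0 | hIeq
      · rw [eq_bot_iff]
        intro z hz
        have : MulOpposite.unop z ∈ MulOpposite.op ⁻¹' (C : Set Rᵐᵒᵖ) := by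
          show MulOpposite.op (MulOpposite.unop z) ∈ C
          simpa using hz
        rw [h0] at this
        have : MulOpposite.unop z = 0 := this
        simpa [Submodule.mem_bot] using congrArg MulOpposite.op this
      · exfalso
        obtain ⟨z, hzI, hzC⟩ := SetLike.exists_of_lt hC
        have : MulOpposite.unop z ∈ I := hzI
        rw [← hIeq] at this
        exact hzC (by simpa using (this : MulOpposite.op (MulOpposite.unop z) ∈ C))
  -- fix a nonzero element of I'
  set x' : Rᵐᵒᵖ := MulOpposite.op x0 with hx'def
  have hx'I : x' ∈ I' := hx0I
  have hx'ne : x' ≠ 0 := by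
    rw [hx'def]
    intro h
    exact hx0ne (by simpa using congrArg MulOpposite.unop h)
  -- the cyclic module generated by x' is I'
  have hrange : LinearMap.range (LinearMap.toSpanSingleton Rᵐᵒᵖ Rᵐᵒᵖ x') = I' := by
    have hle : LinearMap.range (LinearMap.toSpanSingleton Rᵐᵒᵖ Rᵐᵒᵖ x') ≤ I' := by
      rintro _ ⟨a, rfl⟩
      simpa using I'.smul_mem a hx'I
    rcases (hAtom.le_iff.mp hle) with h0 | h
    · exfalso
      have : x' ∈ LinearMap.range (LinearMap.toSpanSingleton Rᵐᵒᵖ Rᵐᵒᵖ x') := ⟨1, by simp⟩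
      rw [h0] at this
      exact hx'ne (by simpa using this)
    · exact h
  -- the annihilator is a coatom
  have hm_co : IsCoatom (LinearMap.ker (LinearMap.toSpanSingleton Rᵐᵒᵖ Rᵐᵒᵖ x')) := by
    have e1 : (Rᵐᵒᵖ ⧸ LinearMap.ker (LinearMap.toSpanSingleton Rᵐᵒᵖ Rᵐᵒᵖ x')) ≃ₗ[Rᵐᵒᵖ] ↥I' :=
      (LinearMap.quotKerEquivRange _).trans (LinearEquiv.ofEq _ _ hrange)
    haveI : IsSimpleModule Rᵐᵒᵖ ↥I' := isSimpleModule_iff_isAtom.mpr hAtom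
    haveI : IsSimpleModule Rᵐᵒᵖ
        (Rᵐᵒᵖ ⧸ LinearMap.ker (LinearMap.toSpanSingleton Rᵐᵒᵖ Rᵐᵒᵖ x')) :=
      IsSimpleModule.congr e1
    exact isSimpleModule_iff_isCoatom.mp this
  -- units act transitively on I' \ {0}
  have horb : MulAction.orbit Rᵐᵒᵖˣ x' = (I' : Set Rᵐᵒᵖ) \ {0} := by
    ext z
    constructor
    · rintro ⟨u, rfl⟩
      refine ⟨?_, ?_⟩
      · show MulOpposite.unop ((u : Rᵐᵒᵖ) * x') ∈ I
        exact I'.smul_mem _ hx'I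
      · simp only [Set.mem_singleton_iff]
        intro h
        apply hx'ne
        have := congrArg (fun y => (u⁻¹ : Rᵐᵒᵖˣ) • y) h
        simpa using this
    · rintro ⟨hzI, hz0⟩
      simp only [Set.mem_singleton_iff] at hz0
      have hzr : z ∈ LinearMap.range (LinearMap.toSpanSingleton Rᵐᵒᵖ Rᵐᵒᵖ x') := by
        rw [hrange]; exact hzI
      obtain ⟨c0, hc0⟩ := hzr
      have hc0m : c0 ∉ LinearMap.ker (LinearMap.toSpanSingleton Rᵐᵒᵖ Rᵐᵒᵖ x') := by
        intro hmem
        rw [LinearMap.mem_ker] at hmem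
        exact hz0 (by rw [← hc0, hmem])
      obtain ⟨u, hu⟩ := exists_unit_in_coset hm_co hc0m
      have hu0 : ((u : Rᵐᵒᵖ) - c0) • x' = 0 := hu
      have : (u : Rᵐᵒᵖ) • x' = c0 • x' := by rwa [sub_smul, sub_eq_zero] at hu0
      refine ⟨u, ?_⟩
      show (u : Rᵐᵒᵖ) * x' = z
      rw [← smul_eq_mul, this, ← hc0]
      simp [LinearMap.toSpanSingleton_apply]
  -- orbit size divides the unit group order
  have hdvd : Nat.card ↥(MulAction.orbit Rᵐᵒᵖˣ x') ∣ Nat.card Rᵐᵒᵖˣ := by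
    rw [Nat.card_congr (MulAction.orbitEquivQuotientStabilizer Rᵐᵒᵖˣ x')]
    exact Dvd.intro _ (Subgroup.card_eq_card_quotient_mul_card_subgroup _).symm
  have hIcard : Nat.card ↥(I' : Set Rᵐᵒᵖ) = p ^ s := by
    rw [← hs]
    exact Nat.card_congr (Equiv.subtypeEquiv (MulOpposite.opEquiv (α := R)) fun z => Iff.rfl).symm
  have hcard_diff : Nat.card ↥((I' : Set Rᵐᵒᵖ) \ {0}) = p ^ s - 1 := by
    rw [Nat.card_coe_set_eq, Set.ncard_diff_singleton_of_mem I'.zero_mem,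
      ← Nat.card_coe_set_eq, hIcard]
  rw [horb, hcard_diff] at hdvd
  have hAR : Nat.card Rᵐᵒᵖˣ = Nat.card Rˣ :=
    Nat.card_congr ((Units.opEquiv (M := R)).toEquiv.trans (MulOpposite.opEquiv (α := Rˣ)).symm)
  rwa [hAR] at hdvd
end

section
/- Let C be a proper, regular, projective two-weight code of length n over a finite Frobenius ring R of prime power order p^s, with nonzero homogeneous weights w₁ < w₂ computed with γ = |R^×|. Then there exist integers r ≥ 0 and t > 0 with w₁ = p^r·t and w₂ = p^r·(t+1). -/
open Finset

set_option linter.unusedSectionVars false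
set_option maxHeartbeats 1600000



open Finset Polynomial in
private lemma isIntegral_of_pow_eq_one {z : ℂ} {m : ℕ} (hm : 0 < m) (h : z ^ m = 1) :
    IsIntegral ℤ z :=
  ⟨X ^ m - 1, by simpa using monic_X_pow_sub_C (1:ℤ) hm.ne', by simp [h]⟩

private lemma eq_int_of_isIntegral {x : ℚ} (h : IsIntegral ℤ (x : ℂ)) : ∃ k : ℤ, x = k := by
  have h2 : IsIntegral ℤ x := by
    rwa [show ((x:ℂ)) = algebraMap ℚ ℂ x from rfl,
      isIntegral_algebraMap_iff (algebraMap ℚ ℂ).injective] at h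
  obtain ⟨k, hk⟩ := IsIntegrallyClosed.isIntegral_iff.mp h2
  exact ⟨k, by exact_mod_cast hk.symm⟩


private lemma sum_eq_zero_of_hom {A : Type*} [AddCommGroup A] [Fintype A] [DecidableEq A]
    {f : A → ℂ} (hf : ∀ x y, f (x + y) = f x * f y)
    {T : Finset A} (hT : ∀ a ∈ T, ∀ b ∈ T, a + b ∈ T)
    {a : A} (ha : a ∈ T) (hfa : f a ≠ 1) :
    ∑ x ∈ T, f x = 0 := by
  have himg : T.image (fun b => a + b) = T :=
    Finset.eq_of_subset_of_card_le
      (by intro z hz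
          obtain ⟨b, hb, rfl⟩ := Finset.mem_image.mp hz
          exact hT a ha b hb)
      (le_of_eq (Finset.card_image_of_injective _ (add_right_injective a)).symm)
  have h2 : ∑ x ∈ T, f x = f a * ∑ x ∈ T, f x := by
    calc ∑ x ∈ T, f x = ∑ x ∈ T.image (fun b => a + b), f x := by rw [himg]
    _ = ∑ x ∈ T, f (a + x) := Finset.sum_image (by intro x _ y _ h; exact add_left_cancel h)
    _ = f a * ∑ x ∈ T, f x := by rw [Finset.mul_sum]; exact Finset.sum_congr rfl fun x _ => hf a x
  have h3 : (f a - 1) * ∑ x ∈ T, f x = 0 := by rw [sub_mul, one_mul, ← h2, sub_self]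
  rcases mul_eq_zero.mp h3 with h | h
  · exact absurd (sub_eq_zero.mp h) hfa
  · exact h

private lemma exists_char_ne_one {A : Type*} [AddCommGroup A] [Finite A]
    {a : A} (ha : a ≠ 0) : ∃ φ : AddChar A ℂ, φ a ≠ 1 := by
  have hne : NeZero ((Monoid.exponent (Multiplicative A) : ℂ)) :=
    ⟨Nat.cast_ne_zero.mpr Monoid.exponent_ne_zero_of_finite⟩
  obtain ⟨φ, hφ⟩ := CommGroup.exists_apply_ne_one_of_hasEnoughRootsOfUnity
    (Multiplicative A) ℂ (a := Multiplicative.ofAdd a) (by simpa using ha)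
  refine ⟨AddChar.toMonoidHomEquiv.symm ((Units.coeHom ℂ).comp φ), ?_⟩
  intro h
  apply hφ
  ext
  simpa using h


section RingLemmas
variable {R : Type*} [Ring R] [Fintype R] (χ : AddChar R ℂ)

private lemma char_ne_zero' (a : R) : χ a ≠ 0 := fun h => by
  have h1 : χ a * χ (-a) = 1 := by rw [← AddChar.map_add_eq_mul]; simp
  rw [h, zero_mul] at h1; exact zero_ne_one h1

private lemma char_sub_eq_one {a b : R} (h : χ a = χ b) : χ (a - b) = 1 := by
  have h1 : χ (a - b) * χ b = χ a := by rw [← AddChar.map_add_eq_mul, sub_add_cancel]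
  rw [h] at h1
  exact mul_right_cancel₀ (char_ne_zero' χ b) (by rw [h1, one_mul])

/-- left multiplication character -/
private def lCharF (r : R) : AddChar R ℂ where
  toFun x := χ (r * x)
  map_zero_eq_one' := by simp
  map_add_eq_mul' a b := by show χ (r * (a + b)) = χ (r * a) * χ (r * b); rw [mul_add]; exact χ.map_add_eq_mul _ _

private def rCharF (t : R) : AddChar R ℂ where
  toFun x := χ (x * t)
  map_zero_eq_one' := by simp
  map_add_eq_mul' a b := by show χ ((a + b) * t) = χ (a * t) * χ (b * t); rw [add_mul]; exact χ.map_add_eq_mul _ _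

@[simp] private lemma lCharF_apply (r x : R) : lCharF χ r x = χ (r * x) := rfl
@[simp] private lemma rCharF_apply (t x : R) : rCharF χ t x = χ (x * t) := rfl

variable (hχ : ∀ φ : AddChar R ℂ, ∃ r : R, ∀ x : R, φ x = χ (r * x))
include hχ

/-- kernel of χ contains no nonzero left ideal -/
private lemma hker {z : R} (h : ∀ r : R, χ (r * z) = 1) : z = 0 := by
  by_contra hz
  obtain ⟨φ, hφ⟩ := exists_char_ne_one hz
  obtain ⟨r, hr⟩ := hχ φ
  exact hφ (by rw [hr]; exact h r)

private lemma rchar_surj : Function.Surjective (rCharF χ) := by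
  classical
  have hinj : Function.Injective (rCharF χ) := by
    intro t t' h
    have h1 : ∀ x : R, χ (x * (t - t')) = 1 := by
      intro x
      have hx := DFunLike.congr_fun h x
      simp only [rCharF_apply] at hx
      have := char_sub_eq_one χ hx
      rwa [← mul_sub] at this
    have := hker χ hχ (fun r => h1 r)
    exact sub_eq_zero.mp this
  have hfin : Finite (AddChar R ℂ) := by
    apply Finite.of_surjective (lCharF χ)
    intro φ
    obtain ⟨r, hr⟩ := hχ φ
    exact ⟨r, by ext x; exact (hr x).symm⟩
  letI : Fintype (AddChar R ℂ) := Fintype.ofFinite _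
  have hcard1 : Fintype.card (AddChar R ℂ) ≤ Fintype.card R := by
    apply Fintype.card_le_of_surjective (lCharF χ)
    intro φ
    obtain ⟨r, hr⟩ := hχ φ
    exact ⟨r, by ext x; exact (hr x).symm⟩
  have hcard2 : Fintype.card R ≤ Fintype.card (AddChar R ℂ) := Fintype.card_le_of_injective _ hinj
  exact ((Fintype.bijective_iff_injective_and_card (rCharF χ)).mpr
    ⟨hinj, le_antisymm hcard2 hcard1⟩).2

/-- kernel of χ contains no nonzero right ideal -/
private lemma hkerR {z : R} (h : ∀ r : R, χ (z * r) = 1) : z = 0 := by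
  by_contra hz
  obtain ⟨φ, hφ⟩ := exists_char_ne_one hz
  obtain ⟨t, ht⟩ := rchar_surj χ hχ φ
  apply hφ
  rw [← ht]
  exact h t

end RingLemmas

section Helpers

private lemma sum_int_exists {ι : Type*} {s : Finset ι} {f : ι → ℂ}
    (h : ∀ i ∈ s, ∃ k : ℤ, f i = (k : ℂ)) : ∃ k : ℤ, ∑ i ∈ s, f i = (k : ℂ) := by
  refine Finset.sum_induction f (fun z => ∃ k : ℤ, z = (k : ℂ)) ?_ ⟨0, by simp⟩ h
  rintro a b ⟨k, rfl⟩ ⟨l, rfl⟩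
  exact ⟨k + l, by push_cast; ring⟩

end Helpers

section ClassSum
variable {R : Type*} [Ring R] [Fintype R]

private def Jset (v : R) : Set R := Set.range (fun r => v * r)

private lemma mem_Jset_self (v : R) : v ∈ Jset v := ⟨1, mul_one v⟩

private lemma Jset_mono {v v' : R} (h : v' ∈ Jset v) : Jset v' ⊆ Jset v := by
  obtain ⟨r, rfl⟩ := h
  rintro z ⟨s, rfl⟩
  exact ⟨r * s, by simp [mul_assoc]⟩

private lemma Jset_add_mem {v a b : R} (ha : a ∈ Jset v) (hb : b ∈ Jset v) : a + b ∈ Jset v := by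
  obtain ⟨r, rfl⟩ := ha; obtain ⟨s, rfl⟩ := hb
  exact ⟨r + s, by show v * (r + s) = v * r + v * s; rw [mul_add]⟩

private lemma Jset_one : Jset (1 : R) = Set.univ := by
  ext z; simp [Jset]

private lemma Jset_eq_univ_iff {v : R} : Jset v = Set.univ ↔ IsUnit v := by
  constructor
  · intro h
    have h1 : (1 : R) ∈ Jset v := h ▸ Set.mem_univ 1
    obtain ⟨r, hr⟩ := h1
    have hsurj : Function.Surjective (fun z => v * z) := by
      intro z
      refine ⟨r * z, ?_⟩
      show v * (r * z) = z
      rw [← mul_assoc]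
      have hr' : v * r = 1 := hr
      rw [hr', one_mul]
    have hinj : Function.Injective (fun z => v * z) :=
      (Finite.injective_iff_surjective).mpr hsurj
    have hr' : v * r = 1 := hr
    have hrv : r * v = 1 := by
      apply hinj
      show v * (r * v) = v * 1
      rw [← mul_assoc, hr', one_mul, mul_one]
    exact ⟨⟨v, r, hr', hrv⟩, rfl⟩
  · intro h
    obtain ⟨u, rfl⟩ := h
    ext z
    simp only [Set.mem_univ, iff_true]
    exact ⟨(↑u⁻¹ : R) * z, by show (u : R) * ((↑u⁻¹ : R) * z) = z; rw [← mul_assoc]; simp⟩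

open Classical in
private noncomputable def gsum (χ : AddChar R ℂ) (v₀ x : R) : ℂ :=
  ∑ v ∈ univ.filter (fun v => Jset v = Jset v₀), χ (x * v)

open Classical in
private lemma gsum_spec (χ : AddChar R ℂ)
    (hkR : ∀ z : R, (∀ r : R, χ (z * r) = 1) → z = 0) :
    ∀ v₀ : R,
      (∀ x y : R, (∀ s, x * s = 0 ↔ y * s = 0) → gsum χ v₀ x = gsum χ v₀ y)
      ∧ (∀ x : R, ∃ k : ℤ, gsum χ v₀ x = (k : ℂ)) := by
  suffices H : ∀ (m : ℕ) (v₀ : R), (univ.filter (· ∈ Jset v₀)).card ≤ m →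
      ((∀ x y : R, (∀ s, x * s = 0 ↔ y * s = 0) → gsum χ v₀ x = gsum χ v₀ y)
      ∧ (∀ x : R, ∃ k : ℤ, gsum χ v₀ x = (k : ℂ))) by
    intro v₀; exact H _ v₀ le_rfl
  intro m
  induction m with
  | zero =>
    intro v₀ h0
    exfalso
    have hm : v₀ ∈ univ.filter (· ∈ Jset v₀) := by
      simp only [Finset.mem_filter, Finset.mem_univ, true_and]
      exact mem_Jset_self v₀
    have := Finset.card_pos.mpr ⟨v₀, hm⟩
    omega
  | succ m IH =>
    intro v₀ hbound
    have hfull : ∀ x : R, ∑ v ∈ univ.filter (· ∈ Jset v₀), χ (x * v)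
        = if x * v₀ = 0 then ((univ.filter (· ∈ Jset v₀)).card : ℂ) else 0 := by
      intro x
      by_cases hx : x * v₀ = 0
      · rw [if_pos hx]
        rw [Finset.sum_congr rfl (fun v hv => ?_), Finset.sum_const, nsmul_eq_mul, mul_one]
        obtain ⟨r, rfl⟩ := (Finset.mem_filter.mp hv).2
        show χ (x * (v₀ * r)) = 1
        rw [← mul_assoc, hx, zero_mul, AddChar.map_zero_eq_one]
      · rw [if_neg hx]
        have hnot : ¬ ∀ v ∈ univ.filter (· ∈ Jset v₀), χ (x * v) = 1 := by
          intro hall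
          apply hx
          apply hkR
          intro r
          have hmem : v₀ * r ∈ univ.filter (· ∈ Jset v₀) := by
            simp only [Finset.mem_filter, Finset.mem_univ, true_and]
            exact ⟨r, rfl⟩
          have := hall (v₀ * r) hmem
          rwa [← mul_assoc] at this
        push_neg at hnot
        obtain ⟨a, ha, hane⟩ := hnot
        refine sum_eq_zero_of_hom (fun u u' => ?_) (fun a' ha' b hb => ?_) ha hane
        · rw [mul_add]; exact χ.map_add_eq_mul _ _
        · simp only [Finset.mem_filter, Finset.mem_univ, true_and] at ha' hb ⊢
          exact Jset_add_mem ha' hb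
    have hsplit : ∀ x : R, gsum χ v₀ x
        = (if x * v₀ = 0 then ((univ.filter (· ∈ Jset v₀)).card : ℂ) else 0)
          - ∑ v ∈ (univ.filter (· ∈ Jset v₀)).filter (fun v => ¬ Jset v = Jset v₀), χ (x * v) := by
      intro x
      rw [← hfull x]
      have h1 : univ.filter (fun v => Jset v = Jset v₀)
          = (univ.filter (· ∈ Jset v₀)).filter (fun v => Jset v = Jset v₀) := by
        ext v
        simp only [Finset.mem_filter, Finset.mem_univ, true_and]
        exact ⟨fun h => ⟨h ▸ mem_Jset_self v, h⟩, fun h => h.2⟩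
      rw [gsum, h1, eq_sub_iff_add_eq, Finset.sum_filter_add_sum_filter_not]
    set B := (univ.filter (· ∈ Jset v₀)).filter (fun v => ¬ Jset v = Jset v₀) with hB
    have hfiber : ∀ J' : Set R, J' ∈ B.image (fun v => Jset v) →
        ∃ v' : R, (univ.filter (· ∈ Jset v')).card ≤ m ∧
          ∀ x : R, ∑ v ∈ B.filter (fun v => Jset v = J'), χ (x * v) = gsum χ v' x := by
      intro J' hJ'
      obtain ⟨v', hv'B, hv'⟩ := Finset.mem_image.mp hJ'
      simp only [hB, Finset.mem_filter, Finset.mem_univ, true_and] at hv'B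
      obtain ⟨hv'J, hv'ne⟩ := hv'B
      refine ⟨v', ?_, ?_⟩
      · have hsub : univ.filter (· ∈ Jset v') ⊆ univ.filter (· ∈ Jset v₀) := by
          intro u hu
          simp only [Finset.mem_filter, Finset.mem_univ, true_and] at hu ⊢
          exact Jset_mono hv'J hu
        have hne : univ.filter (· ∈ Jset v') ≠ univ.filter (· ∈ Jset v₀) := by
          intro he
          apply hv'ne
          apply Set.Subset.antisymm (Jset_mono hv'J)
          intro u hu
          have hu2 : u ∈ univ.filter (· ∈ Jset v₀) := by
            simp only [Finset.mem_filter, Finset.mem_univ, true_and]; exact hu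
          rw [← he] at hu2
          simpa using hu2
        have := Finset.card_lt_card (lt_of_le_of_ne hsub hne)
        omega
      · intro x
        rw [gsum]
        congr 1
        ext u
        simp only [hB, Finset.mem_filter, Finset.mem_univ, true_and]
        constructor
        · rintro ⟨⟨_, _⟩, hu⟩
          rw [hu, ← hv']
        · intro hu
          have h3 : Jset u = J' := by rw [hu, hv']
          have h1 : u ∈ Jset v₀ := Jset_mono hv'J (hu ▸ mem_Jset_self u)
          have h2 : ¬ Jset u = Jset v₀ := by rw [hu]; exact hv'ne
          exact ⟨⟨h1, h2⟩, h3⟩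
    have hrest : ∀ x : R, ∑ v ∈ B, χ (x * v)
        = ∑ J' ∈ B.image (fun v => Jset v), ∑ v ∈ B.filter (fun v => Jset v = J'), χ (x * v) :=
      fun x => (Finset.sum_fiberwise_of_maps_to (fun v hv => Finset.mem_image_of_mem _ hv) _).symm
    constructor
    · intro x y hann
      rw [hsplit x, hsplit y]
      have hite : (x * v₀ = 0) = (y * v₀ = 0) := propext (hann v₀)
      rw [hite]
      congr 1
      rw [hrest x, hrest y]
      refine Finset.sum_congr rfl (fun J' hJ' => ?_)
      obtain ⟨v', hv'card, hv'eq⟩ := hfiber J' hJ'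
      rw [hv'eq x, hv'eq y]
      exact (IH v' hv'card).1 x y hann
    · intro x
      rw [hsplit x]
      have h1 : ∃ k : ℤ, (if x * v₀ = 0 then ((univ.filter (· ∈ Jset v₀)).card : ℂ) else 0) = (k:ℂ) := by
        by_cases hx : x * v₀ = 0
        · exact ⟨(univ.filter (· ∈ Jset v₀)).card, by rw [if_pos hx]; push_cast; ring⟩
        · exact ⟨0, by rw [if_neg hx]; simp⟩
      obtain ⟨k1, hk1⟩ := h1
      have h2 : ∃ k : ℤ, ∑ v ∈ B, χ (x * v) = (k:ℂ) := by
        rw [hrest x]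
        apply sum_int_exists
        intro J' hJ'
        obtain ⟨v', hv'card, hv'eq⟩ := hfiber J' hJ'
        rw [hv'eq x]
        exact (IH v' hv'card).2 x
      obtain ⟨k2, hk2⟩ := h2
      exact ⟨k1 - k2, by rw [hk1, hk2]; push_cast; ring⟩

open Classical in
private lemma gsum_one_eq (χ : AddChar R ℂ) (x : R) :
    gsum χ 1 x = ∑ v ∈ univ.filter (fun v : R => IsUnit v), χ (x * v) := by
  rw [gsum]
  apply Finset.sum_congr _ (fun _ _ => rfl)
  apply Finset.filter_congr
  intro v _
  rw [Jset_one, Jset_eq_univ_iff]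

open Classical in
private lemma units_filter_card :
    (univ.filter (fun v : R => IsUnit v)).card = Nat.card Rˣ := by
  rw [Nat.card_eq_fintype_card]
  symm
  apply Finset.card_bij (fun (u : Rˣ) _ => (u : R))
  · intro u _
    simp only [Finset.mem_filter, Finset.mem_univ, true_and]
    exact ⟨u, rfl⟩
  · intro u _ u' _ h
    exact Units.ext h
  · intro v hv
    simp only [Finset.mem_filter, Finset.mem_univ, true_and] at hv
    obtain ⟨u, hu⟩ := hv
    exact ⟨u, Finset.mem_univ u, hu⟩

open Classical in
private lemma gsum_one_zero (χ : AddChar R ℂ) : gsum χ 1 (0 : R) = (Nat.card Rˣ : ℂ) := by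
  rw [gsum_one_eq]
  rw [Finset.sum_congr rfl (fun v _ => by rw [zero_mul, AddChar.map_zero_eq_one])]
  rw [Finset.sum_const, nsmul_eq_mul, mul_one, units_filter_card]

end ClassSum


section WIdent
variable {R : Type*} [Ring R] [Fintype R]

open Classical in
private lemma w_identify (χ : AddChar R ℂ)
    (hk : ∀ z : R, (∀ r : R, χ (r * z) = 1) → z = 0)
    (hkR : ∀ z : R, (∀ r : R, χ (z * r) = 1) → z = 0)
    {w : R → ℝ} (hw : IsHomWeight R w (Nat.card Rˣ : ℝ)) :
    ∀ z : R, (w z : ℂ) = (Nat.card Rˣ : ℂ) - gsum χ 1 z := by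
  obtain ⟨hw0, hw2, hw3⟩ := hw
  have hMsum : ∀ z : R, z ≠ 0 →
      ∑ y ∈ univ.filter (fun y => y ∈ Submodule.span R ({z} : Set R)), gsum χ 1 y = 0 := by
    intro z hz
    rw [Finset.sum_congr rfl (fun y _ => gsum_one_eq χ y), Finset.sum_comm]
    apply Finset.sum_eq_zero
    intro v hv
    simp only [Finset.mem_filter, Finset.mem_univ, true_and] at hv
    have hnot : ¬ ∀ y ∈ univ.filter (fun y => y ∈ Submodule.span R ({z} : Set R)),
        χ (y * v) = 1 := by
      intro hall
      have hzv : z * v = 0 := by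
        apply hk
        intro r
        have hmem : r * z ∈ univ.filter (fun y => y ∈ Submodule.span R ({z} : Set R)) := by
          simp only [Finset.mem_filter, Finset.mem_univ, true_and]
          have := Submodule.smul_mem (Submodule.span R ({z} : Set R)) r
            (Submodule.mem_span_singleton_self z)
          rwa [smul_eq_mul] at this
        have := hall (r * z) hmem
        rwa [mul_assoc] at this
      apply hz
      obtain ⟨u, hu⟩ := hv
      subst hu
      calc z = z * ↑u * ↑u⁻¹ := (Units.mul_inv_cancel_right z u).symm
      _ = 0 := by rw [hzv, zero_mul]
    push_neg at hnot
    obtain ⟨a, ha, hane⟩ := hnot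
    refine sum_eq_zero_of_hom (fun y y' => ?_) (fun a' ha' b hb => ?_) ha hane
    · rw [add_mul]; exact χ.map_add_eq_mul _ _
    · simp only [Finset.mem_filter, Finset.mem_univ, true_and] at ha' hb ⊢
      exact Submodule.add_mem _ ha' hb
  suffices H : ∀ (m : ℕ) (z : R),
      (univ.filter (fun y => y ∈ Submodule.span R ({z} : Set R))).card ≤ m →
      (w z : ℂ) = (Nat.card Rˣ : ℂ) - gsum χ 1 z by
    intro z; exact H _ z le_rfl
  intro m
  induction m with
  | zero =>
    intro z h0
    exfalso
    have hm : z ∈ univ.filter (fun y => y ∈ Submodule.span R ({z} : Set R)) := by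
      simp only [Finset.mem_filter, Finset.mem_univ, true_and]
      exact Submodule.mem_span_singleton_self z
    have := Finset.card_pos.mpr ⟨z, hm⟩
    omega
  | succ m IH =>
    intro z hb
    by_cases hz : z = 0
    · subst hz
      rw [hw0, gsum_one_zero χ]
      simp
    · set Mf := univ.filter (fun y => y ∈ Submodule.span R ({z} : Set R)) with hMf
      have h3 := hw3 z hz
      have hconv : ∑ᶠ y ∈ (Submodule.span R ({z} : Set R) : Set R), w y = ∑ y ∈ Mf, w y := by
        rw [← finsum_mem_coe_finset]
        congr 1
        ext y
        simp [hMf]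
      have hcardM : (Nat.card (Submodule.span R ({z} : Set R)) : ℝ) = (Mf.card : ℝ) := by
        norm_cast
        rw [Nat.card_eq_fintype_card]
        exact Fintype.card_of_subtype Mf (by intro x; simp [hMf])
      rw [hconv, hcardM] at h3
      have h3c : ∑ y ∈ Mf, (w y : ℂ) = (Nat.card Rˣ : ℂ) * (Mf.card : ℂ) := by
        have := congrArg (fun r : ℝ => (r : ℂ)) h3
        push_cast at this ⊢
        simpa using this
      have hWt : ∑ y ∈ Mf, ((Nat.card Rˣ : ℂ) - gsum χ 1 y)
          = (Nat.card Rˣ : ℂ) * (Mf.card : ℂ) := by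
        rw [Finset.sum_sub_distrib, hMsum z hz, sub_zero, Finset.sum_const,
          nsmul_eq_mul, mul_comm]
      have hdiff : ∑ y ∈ Mf, ((w y : ℂ) - ((Nat.card Rˣ : ℂ) - gsum χ 1 y)) = 0 := by
        rw [Finset.sum_sub_distrib, h3c, hWt, sub_self]
      rw [← Finset.sum_filter_add_sum_filter_not Mf
        (fun y => Submodule.span R ({y} : Set R) = Submodule.span R ({z} : Set R))] at hdiff
      have hsecond : ∑ y ∈ Mf.filter
          (fun y => ¬ Submodule.span R ({y} : Set R) = Submodule.span R ({z} : Set R)),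
          ((w y : ℂ) - ((Nat.card Rˣ : ℂ) - gsum χ 1 y)) = 0 := by
        apply Finset.sum_eq_zero
        intro y hy
        simp only [hMf, Finset.mem_filter, Finset.mem_univ, true_and] at hy
        obtain ⟨hyM, hyne⟩ := hy
        have hle : Submodule.span R ({y} : Set R) ≤ Submodule.span R ({z} : Set R) :=
          (Submodule.span_singleton_le_iff_mem y _).mpr hyM
        have hlt := lt_of_le_of_ne hle hyne
        obtain ⟨u, huM, huNot⟩ := SetLike.exists_of_lt hlt
        have hsub : univ.filter (fun x => x ∈ Submodule.span R ({y} : Set R)) ⊆ Mf := by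
          intro x hx
          simp only [hMf, Finset.mem_filter, Finset.mem_univ, true_and] at hx ⊢
          exact hle hx
        have hss : univ.filter (fun x => x ∈ Submodule.span R ({y} : Set R)) ⊂ Mf := by
          refine (Finset.ssubset_iff_of_subset hsub).mpr ⟨u, ?_, ?_⟩
          · simp only [hMf, Finset.mem_filter, Finset.mem_univ, true_and]; exact huM
          · simp only [Finset.mem_filter, Finset.mem_univ, true_and]; exact huNot
        have hcardlt := Finset.card_lt_card hss
        have hIH := IH y (by omega)
        rw [hIH, sub_self]
      rw [hsecond, add_zero] at hdiff
      have hconst : ∀ y ∈ Mf.filter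
          (fun y => Submodule.span R ({y} : Set R) = Submodule.span R ({z} : Set R)),
          ((w y : ℂ) - ((Nat.card Rˣ : ℂ) - gsum χ 1 y))
          = ((w z : ℂ) - ((Nat.card Rˣ : ℂ) - gsum χ 1 z)) := by
        intro y hy
        simp only [hMf, Finset.mem_filter, Finset.mem_univ, true_and] at hy
        obtain ⟨hyM, hyspan⟩ := hy
        have hwz : w y = w z := hw2 y z hyspan
        have hann : ∀ s : R, y * s = 0 ↔ z * s = 0 := by
          intro s
          obtain ⟨a, ha⟩ := Submodule.mem_span_singleton.mp
            (hyspan ▸ Submodule.mem_span_singleton_self y)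
          obtain ⟨b, hb⟩ := Submodule.mem_span_singleton.mp
            (hyspan ▸ Submodule.mem_span_singleton_self z : z ∈ Submodule.span R ({y} : Set R))
          rw [smul_eq_mul] at ha hb
          constructor
          · intro h
            rw [← hb, mul_assoc, h, mul_zero]
          · intro h
            rw [← ha, mul_assoc, h, mul_zero]
        have hgs : gsum χ 1 y = gsum χ 1 z := (gsum_spec χ hkR 1).1 y z hann
        rw [hwz, hgs]
      rw [Finset.sum_congr rfl hconst, Finset.sum_const, nsmul_eq_mul] at hdiff
      have hzmem : z ∈ Mf.filter
          (fun y => Submodule.span R ({y} : Set R) = Submodule.span R ({z} : Set R)) := by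
        refine Finset.mem_filter.mpr ⟨?_, rfl⟩
        simp only [hMf, Finset.mem_filter, Finset.mem_univ, true_and]
        exact Submodule.mem_span_singleton_self z
      have hcardpos := Finset.card_pos.mpr ⟨z, hzmem⟩
      rcases mul_eq_zero.mp hdiff with h | h
      · exfalso
        rw [Nat.cast_eq_zero] at h
        omega
      · linear_combination h

end WIdent

/-- Let `C ≤ R^n` be a proper, regular, projective two-weight code over a
finite Frobenius ring `R` of prime power order `p^e`, with nonzero homogeneous weights
`w₁ < w₂` computed with `γ = |R^×|`.  Then there exist integers `r ≥ 0` and `t > 0` with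
`w₁ = p^r·t` and `w₂ = p^r·(t+1)`. -/
theorem stmt18 (R : Type*) [Ring R] [Fintype R]
    (hF : IsFrobeniusRing R)
    (p e : ℕ) (hp : p.Prime) (hcard : Fintype.card R = p ^ e) (w : R → ℝ) (hw : IsHomWeight R w (Nat.card Rˣ : ℝ))
    (ℓ n : ℕ) (Y : Matrix (Fin ℓ) (Fin n) R)
    (C : Submodule R (Fin n → R)) [Fintype ↥C]
    (hC : (C : Set (Fin n → R)) = Set.range fun x : Fin ℓ → R => fun j => ∑ i, x i * Y i j)
    (hreg : ∀ j : Fin n, ∀ r : R, ∃ x : Fin ℓ → R, ∑ i, x i * Y i j = r)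
    (hproj : ∀ j j' : Fin n,
      (Set.range fun r : R => fun i => Y i j * r)
        = (Set.range fun r : R => fun i => Y i j' * r) → j = j')
    (hproper : ∀ c ∈ C, wN w c = 0 → c = 0)
    (w₁ w₂ : ℝ) (hw₁pos : 0 < w₁) (hw₁₂ : w₁ < w₂)
    (htw : {x : ℝ | ∃ c ∈ C, c ≠ 0 ∧ wN w c = x} = {w₁, w₂})
    :
    ∃ r t : ℕ, 0 < t ∧
      w₁ = (p : ℝ) ^ r * t ∧ w₂ = (p : ℝ) ^ r * (t + 1) := by
  classical
  obtain ⟨χ, hχ⟩ := hF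
  have hk : ∀ z : R, (∀ r : R, χ (r * z) = 1) → z = 0 := fun z h => hker χ hχ h
  have hkR' : ∀ z : R, (∀ r : R, χ (z * r) = 1) → z = 0 := fun z h => hkerR χ hχ h
  have hrrep : ∀ φ : AddChar R ℂ, ∃ t : R, ∀ x, φ x = χ (x * t) := by
    intro φ
    obtain ⟨t, ht⟩ := rchar_surj χ hχ φ
    exact ⟨t, fun x => by rw [← ht]; rfl⟩
  have hwid : ∀ z : R, (w z : ℂ) = (Nat.card Rˣ : ℂ) - gsum χ 1 z :=
    w_identify χ hk hkR' hw
  have hwint : ∀ z : R, ∃ k : ℤ, w z = (k : ℝ) := by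
    intro z
    obtain ⟨k, hk2⟩ := (gsum_spec χ hkR' 1).2 z
    refine ⟨(Nat.card Rˣ : ℤ) - k, ?_⟩
    have h2 : ((w z : ℝ) : ℂ) = (((Nat.card Rˣ : ℤ) - k : ℤ) : ℂ) := by
      rw [hwid z, hk2]; push_cast; ring
    exact_mod_cast h2
  -- codewords achieving the two weights
  have hmem₁ : w₁ ∈ {x : ℝ | ∃ c ∈ C, c ≠ 0 ∧ wN w c = x} := by
    rw [htw]; exact Set.mem_insert _ _
  have hmem₂ : w₂ ∈ {x : ℝ | ∃ c ∈ C, c ≠ 0 ∧ wN w c = x} := by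
    rw [htw]; exact Set.mem_insert_iff.mpr (Or.inr rfl)
  obtain ⟨c₁, hc₁C, hc₁0, hc₁w⟩ := hmem₁
  obtain ⟨c₂, hc₂C, hc₂0, hc₂w⟩ := hmem₂
  -- the generator-space picture
  set G := (Fin ℓ → R) with hG
  let Ymap : G →+ (Fin n → R) :=
    AddMonoidHom.mk' (fun x => fun j => ∑ i, x i * Y i j)
      (by intro a b
          funext j
          show ∑ i, (a i + b i) * Y i j = (∑ i, a i * Y i j) + (∑ i, b i * Y i j)
          rw [← Finset.sum_add_distrib]
          exact Finset.sum_congr rfl fun i _ => add_mul _ _ _)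
  obtain ⟨x₁, hx₁⟩ : ∃ x : G, Ymap x = c₁ := by
    have hc₁C' : c₁ ∈ (C : Set (Fin n → R)) := hc₁C
    rw [hC] at hc₁C'
    obtain ⟨x, hx⟩ := hc₁C'
    exact ⟨x, hx⟩
  obtain ⟨x₂, hx₂⟩ : ∃ x : G, Ymap x = c₂ := by
    have hc₂C' : c₂ ∈ (C : Set (Fin n → R)) := hc₂C
    rw [hC] at hc₂C'
    obtain ⟨x, hx⟩ := hc₂C'
    exact ⟨x, hx⟩
  have hx1ne : Ymap x₁ ≠ 0 := by rw [hx₁]; exact hc₁0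
  have hx2ne : Ymap x₂ ≠ 0 := by rw [hx₂]; exact hc₂0
  -- characters of G
  let ec : G → G → ℂ := fun t x => χ (∑ i, x i * t i)
  have he_add_right : ∀ t x x' : G, ec t (x + x') = ec t x * ec t x' := by
    intro t x x'
    show χ (∑ i, (x i + x' i) * t i) = χ (∑ i, x i * t i) * χ (∑ i, x' i * t i)
    rw [← AddChar.map_add_eq_mul]
    congr 1
    rw [← Finset.sum_add_distrib]
    exact Finset.sum_congr rfl fun i _ => add_mul _ _ _
  have he_add_left : ∀ t t' x : G, ec (t + t') x = ec t x * ec t' x := by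
    intro t t' x
    show χ (∑ i, x i * (t i + t' i)) = χ (∑ i, x i * t i) * χ (∑ i, x i * t' i)
    rw [← AddChar.map_add_eq_mul]
    congr 1
    rw [← Finset.sum_add_distrib]
    exact Finset.sum_congr rfl fun i _ => mul_add _ _ _
  have he_zero_left : ∀ x : G, ec 0 x = 1 := by
    intro x
    show χ (∑ i, x i * (0 : G) i) = 1
    have : ∀ i, x i * (0 : G) i = 0 := fun i => mul_zero _
    rw [Finset.sum_congr rfl fun i _ => this i, Finset.sum_const, smul_zero,
      AddChar.map_zero_eq_one]
  have he_neg_inv : ∀ t x : G, ec (-t) x * ec t x = 1 := by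
    intro t x
    rw [← he_add_left, neg_add_cancel, he_zero_left]
  have he_neg : ∀ t x : G, ec (-t) x = ec t (-x) := by
    intro t x
    show χ (∑ i, x i * (-t) i) = χ (∑ i, (-x) i * t i)
    congr 1
    refine Finset.sum_congr rfl fun i _ => ?_
    show x i * (-(t i)) = (-(x i)) * t i
    rw [mul_neg, neg_mul]
  have hOrth : ∀ t : G, t ≠ 0 → ∑ x : G, ec t x = 0 := by
    intro t ht
    have hex : ∃ i, t i ≠ 0 := by
      by_contra h
      push_neg at h
      exact ht (funext h)
    obtain ⟨i₀, hi₀⟩ := hex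
    have hex2 : ¬ ∀ r : R, χ (r * t i₀) = 1 := fun hall => hi₀ (hk _ hall)
    push_neg at hex2
    obtain ⟨r, hr⟩ := hex2
    have hne : ec t (Pi.single i₀ r) ≠ 1 := by
      have hsum : (∑ i, (Pi.single i₀ r : G) i * t i) = r * t i₀ := by
        rw [Finset.sum_eq_single i₀]
        · rw [Pi.single_eq_same]
        · intro i _ hne'
          rw [Pi.single_eq_of_ne hne', zero_mul]
        · intro h
          exact absurd (Finset.mem_univ i₀) h
      show χ (∑ i, (Pi.single i₀ r : G) i * t i) ≠ 1
      rw [hsum]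
      exact hr
    exact sum_eq_zero_of_hom (fun x y => he_add_right t x y)
      (fun a _ b _ => Finset.mem_univ _) (Finset.mem_univ (Pi.single i₀ r)) hne

  -- weight function on G and its Fourier expansion
  let F : G → ℝ := fun x => wN w (Ymap x)
  have hFx₁ : F x₁ = w₁ := by show wN w (Ymap x₁) = w₁; rw [hx₁]; exact hc₁w
  have hFx₂ : F x₂ = w₂ := by show wN w (Ymap x₂) = w₂; rw [hx₂]; exact hc₂w
  let γc : ℂ := (Nat.card Rˣ : ℂ)
  let colv : Fin n → R → G := fun j v => fun i => Y i j * v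
  have hcolv_e : ∀ (j : Fin n) (v : R) (x : G), ec (colv j v) x = χ ((Ymap x j) * v) := by
    intro j v x
    show χ (∑ i, x i * (Y i j * v)) = χ ((∑ i, x i * Y i j) * v)
    congr 1
    rw [Finset.sum_mul]
    exact Finset.sum_congr rfl fun i _ => (mul_assoc _ _ _).symm
  let UF : Finset R := univ.filter (fun v : R => IsUnit v)
  let P : Finset (Fin n × R) := univ ×ˢ UF
  have hFc : ∀ x : G, ((F x : ℝ) : ℂ)
      = (n : ℂ) * γc - ∑ jv ∈ P, ec (colv jv.1 jv.2) x := by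
    intro x
    have h1 : ((F x : ℝ) : ℂ) = ∑ j : Fin n, ((w (Ymap x j) : ℝ) : ℂ) := by
      show ((wN w (Ymap x) : ℝ) : ℂ) = _
      rw [wN]
      push_cast
      rfl
    rw [h1, Finset.sum_congr rfl (fun j _ => hwid (Ymap x j)),
      Finset.sum_sub_distrib, Finset.sum_const, card_univ, Fintype.card_fin, nsmul_eq_mul]
    congr 1
    rw [Finset.sum_product]
    refine Finset.sum_congr rfl fun j _ => ?_
    rw [gsum_one_eq]
    exact Finset.sum_congr rfl fun v _ => (hcolv_e j v x).symm
  -- the Fourier coefficients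
  let A : G → ℂ := fun t => ∑ x : G, (F x : ℂ) * ec (-t) x
  let Mc : G → ℕ := fun t => ((P.filter (fun jv : Fin n × R => colv jv.1 jv.2 = t)).card)
  have hA1 : ∀ t : G, t ≠ 0 → A t = -(Fintype.card G : ℂ) * (Mc t : ℂ) := by
    intro t ht
    show ∑ x : G, (F x : ℂ) * ec (-t) x = _
    have hstep : ∀ x : G, (F x : ℂ) * ec (-t) x
        = (n : ℂ) * γc * ec (-t) x - ∑ jv ∈ P, ec (colv jv.1 jv.2 + (-t)) x := by
      intro x
      rw [hFc x, sub_mul, Finset.sum_mul]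
      congr 1
      exact Finset.sum_congr rfl fun jv _ => (he_add_left _ _ _).symm
    rw [Finset.sum_congr rfl fun x _ => hstep x, Finset.sum_sub_distrib,
      ← Finset.mul_sum, hOrth (-t) (neg_ne_zero.mpr ht), mul_zero, Finset.sum_comm]
    have hinner : ∀ jv ∈ P, ∑ x : G, ec (colv jv.1 jv.2 + (-t)) x
        = if colv jv.1 jv.2 = t then (Fintype.card G : ℂ) else 0 := by
      intro jv _
      by_cases hc : colv jv.1 jv.2 = t
      · rw [if_pos hc, hc, add_neg_cancel]
        rw [Finset.sum_congr rfl fun x _ => he_zero_left x, Finset.sum_const, card_univ,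
          nsmul_eq_mul, mul_one]
      · rw [if_neg hc]
        apply hOrth
        intro hzero
        exact hc (by rwa [add_neg_eq_zero] at hzero)
    rw [Finset.sum_congr rfl hinner, ← Finset.sum_filter, Finset.sum_const, nsmul_eq_mul]
    push_cast
    ring

  -- projectivity: at most one pair yields each character
  have hMle1 : ∀ t : G, Mc t ≤ 1 := by
    intro t
    apply Finset.card_le_one.mpr
    intro a ha b hb
    simp only [Mc, P, UF, Finset.mem_filter, Finset.mem_product, Finset.mem_univ, true_and] at ha hb
    obtain ⟨hau, hacol⟩ := ha
    obtain ⟨hbu, hbcol⟩ := hb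
    have hcol : ∀ i, Y i a.1 * a.2 = Y i b.1 * b.2 := by
      intro i
      have := congrFun (hacol.trans hbcol.symm) i
      exact this
    by_cases hjj : a.1 = b.1
    · -- same column: units must agree
      have hsub : ∀ i, Y i a.1 * (a.2 - b.2) = 0 := by
        intro i
        rw [mul_sub, sub_eq_zero]
        rw [hjj] at hcol ⊢
        exact hcol i
      obtain ⟨x, hx⟩ := hreg a.1 1
      have : a.2 - b.2 = 0 := by
        calc a.2 - b.2 = 1 * (a.2 - b.2) := (one_mul _).symm
        _ = (∑ i, x i * Y i a.1) * (a.2 - b.2) := by rw [hx]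
        _ = ∑ i, x i * (Y i a.1 * (a.2 - b.2)) := by
            rw [Finset.sum_mul]
            exact Finset.sum_congr rfl fun i _ => mul_assoc _ _ _
        _ = 0 := by
            rw [Finset.sum_congr rfl fun i _ => by rw [hsub i, mul_zero]]
            exact Finset.sum_const_zero
      have h2 : a.2 = b.2 := sub_eq_zero.mp this
      exact Prod.ext hjj h2
    · exfalso
      apply hjj
      apply hproj a.1 b.1
      obtain ⟨u, hu⟩ := hau
      obtain ⟨u', hu'⟩ := hbu
      ext c
      constructor
      · rintro ⟨r, rfl⟩
        refine ⟨(b.2 * ((↑u⁻¹ : R) * r)), ?_⟩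
        funext i
        show Y i b.1 * (b.2 * ((↑u⁻¹ : R) * r)) = Y i a.1 * r
        have h1 : a.2 * (↑u⁻¹ : R) = 1 := by rw [← hu]; exact u.mul_inv
        rw [← mul_assoc, ← hcol i, mul_assoc, ← mul_assoc a.2, h1, one_mul]
      · rintro ⟨r, rfl⟩
        refine ⟨(a.2 * ((↑u'⁻¹ : R) * r)), ?_⟩
        funext i
        show Y i a.1 * (a.2 * ((↑u'⁻¹ : R) * r)) = Y i b.1 * r
        have h1 : b.2 * (↑u'⁻¹ : R) = 1 := by rw [← hu']; exact u'.mul_inv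
        rw [← mul_assoc, hcol i, mul_assoc, ← mul_assoc b.2, h1, one_mul]
  -- trichotomy of G
  have hwN0 : wN w (0 : Fin n → R) = 0 := by
    rw [wN]
    rw [Finset.sum_congr rfl fun j _ => (by rw [Pi.zero_apply, hw.1] : w ((0 : Fin n → R) j) = 0)]
    exact Finset.sum_const_zero
  have hF0 : ∀ x : G, Ymap x = 0 → F x = 0 := by
    intro x hx
    show wN w (Ymap x) = 0
    rw [hx, hwN0]
  have hFcases : ∀ x : G, Ymap x ≠ 0 → F x = w₁ ∨ F x = w₂ := by
    intro x hx
    have hmemC : Ymap x ∈ C := by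
      rw [← SetLike.mem_coe, hC]
      exact ⟨x, rfl⟩
    have hmem : F x ∈ ({w₁, w₂} : Set ℝ) := by
      rw [← htw]
      exact ⟨Ymap x, hmemC, hx, rfl⟩
    simpa using hmem
  let Hf : Finset G := univ.filter (fun x : G => Ymap x = 0)
  let D1 : Finset G := univ.filter (fun x : G => Ymap x ≠ 0 ∧ F x = w₁)
  let D2 : Finset G := univ.filter (fun x : G => Ymap x ≠ 0 ∧ F x = w₂)
  have hsplit3 : ∀ g : G → ℂ,
      ∑ x : G, g x = ∑ x ∈ Hf, g x + (∑ x ∈ D1, g x + ∑ x ∈ D2, g x) := by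
    intro g
    rw [← Finset.sum_filter_add_sum_filter_not univ (fun x : G => Ymap x = 0) g]
    congr 1
    rw [← Finset.sum_filter_add_sum_filter_not (univ.filter (fun x : G => ¬ Ymap x = 0))
      (fun x : G => F x = w₁) g]
    congr 1
    · rw [Finset.filter_filter]
    · rw [Finset.filter_filter]
      apply Finset.sum_congr _ (fun _ _ => rfl)
      apply Finset.filter_congr
      intro x _
      constructor
      · rintro ⟨h1, h2⟩
        exact ⟨h1, (hFcases x h1).resolve_left h2⟩
      · rintro ⟨h1, h2⟩
        refine ⟨h1, ?_⟩
        rw [h2]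
        exact (ne_of_lt hw₁₂).symm
  -- quotient by the kernel
  let Hsub : AddSubgroup G := Ymap.ker
  let Q := G ⧸ Hsub
  have hmkout : ∀ qq : Q, (QuotientAddGroup.mk qq.out : Q) = qq := fun qq => QuotientAddGroup.out_eq' qq
  have hmkeq : ∀ x y : G, (QuotientAddGroup.mk x : Q) = QuotientAddGroup.mk y ↔ Ymap x = Ymap y := by
    intro x y
    rw [QuotientAddGroup.eq]
    constructor
    · intro hmem
      have h0 : Ymap (-x + y) = 0 := hmem
      rw [map_add, map_neg] at h0
      have := neg_add_eq_zero.mp h0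
      exact this
    · intro hxy
      show Ymap (-x + y) = 0
      rw [map_add, map_neg, hxy, neg_add_cancel]
  have hfibercard : ∀ qq : Q,
      (univ.filter (fun x : G => (QuotientAddGroup.mk x : Q) = qq)).card = Nat.card Hsub := by
    intro qq
    have hbij : (univ.filter (fun x : G => (QuotientAddGroup.mk x : Q) = qq)).card
        = (univ.filter (fun h : G => h ∈ Hsub)).card := by
      apply Finset.card_bij (fun x _ => -qq.out + x)
      · intro x hx
        simp only [Finset.mem_filter, Finset.mem_univ, true_and] at hx ⊢
        rw [AddMonoidHom.mem_ker]
        show Ymap (-qq.out + x) = 0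
        rw [map_add, map_neg]
        have := (hmkeq qq.out x).mp (by rw [hmkout qq, hx])
        rw [this, neg_add_cancel]
      · intro a _ b _ hab
        exact add_left_cancel hab
      · intro h hh
        simp only [Finset.mem_filter, Finset.mem_univ, true_and] at hh
        refine ⟨qq.out + h, ?_, by rw [neg_add_cancel_left]⟩
        simp only [Finset.mem_filter, Finset.mem_univ, true_and]
        have h0 : Ymap h = 0 := hh
        have hstep : (QuotientAddGroup.mk (qq.out + h) : Q) = QuotientAddGroup.mk qq.out := by
          apply (hmkeq _ _).mpr
          rw [map_add, h0, add_zero]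
        rw [hstep, hmkout qq]
    rw [hbij, Nat.card_eq_fintype_card]
    exact (Fintype.card_of_subtype _ (by intro x; simp)).symm
  have hFcoset : ∀ x y : G, (QuotientAddGroup.mk x : Q) = QuotientAddGroup.mk y → F x = F y := by
    intro x y hxy
    show wN w (Ymap x) = wN w (Ymap y)
    rw [(hmkeq x y).mp hxy]
  -- the subgroup S of characters trivial on the kernel
  let Sf : Finset G := univ.filter (fun t : G => ∀ x : G, Ymap x = 0 → ec t x = 1)
  have hS0 : (0 : G) ∈ Sf := by
    simp only [Sf, Finset.mem_filter, Finset.mem_univ, true_and]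
    exact fun x _ => he_zero_left x
  have hSmem : ∀ t ∈ Sf, ∀ x : G, Ymap x = 0 → ec t x = 1 := by
    intro t ht
    simpa only [Sf, Finset.mem_filter, Finset.mem_univ, true_and] using ht
  have hSadd : ∀ a ∈ Sf, ∀ b ∈ Sf, a + b ∈ Sf := by
    intro a ha b hb
    simp only [Sf, Finset.mem_filter, Finset.mem_univ, true_and]
    intro x hx
    rw [he_add_left, hSmem a ha x hx, hSmem b hb x hx, mul_one]
  have hSneg : ∀ t ∈ Sf, -t ∈ Sf := by
    intro t ht
    simp only [Sf, Finset.mem_filter, Finset.mem_univ, true_and]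
    intro x hx
    have := he_neg_inv t x
    rw [hSmem t ht x hx, mul_one] at this
    exact this
  have he_coset : ∀ t ∈ Sf, ∀ x y : G,
      (QuotientAddGroup.mk x : Q) = QuotientAddGroup.mk y → ec t x = ec t y := by
    intro t ht x y hxy
    have hmem : Ymap (-x + y) = 0 := QuotientAddGroup.eq.mp hxy
    have h1 : ec t (-x + y) = 1 := hSmem t ht _ hmem
    have h2 : ec t y = ec t x * ec t (-x + y) := by
      rw [← he_add_right, add_neg_cancel_left]
    rw [h2, h1, mul_one]
  have hSsep : ∀ z : G, Ymap z ≠ 0 → ∃ t ∈ Sf, ec t z ≠ 1 := by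
    intro z hz
    have hexj : ∃ j, Ymap z j ≠ 0 := by
      by_contra hcon
      push_neg at hcon
      exact hz (funext hcon)
    obtain ⟨j, hj⟩ := hexj
    obtain ⟨φ, hφ⟩ := exists_char_ne_one hj
    obtain ⟨τ, hτ⟩ := hrrep φ
    refine ⟨colv j τ, ?_, ?_⟩
    · simp only [Sf, Finset.mem_filter, Finset.mem_univ, true_and]
      intro x hx
      rw [hcolv_e, hx]
      show χ ((0 : Fin n → R) j * τ) = 1
      rw [Pi.zero_apply, zero_mul, AddChar.map_zero_eq_one]
    · rw [hcolv_e, ← hτ]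
      exact hφ
  have hSsum : ∀ z : G, ∑ t ∈ Sf, ec t z = if Ymap z = 0 then (Sf.card : ℂ) else 0 := by
    intro z
    by_cases hz : Ymap z = 0
    · rw [if_pos hz]
      rw [Finset.sum_congr rfl fun t ht => hSmem t ht z hz, Finset.sum_const, nsmul_eq_mul,
        mul_one]
    · rw [if_neg hz]
      obtain ⟨t₀, ht₀S, ht₀⟩ := hSsep z hz
      exact sum_eq_zero_of_hom (fun a b => he_add_left a b z) hSadd ht₀S ht₀

  -- main linear equations for t ∈ Sf, t ≠ 0
  have hHfsum : ∀ t ∈ Sf, ∑ x ∈ Hf, ec (-t) x = (Hf.card : ℂ) := by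
    intro t ht
    rw [Finset.sum_congr rfl (fun x hx => ?_), Finset.sum_const, nsmul_eq_mul, mul_one]
    have hx0 : Ymap x = 0 := by
      simpa only [Hf, Finset.mem_filter, Finset.mem_univ, true_and] using hx
    exact hSmem (-t) (hSneg t ht) x hx0
  have hE1 : ∀ t ∈ Sf, t ≠ 0 →
      ∑ x ∈ D1, ec (-t) x + ∑ x ∈ D2, ec (-t) x = -(Hf.card : ℂ) := by
    intro t ht htne
    have h0 : ∑ x : G, ec (-t) x = 0 := hOrth (-t) (neg_ne_zero.mpr htne)
    rw [hsplit3 (fun x => ec (-t) x), hHfsum t ht] at h0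
    linear_combination h0
  have hE2 : ∀ t ∈ Sf, t ≠ 0 →
      (w₁ : ℂ) * ∑ x ∈ D1, ec (-t) x + (w₂ : ℂ) * ∑ x ∈ D2, ec (-t) x
        = -(Fintype.card G : ℂ) * (Mc t : ℂ) := by
    intro t ht htne
    have hAt := hA1 t htne
    have hsum : A t = ∑ x ∈ Hf, (F x : ℂ) * ec (-t) x
        + (∑ x ∈ D1, (F x : ℂ) * ec (-t) x + ∑ x ∈ D2, (F x : ℂ) * ec (-t) x) :=
      hsplit3 (fun x => (F x : ℂ) * ec (-t) x)
    have hHf0 : ∑ x ∈ Hf, (F x : ℂ) * ec (-t) x = 0 := by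
      apply Finset.sum_eq_zero
      intro x hx
      have hx0 : Ymap x = 0 := by
        simpa only [Hf, Finset.mem_filter, Finset.mem_univ, true_and] using hx
      rw [hF0 x hx0]
      simp
    have hD1w : ∑ x ∈ D1, (F x : ℂ) * ec (-t) x = (w₁ : ℂ) * ∑ x ∈ D1, ec (-t) x := by
      rw [Finset.mul_sum]
      refine Finset.sum_congr rfl fun x hx => ?_
      have hxw : F x = w₁ := by
        simpa only [D1, Finset.mem_filter, Finset.mem_univ, true_and] using
          (Finset.mem_filter.mp hx).2.2
      rw [hxw]
    have hD2w : ∑ x ∈ D2, (F x : ℂ) * ec (-t) x = (w₂ : ℂ) * ∑ x ∈ D2, ec (-t) x := by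
      rw [Finset.mul_sum]
      refine Finset.sum_congr rfl fun x hx => ?_
      have hxw : F x = w₂ := (Finset.mem_filter.mp hx).2.2
      rw [hxw]
    rw [hsum, hHf0, zero_add, hD1w, hD2w] at hAt
    exact hAt
  have hKey : ∀ t ∈ Sf, t ≠ 0 →
      ((w₂ : ℂ) - (w₁ : ℂ)) * ∑ x ∈ D1, ec (-t) x
        = (Fintype.card G : ℂ) * (Mc t : ℂ) - (w₂ : ℂ) * (Hf.card : ℂ) := by
    intro t ht htne
    have h1 := hE1 t ht htne
    have h2 := hE2 t ht htne
    linear_combination (w₂ : ℂ) * h1 - h2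
  -- factor out the kernel from the D1 sum
  let Tq : Finset Q := univ.filter (fun qq : Q => Ymap qq.out ≠ 0 ∧ F qq.out = w₁)
  let σ : G → ℂ := fun t => ∑ qq ∈ Tq, ec (-t) qq.out
  have hLfact : ∀ t ∈ Sf, ∑ x ∈ D1, ec (-t) x = (Nat.card Hsub : ℂ) * σ t := by
    intro t ht
    rw [← Finset.sum_fiberwise_of_maps_to
      (g := fun x : G => (QuotientAddGroup.mk x : Q)) (t := (univ : Finset Q))
      (fun x _ => Finset.mem_univ _) (fun x => ec (-t) x)]
    have hinner : ∀ qq : Q, ∑ x ∈ D1.filter (fun x => (QuotientAddGroup.mk x : Q) = qq), ec (-t) x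
        = if Ymap qq.out ≠ 0 ∧ F qq.out = w₁ then (Nat.card Hsub : ℂ) * ec (-t) qq.out else 0 := by
      intro qq
      by_cases hqq : Ymap qq.out ≠ 0 ∧ F qq.out = w₁
      · rw [if_pos hqq]
        have hfeq : D1.filter (fun x => (QuotientAddGroup.mk x : Q) = qq)
            = univ.filter (fun x : G => (QuotientAddGroup.mk x : Q) = qq) := by
          ext x
          simp only [D1, Finset.filter_filter, Finset.mem_filter, Finset.mem_univ, true_and]
          constructor
          · rintro ⟨_, hmk⟩
            exact hmk
          · intro hmk
            have hYeq : Ymap x = Ymap qq.out := (hmkeq _ _).mp (by rw [hmk, hmkout qq])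
            have hFeq : F x = F qq.out := by
              show wN w (Ymap x) = wN w (Ymap qq.out)
              rw [hYeq]
            exact ⟨⟨by rw [hYeq]; exact hqq.1, by rw [hFeq]; exact hqq.2⟩, hmk⟩
        rw [hfeq]
        rw [Finset.sum_congr rfl (fun x hx => ?_), Finset.sum_const, nsmul_eq_mul, hfibercard qq]
        apply he_coset (-t) (hSneg t ht)
        rw [(Finset.mem_filter.mp hx).2, hmkout qq]
      · rw [if_neg hqq]
        apply Finset.sum_eq_zero
        intro x hx
        exfalso
        apply hqq
        simp only [D1, Finset.filter_filter, Finset.mem_filter, Finset.mem_univ, true_and] at hx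
        obtain ⟨⟨hxne, hxw⟩, hmk⟩ := hx
        have hYeq : Ymap x = Ymap qq.out := (hmkeq _ _).mp (by rw [hmk, hmkout qq])
        have hFeq : F x = F qq.out := by
          show wN w (Ymap x) = wN w (Ymap qq.out)
          rw [hYeq]
        exact ⟨by rw [← hYeq]; exact hxne, by rw [← hFeq]; exact hxw⟩
    rw [Finset.sum_congr rfl (fun qq _ => hinner qq), ← Finset.sum_filter, Finset.mul_sum]
  -- σ is an algebraic integer
  have hroot : ∀ (t x : G), (ec t x) ^ (Fintype.card R) = 1 := by
    intro t x
    show (χ (∑ i, x i * t i)) ^ (Fintype.card R) = 1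
    rw [← AddChar.map_nsmul_eq_pow, card_nsmul_eq_zero, AddChar.map_zero_eq_one]
  have hσint : ∀ t : G, IsIntegral ℤ (σ t) := by
    intro t
    have : σ t ∈ integralClosure ℤ ℂ := by
      apply Subalgebra.sum_mem
      intro qq _
      exact isIntegral_of_pow_eq_one Fintype.card_pos (hroot (-t) qq.out)
    exact this

  -- the distinguished nonzero element of S with Mc = 1
  obtain ⟨j₀, hj₀⟩ : ∃ j, Ymap x₁ j ≠ 0 := by
    by_contra hcon
    push_neg at hcon
    exact hx1ne (funext hcon)
  have ht₁S : colv j₀ 1 ∈ Sf := by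
    simp only [Sf, Finset.mem_filter, Finset.mem_univ, true_and]
    intro x hx
    rw [hcolv_e, hx]
    show χ ((0 : Fin n → R) j₀ * 1) = 1
    rw [Pi.zero_apply, zero_mul, AddChar.map_zero_eq_one]
  have ht₁ne : colv j₀ 1 ≠ 0 := by
    intro h0
    have hY0 : ∀ i, Y i j₀ = 0 := by
      intro i
      have h1 := congrFun h0 i
      rw [show colv j₀ 1 i = Y i j₀ * 1 from rfl, mul_one] at h1
      exact h1
    obtain ⟨x, hx⟩ := hreg j₀ 1
    rw [Finset.sum_congr rfl (fun i _ => by rw [hY0 i, mul_zero]), Finset.sum_const_zero] at hx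
    have hsub : Subsingleton R := subsingleton_of_zero_eq_one hx
    exact hc₁0 (funext fun j => Subsingleton.elim _ _)
  have hMct₁ : Mc (colv j₀ 1) = 1 := by
    apply le_antisymm (hMle1 _)
    apply Finset.card_pos.mpr
    refine ⟨(j₀, 1), ?_⟩
    simp only [Mc, P, UF, Finset.mem_filter, Finset.mem_product, Finset.mem_univ, true_and]
    exact ⟨isUnit_one, trivial⟩
  -- existence of a nonzero element of S with Mc = 0
  have ht₀ex : ∃ t₀, t₀ ∈ Sf ∧ t₀ ≠ 0 ∧ Mc t₀ = 0 := by
    by_contra hcon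
    push_neg at hcon
    have hMone : ∀ t ∈ Sf, t ≠ 0 → (Mc t : ℂ) = 1 := by
      intro t ht htne
      have h2 := hcon t ht htne
      have h3 : Mc t = 1 := le_antisymm (hMle1 t) (Nat.one_le_iff_ne_zero.mpr h2)
      rw [h3, Nat.cast_one]
    have hpt : ∀ (t x z : G), ec (-t) x * ec t z = ec t (z - x) := by
      intro t x z
      rw [he_neg t x, ← he_add_right]
      congr 1
      abel
    have hW1 : ∀ z : G, Ymap z ≠ 0 →
        ∑ t ∈ Sf, A t * ec t z = (Sf.card : ℂ) * ((Nat.card Hsub : ℂ) * (F z : ℂ)) := by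
      intro z hz
      have hc1 : ∑ t ∈ Sf, A t * ec t z
          = ∑ t ∈ Sf, ∑ x : G, (F x : ℂ) * ec (-t) x * ec t z := by
        refine Finset.sum_congr rfl fun t _ => ?_
        show (∑ x : G, (F x : ℂ) * ec (-t) x) * ec t z = _
        rw [Finset.sum_mul]
      have hc2 : ∑ t ∈ Sf, ∑ x : G, (F x : ℂ) * ec (-t) x * ec t z
          = ∑ x : G, ∑ t ∈ Sf, (F x : ℂ) * ec t (z - x) := by
        rw [Finset.sum_comm]
        exact Finset.sum_congr rfl fun x _ => Finset.sum_congr rfl fun t _ =>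
          by rw [mul_assoc, hpt t x z]
      have hc3 : ∑ x : G, ∑ t ∈ Sf, (F x : ℂ) * ec t (z - x)
          = ∑ x : G, (F x : ℂ) * (if Ymap x = Ymap z then (Sf.card : ℂ) else 0) := by
        refine Finset.sum_congr rfl fun x _ => ?_
        rw [← Finset.mul_sum, hSsum (z - x)]
        congr 1
        apply if_congr ?_ rfl rfl
        rw [map_sub, sub_eq_zero]
        exact eq_comm
      have hc4 : ∑ x : G, (F x : ℂ) * (if Ymap x = Ymap z then (Sf.card : ℂ) else 0)
          = ∑ x ∈ univ.filter (fun x : G => Ymap x = Ymap z), (F z : ℂ) * (Sf.card : ℂ) := by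
        simp only [mul_ite, mul_zero]
        rw [← Finset.sum_filter]
        refine Finset.sum_congr rfl fun x hx => ?_
        have hYeq : Ymap x = Ymap z := by
          simpa only [Finset.mem_filter, Finset.mem_univ, true_and] using hx
        have hFeq : F x = F z := by
          show wN w (Ymap x) = wN w (Ymap z)
          rw [hYeq]
        rw [hFeq]
      have hc5 : (univ.filter (fun x : G => Ymap x = Ymap z)).card = Nat.card Hsub := by
        rw [← hfibercard (QuotientAddGroup.mk z : Q)]
        congr 1
        apply Finset.filter_congr
        intro x _
        exact ⟨fun h => (hmkeq x z).mpr h, fun h => (hmkeq x z).mp h⟩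
      rw [hc1, hc2, hc3, hc4, Finset.sum_const, hc5, nsmul_eq_mul]
      ring
    have hW2 : ∀ z : G, Ymap z ≠ 0 →
        ∑ t ∈ Sf, A t * ec t z = A 0 + (Fintype.card G : ℂ) := by
      intro z hz
      rw [← Finset.add_sum_erase _ _ hS0, he_zero_left z, mul_one]
      congr 1
      have hterm : ∀ t ∈ Sf.erase 0, A t * ec t z = -(Fintype.card G : ℂ) * ec t z := by
        intro t ht
        obtain ⟨htne, htS⟩ := Finset.mem_erase.mp ht
        rw [hA1 t htne, hMone t htS htne, mul_one]
      rw [Finset.sum_congr rfl hterm, ← Finset.mul_sum,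
        Finset.sum_erase_eq_sub hS0, hSsum z, if_neg hz, he_zero_left z]
      ring
    have e1 := (hW1 x₁ hx1ne).symm.trans (hW2 x₁ hx1ne)
    have e2 := (hW1 x₂ hx2ne).symm.trans (hW2 x₂ hx2ne)
    rw [hFx₁] at e1
    rw [hFx₂] at e2
    have heq : (Sf.card : ℂ) * ((Nat.card Hsub : ℂ) * (w₁ : ℂ))
        = (Sf.card : ℂ) * ((Nat.card Hsub : ℂ) * (w₂ : ℂ)) := by
      rw [e1, e2]
    have hSne : (Sf.card : ℂ) ≠ 0 :=
      Nat.cast_ne_zero.mpr (Finset.card_pos.mpr ⟨0, hS0⟩).ne'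
    have hHne : (Nat.card Hsub : ℂ) ≠ 0 := by
      have : 0 < Nat.card Hsub := Nat.card_pos
      exact Nat.cast_ne_zero.mpr this.ne'
    have hw12 : (w₁ : ℂ) = (w₂ : ℂ) :=
      mul_left_cancel₀ hHne (mul_left_cancel₀ hSne heq)
    exact (ne_of_lt hw₁₂) (by exact_mod_cast hw12)
  obtain ⟨t₀, ht₀S, ht₀ne, hMct₀⟩ := ht₀ex

  -- card bookkeeping
  have hHfcard : Hf.card = Nat.card Hsub := by
    rw [← hfibercard (0 : Q)]
    congr 1
    apply Finset.filter_congr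
    intro x _
    constructor
    · intro h
      rw [QuotientAddGroup.eq_zero_iff]
      exact h
    · intro h
      exact (QuotientAddGroup.eq_zero_iff x).mp h
  have hHne : (Nat.card Hsub : ℂ) ≠ 0 := by
    have : 0 < Nat.card Hsub := Nat.card_pos
    exact Nat.cast_ne_zero.mpr this.ne'
  have hGcard : (Fintype.card G : ℂ) = (Nat.card Hsub : ℂ) * (Nat.card Q : ℂ) := by
    rw [← Nat.card_eq_fintype_card,
      AddSubgroup.card_eq_card_quotient_mul_card_addSubgroup Hsub]
    push_cast
    ring
  have hσeq : ∀ t ∈ Sf, t ≠ 0 →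
      ((w₂ : ℂ) - (w₁ : ℂ)) * σ t = (Nat.card Q : ℂ) * (Mc t : ℂ) - (w₂ : ℂ) := by
    intro t ht htne
    have h1 := hKey t ht htne
    rw [hLfact t ht, hHfcard, hGcard] at h1
    apply mul_left_cancel₀ hHne
    linear_combination h1
  -- integrality of the two weights
  obtain ⟨iw, hiw⟩ := Classical.axiom_of_choice hwint
  obtain ⟨W₁, hW₁⟩ : ∃ k : ℤ, w₁ = (k : ℝ) := by
    refine ⟨∑ j : Fin n, iw (Ymap x₁ j), ?_⟩
    rw [← hFx₁]
    show wN w (Ymap x₁) = _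
    rw [wN]
    push_cast
    exact Finset.sum_congr rfl fun j _ => hiw (Ymap x₁ j)
  obtain ⟨W₂, hW₂⟩ : ∃ k : ℤ, w₂ = (k : ℝ) := by
    refine ⟨∑ j : Fin n, iw (Ymap x₂ j), ?_⟩
    rw [← hFx₂]
    show wN w (Ymap x₂) = _
    rw [wN]
    push_cast
    exact Finset.sum_congr rfl fun j _ => hiw (Ymap x₂ j)
  have hW12 : W₁ < W₂ := by
    rw [hW₁, hW₂] at hw₁₂
    exact_mod_cast hw₁₂
  have hW1pos : 0 < W₁ := by
    rw [hW₁] at hw₁pos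
    exact_mod_cast hw₁pos
  have hwc₁ : (w₁ : ℂ) = (W₁ : ℂ) := by rw [hW₁]; push_cast; rfl
  have hwc₂ : (w₂ : ℂ) = (W₂ : ℂ) := by rw [hW₂]; push_cast; rfl
  have hdCne : ((W₂ : ℂ) - (W₁ : ℂ)) ≠ 0 := by
    have h1 : (W₂ : ℂ) - (W₁ : ℂ) = ((W₂ - W₁ : ℤ) : ℂ) := by push_cast; ring
    rw [h1]
    rw [Int.cast_ne_zero]
    omega
  have hdQne : ((W₂ : ℚ) - (W₁ : ℚ)) ≠ 0 := by
    have h1 : (W₂ : ℚ) - (W₁ : ℚ) = ((W₂ - W₁ : ℤ) : ℚ) := by push_cast; ring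
    rw [h1, Int.cast_ne_zero]
    omega
  -- equation from t₀
  have hs0 : ((W₂ : ℂ) - (W₁ : ℂ)) * σ t₀ = -(W₂ : ℂ) := by
    have h1 := hσeq t₀ ht₀S ht₀ne
    rw [hMct₀, hwc₁, hwc₂] at h1
    rw [h1]
    push_cast
    ring
  have hq0 : ((((-W₂ : ℚ)) / ((W₂ : ℚ) - (W₁ : ℚ)) : ℚ) : ℂ) = σ t₀ := by
    push_cast
    rw [div_eq_iff hdCne]
    linear_combination -hs0
  obtain ⟨k₀, hk₀⟩ := eq_int_of_isIntegral (by rw [hq0]; exact hσint t₀)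
  have h0int : -W₂ = k₀ * (W₂ - W₁) := by
    have h1 : (-W₂ : ℚ) = (k₀ : ℚ) * ((W₂ : ℚ) - (W₁ : ℚ)) := by
      rw [← hk₀]
      field_simp
    exact_mod_cast h1
  -- equation from t₁
  have hs1 : ((W₂ : ℂ) - (W₁ : ℂ)) * σ (colv j₀ 1) = (Nat.card Q : ℂ) - (W₂ : ℂ) := by
    have h1 := hσeq (colv j₀ 1) ht₁S ht₁ne
    rw [hMct₁, hwc₁, hwc₂] at h1
    rw [h1]
    push_cast
    ring
  have hq1 : (((((Nat.card Q : ℚ) - (W₂ : ℚ))) / ((W₂ : ℚ) - (W₁ : ℚ)) : ℚ) : ℂ)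
      = σ (colv j₀ 1) := by
    push_cast
    rw [div_eq_iff hdCne]
    linear_combination -hs1
  obtain ⟨k₁, hk₁⟩ := eq_int_of_isIntegral (by rw [hq1]; exact hσint (colv j₀ 1))
  have h1int : (Nat.card Q : ℤ) - W₂ = k₁ * (W₂ - W₁) := by
    have h1 : (Nat.card Q : ℚ) - (W₂ : ℚ) = (k₁ : ℚ) * ((W₂ : ℚ) - (W₁ : ℚ)) := by
      rw [← hk₁]
      field_simp
    exact_mod_cast h1
  -- divisibility
  have hDdvd : (W₂ - W₁) ∣ (Nat.card Q : ℤ) :=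
    ⟨k₁ - k₀, by linear_combination h1int - h0int⟩
  have hQdvd : (Nat.card Q) ∣ p ^ (e * ℓ) := by
    have h1 : Nat.card Q ∣ Nat.card G :=
      ⟨Nat.card Hsub, AddSubgroup.card_eq_card_quotient_mul_card_addSubgroup Hsub⟩
    have h2 : Nat.card G = p ^ (e * ℓ) := by
      rw [Nat.card_eq_fintype_card]
      have h3 : Fintype.card G = Fintype.card R ^ ℓ := by
        have h4 := Fintype.card_fun (α := Fin ℓ) (β := R)
        rw [Fintype.card_fin] at h4
        exact h4
      rw [h3, hcard, ← pow_mul]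
    rw [← h2]
    exact h1
  obtain ⟨dnat, hdnat⟩ : ∃ d : ℕ, (W₂ - W₁ : ℤ) = (d : ℤ) :=
    ⟨(W₂ - W₁).toNat, (Int.toNat_of_nonneg (by omega)).symm⟩
  have hdnat_dvd : dnat ∣ p ^ (e * ℓ) := by
    have h1 : (dnat : ℤ) ∣ ((p ^ (e * ℓ) : ℕ) : ℤ) := by
      rw [← hdnat]
      exact hDdvd.trans (Int.natCast_dvd_natCast.mpr hQdvd)
    exact_mod_cast h1
  obtain ⟨r, hrle, hdr⟩ := (Nat.dvd_prime_pow hp).mp hdnat_dvd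
  have hDpr : (W₂ - W₁ : ℤ) = (p : ℤ) ^ r := by
    rw [hdnat, hdr]
    push_cast
    ring
  have hW₂eq : W₂ = (-k₀) * (W₂ - W₁) := by linear_combination -h0int
  have hW₁eq : W₁ = (-k₀ - 1) * (W₂ - W₁) := by linear_combination -h0int
  have hk₀le : -k₀ - 1 ≥ 1 := by
    by_contra hcc
    push_neg at hcc
    have hle : -k₀ - 1 ≤ 0 := by omega
    have hDpos : (0 : ℤ) < W₂ - W₁ := by omega
    nlinarith [hW₁eq]
  refine ⟨r, (-k₀ - 1).toNat, ?_, ?_, ?_⟩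
  · omega
  · rw [hW₁]
    have hz : W₁ = (((-k₀ - 1).toNat : ℤ)) * ((p : ℤ) ^ r) := by
      rw [Int.toNat_of_nonneg (by omega), ← hDpr]
      exact hW₁eq
    rw [hz]
    push_cast
    ring
  · rw [hW₂]
    have hz : W₂ = ((((-k₀ - 1).toNat : ℤ)) + 1) * ((p : ℤ) ^ r) := by
      rw [Int.toNat_of_nonneg (by omega), ← hDpr]
      linear_combination hW₂eq
    rw [hz]
    push_cast
    ring
end
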